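/- arXiv:1304.0056 — 8 statements merged into one kernel-verified Lean document; each statement's English description precedes it below -/
import Mathlib

section
/- Let M be a module over a ring R and let E be an injective hull of M. If M is invariant under every automorphism of E (i.e., φ(M) ⊆ M for all φ ∈ Aut(E)), then for every endomorphism j of E with essential kernel, j(M) ⊆ M. -/
/-- A submodule is essential if it intersects every nonzero submodule nontrivially. -/
def IsEssential {R M : Type*} [Ring R] [AddCommGroup M] [Module R M]
    (N : Submodule R M) : Prop :=
  ∀ K : Submodule R M, K ≠ ⊥ → N ⊓ K ≠ ⊥

/-- If M is invariant under every automorphism of its injective hull E, then M is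
invariant under every endomorphism of E with essential kernel. -/
theorem stmt0 {R E : Type*} [Ring R] [AddCommGroup E] [Module R E]
    (hE : Module.Injective R E) (M : Submodule R E)
    (hess : IsEssential M)
    (hinv : ∀ φ : E ≃ₗ[R] E, ∀ x ∈ M, φ x ∈ M)
    (j : Module.End R E) (hj : IsEssential (LinearMap.ker j)) :
    ∀ x ∈ M, j x ∈ M := by
  set f : Module.End R E := 1 - j with hf
  have hfx : ∀ x, f x = x - j x := fun x => rfl
  -- f is injective
  have hker : LinearMap.ker f = ⊥ := by
    by_contra h
    apply hj (LinearMap.ker f) h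
    rw [Submodule.eq_bot_iff]
    rintro x ⟨hx1, hx2⟩
    have hx1' : j x = 0 := LinearMap.mem_ker.mp hx1
    have hx2' : f x = 0 := LinearMap.mem_ker.mp hx2
    have := hfx x
    rw [hx2', hx1'] at this
    simpa using this.symm
  have hfinj : Function.Injective f := LinearMap.ker_eq_bot.mp hker
  -- get a retraction g with g ∘ f = id
  obtain ⟨g, hg⟩ := hE.out f hfinj LinearMap.id
  simp only [LinearMap.id_apply] at hg
  -- f is surjective: show f (g x) = x for all x
  have hkerj : ∀ x ∈ LinearMap.ker j, f x = x := by
    intro x hx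
    rw [hfx, LinearMap.mem_ker.mp hx, sub_zero]
  have hp : ∀ x, f (g x) = x := by
    -- p = f ∘ g is idempotent with ker p ⊓ ker j = ⊥
    have hkp : LinearMap.ker (f ∘ₗ g) = ⊥ := by
      by_contra h
      apply hj (LinearMap.ker (f ∘ₗ g)) h
      rw [Submodule.eq_bot_iff]
      rintro x ⟨hx1, hx2⟩
      have hx2' : f (g x) = 0 := LinearMap.mem_ker.mp hx2
      have h1 : f x = x := hkerj x hx1
      have h2 : g x = x := by
        have := hg x
        rw [h1] at this; exact this
      rw [h2, h1] at hx2'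
      exact hx2'
    intro x
    have hidem : f (g (x - f (g x))) = 0 := by
      have : g (x - f (g x)) = g x - g (f (g x)) := by rw [map_sub]
      rw [this, hg (g x), sub_self, map_zero]
    have : x - f (g x) ∈ LinearMap.ker (f ∘ₗ g) := by
      simpa [LinearMap.mem_ker] using hidem
    rw [hkp, Submodule.mem_bot] at this
    exact (sub_eq_zero.mp this).symm
  -- build the automorphism
  let phi : E ≃ₗ[R] E :=
    LinearEquiv.ofLinear f g (LinearMap.ext hp) (LinearMap.ext hg)
  intro x hx
  have hphix : phi x ∈ M := hinv phi x hx
  have : j x = x - phi x := by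
    show j x = x - f x
    rw [hfx]; abel
  rw [this]
  exact M.sub_mem hx hphix
end

section
/- Let E be an injective module and s ∈ End(E) an endomorphism with essential kernel. Then 1 - s is an automorphism of E. -/
/-- If E is injective and s is an endomorphism of E with essential kernel,
then 1 - s is an automorphism of E. -/
theorem stmt1 {R E : Type*} [Ring R] [AddCommGroup E] [Module R E]
    (hE : Module.Injective R E) (s : Module.End R E)
    (hs : IsEssential (LinearMap.ker s)) :
    IsUnit (1 - s) := by
  set f : Module.End R E := 1 - s with hf
  -- f is injective: ker f ⊓ ker s = ⊥, essentiality gives ker f = ⊥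
  have hker : LinearMap.ker f = ⊥ := by
    by_contra h
    apply hs (LinearMap.ker f) h
    rw [eq_bot_iff]
    intro x hx
    rw [Submodule.mem_inf] at hx
    obtain ⟨hx1, hx2⟩ := hx
    rw [LinearMap.mem_ker] at hx1 hx2
    have : x - s x = 0 := by simpa [hf, LinearMap.sub_apply] using hx2
    simp only [Submodule.mem_bot]
    have hxe := sub_eq_zero.mp this
    exact (Submodule.mem_bot R).mpr (hxe.trans hx1)
  have hfinj : Function.Injective f := LinearMap.ker_eq_bot.mp hker
  -- extend id along f using injectivity of E
  obtain ⟨g, hg⟩ := hE.out f hfinj (LinearMap.id : E →ₗ[R] E)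
  -- hg : ∀ x, g (f x) = x
  -- ker s ⊆ range f
  have hkers : ∀ x, s x = 0 → f x = x := by
    intro x hx
    simp [hf, hx]
  -- ker (f ∘ g) ∩ range f = 0, so ker (f∘g) ∩ ker s = 0
  have hkerfg : LinearMap.ker (f ∘ₗ g) = ⊥ := by
    by_contra h
    apply hs (LinearMap.ker (f ∘ₗ g)) h
    rw [eq_bot_iff]
    intro x hx
    rw [Submodule.mem_inf] at hx
    obtain ⟨hx1, hx2⟩ := hx
    rw [LinearMap.mem_ker] at hx1
    rw [LinearMap.mem_ker, LinearMap.comp_apply] at hx2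
    -- x ∈ ker s ⇒ x = f x, so g x = g (f x) = x, so f x = f (g x) = 0, so x = 0
    have hx3 : f x = x := hkers x hx1
    have : g x = x := by nth_rewrite 1 [← hx3]; simpa using hg x
    rw [this, hx3] at hx2
    simp [Submodule.mem_bot, hx2]
  have hfginj : Function.Injective (f ∘ₗ g) := LinearMap.ker_eq_bot.mp hkerfg
  have hginj : Function.Injective g := fun a b hab => hfginj (by simp [LinearMap.comp_apply, hab])
  -- f (g x) = x for all x: g (f (g x)) = g x by hg, so f (g x) = x by hginj
  have hfg : ∀ x, f (g x) = x := fun x => hginj (hg (g x))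
  exact isUnit_iff_exists.mpr ⟨g, LinearMap.ext hfg, LinearMap.ext hg⟩
end

section
/- Let M be an automorphism-invariant module with endomorphism ring R. Then idempotents lift modulo the Jacobson radical J(R): for every e' ∈ R with e'² - e' ∈ J(R) there exists an idempotent e ∈ R with e - e' ∈ J(R). -/
section EssBasic

variable {R M : Type*} [Ring R] [AddCommGroup M] [Module R M]

lemma isEssential_iff (N : Submodule R M) :
    IsEssential N ↔ ∀ x : M, x ≠ 0 → ∃ r : R, r • x ∈ N ∧ r • x ≠ 0 := by
  constructor
  · intro h x hx
    have hK : Submodule.span R {x} ≠ ⊥ := by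
      intro hb
      have : x ∈ (⊥ : Submodule R M) := hb ▸ Submodule.mem_span_singleton_self x
      exact hx (by simpa using this)
    have := h _ hK
    rcases Submodule.ne_bot_iff _ |>.1 this with ⟨y, hy, hy0⟩
    rcases Submodule.mem_span_singleton.1 hy.2 with ⟨r, rfl⟩
    exact ⟨r, hy.1, hy0⟩
  · intro h K hK
    rcases Submodule.ne_bot_iff _ |>.1 hK with ⟨x, hxK, hx0⟩
    rcases h x hx0 with ⟨r, hrN, hr0⟩
    exact Submodule.ne_bot_iff _ |>.2 ⟨r • x, ⟨hrN, K.smul_mem r hxK⟩, hr0⟩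

lemma IsEssential.mono {N N' : Submodule R M} (h : IsEssential N) (hle : N ≤ N') :
    IsEssential N' := fun K hK => by
  intro hb
  exact h K hK (by rw [eq_bot_iff] at hb ⊢; exact le_trans (inf_le_inf_right K hle) hb)

lemma IsEssential.bot_of_disj {N K : Submodule R M} (h : IsEssential N)
    (hd : N ⊓ K = ⊥) : K = ⊥ := by
  by_contra hK
  exact h K hK hd

end EssBasic

section JacRing

variable {A : Type*} [Ring A]

lemma exists_left_inv_of_mem_jac {b : A} (hb : b ∈ Ideal.jacobson (⊥ : Ideal A)) :
    ∃ w : A, w * (1 - b) = 1 := by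
  by_contra h
  push_neg at h
  have h1 : (1 : A) ∉ Ideal.span {1 - b} := by
    intro h1
    rcases Submodule.mem_span_singleton.1 h1 with ⟨w, hw⟩
    exact h w (by simpa [smul_eq_mul] using hw)
  have hne : Ideal.span {(1 : A) - b} ≠ ⊤ := fun ht => h1 (ht ▸ Submodule.mem_top)
  rcases Ideal.exists_le_maximal _ hne with ⟨I, hImax, hIle⟩
  have hbI : b ∈ I := by
    have : Ideal.jacobson (⊥ : Ideal A) ≤ I := sInf_le ⟨bot_le, hImax⟩
    exact this hb
  have h1b : (1 : A) - b ∈ I := hIle (Ideal.subset_span rfl)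
  have : (1 : A) ∈ I := by
    have := I.add_mem h1b hbI
    simpa using this
  exact hImax.ne_top (Ideal.eq_top_iff_one I |>.2 this)

lemma isUnit_one_sub_of_mem_jac {a : A} (ha : a ∈ Ideal.jacobson (⊥ : Ideal A)) (s : A) :
    IsUnit (1 - s * a) := by
  have hsa : s * a ∈ Ideal.jacobson (⊥ : Ideal A) := by
    simpa [smul_eq_mul] using (Ideal.jacobson (⊥ : Ideal A)).smul_mem s ha
  rcases exists_left_inv_of_mem_jac hsa with ⟨w, hw⟩
  -- w = 1 + w * (s*a)
  have hw' : w = 1 + w * (s * a) := by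
    have h2 : w * (1 - s * a) = w - w * (s * a) := by noncomm_ring
    rw [h2] at hw
    have := congrArg (· + w * (s * a)) hw
    simpa [sub_add_cancel] using this
  have hw2 : w = 1 - (-(w * s)) * a := by rw [neg_mul, sub_neg_eq_add, mul_assoc]; exact hw'
  have hwsa : (-(w * s)) * a ∈ Ideal.jacobson (⊥ : Ideal A) := by
    simpa [smul_eq_mul] using (Ideal.jacobson (⊥ : Ideal A)).smul_mem (-(w * s)) ha
  rcases exists_left_inv_of_mem_jac hwsa with ⟨w₂, hw₂⟩
  rw [← hw2] at hw₂
  -- w₂ * w = 1, w * (1 - s*a) = 1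
  have hw₂' : w₂ = 1 - s * a := by
    calc w₂ = w₂ * (w * (1 - s * a)) := by rw [hw, mul_one]
      _ = (w₂ * w) * (1 - s * a) := by rw [mul_assoc]
      _ = 1 - s * a := by rw [hw₂, one_mul]
  have hkey : (1 - s * a) * w = 1 := by rw [← hw₂']; exact hw₂
  exact ⟨⟨1 - s * a, w, hkey, hw⟩, rfl⟩

lemma mem_jac_of_units {a : A} (h : ∀ s : A, IsUnit (1 - s * a)) :
    a ∈ Ideal.jacobson (⊥ : Ideal A) := by
  refine Ideal.mem_sInf.2 ?_
  rintro I ⟨-, hImax⟩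
  by_contra haI
  have hsup : I ⊔ Ideal.span {a} = ⊤ := by
    rcases hImax.1 with ⟨hne, hmax⟩
    refine hmax _ (lt_of_le_of_ne le_sup_left ?_)
    intro hEq
    exact haI (hEq ▸ (le_sup_right : Ideal.span {a} ≤ I ⊔ Ideal.span {a})
      (Ideal.subset_span rfl))
  have h1 : (1 : A) ∈ I ⊔ Ideal.span {a} := hsup ▸ Submodule.mem_top
  rcases Submodule.mem_sup.1 h1 with ⟨y, hyI, z, hz, hyz⟩
  rcases Submodule.mem_span_singleton.1 hz with ⟨s, rfl⟩
  have hy : y = 1 - s * a := by rw [← hyz]; simp [smul_eq_mul]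
  rcases h s with ⟨u, hu⟩
  have : (1 : A) ∈ I := by
    have : ((u⁻¹ : Aˣ) : A) * y ∈ I := I.smul_mem _ hyI
    rw [hy, ← hu] at this
    simpa using this
  exact hImax.ne_top (Ideal.eq_top_iff_one I |>.2 this)

end JacRing

section ModuleHelpers

variable {R E : Type*} [Ring R] [AddCommGroup E] [Module R E]

lemma bij_of_inj_ess (hE : Module.Injective R E) (h : E →ₗ[R] E)
    (hi : Function.Injective h) (N : Submodule R E) (hN : IsEssential N)
    (hr : N ≤ LinearMap.range h) : Function.Bijective h := by
  obtain ⟨r, hr'⟩ := hE.out h hi (LinearMap.id)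
  refine ⟨hi, fun y => ?_⟩
  set s : E →ₗ[R] E := h ∘ₗ r with hs
  have hfix : ∀ z ∈ N, s z = z := by
    intro z hz
    rcases hr hz with ⟨w, rfl⟩
    simp [hs, hr' w]
  have hsz : s (y - s y) = 0 := by
    have : s (s y) = s y := by simp [hs, hr' (r y)]
    simp [map_sub, this]
  have hz0 : y - s y = 0 := by
    by_contra hne
    rcases (isEssential_iff N).1 hN _ hne with ⟨t, htN, ht0⟩
    have : t • (y - s y) = s (t • (y - s y)) := (hfix _ htN).symm
    rw [map_smul, hsz, smul_zero] at this
    exact ht0 this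
  have hys : y = s y := sub_eq_zero.1 hz0
  exact ⟨r y, hys.symm⟩

lemma ess_map_subtype {M : Submodule R E} (hess : IsEssential M)
    {Km : Submodule R ↥M} (hKm : IsEssential Km) :
    IsEssential (Submodule.map M.subtype Km) := by
  rw [isEssential_iff]
  intro x hx
  rcases (isEssential_iff M).1 hess x hx with ⟨r, hrM, hr0⟩
  have hsub0 : (⟨r • x, hrM⟩ : ↥M) ≠ 0 := by
    intro h
    exact hr0 (by simpa using congrArg (Submodule.subtype M) h)
  rcases (isEssential_iff Km).1 hKm _ hsub0 with ⟨r', hr'K, hr'0⟩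
  refine ⟨r' * r, ?_, ?_⟩
  · rw [mul_smul]
    exact ⟨r' • ⟨r • x, hrM⟩, hr'K, rfl⟩
  · rw [mul_smul]
    intro h
    apply hr'0
    apply Subtype.ext
    simpa using h

lemma split_lemma (hE : Module.Injective R E) (A B : Submodule R E) (hAB : A ⊓ B = ⊥) :
    ∃ p : E →ₗ[R] E, (∀ x, p (p x) = p x) ∧ (∀ a ∈ A, p a = a) ∧ (∀ b ∈ B, p b = 0) ∧
      (∀ x : E, (∃ y, p y = x) → x ≠ 0 → ∃ r : R, r • x ∈ A ∧ r • x ≠ 0) := by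
  classical
  set S : Set (Submodule R E) :=
    {X | A ≤ X ∧ ∀ x ∈ X, x ≠ 0 → ∃ r : R, r • x ∈ A ∧ r • x ≠ 0} with hSdef
  have hAS : A ∈ S := ⟨le_rfl, fun x hx hx0 => ⟨1, by simpa using hx, by simpa using hx0⟩⟩
  obtain ⟨E', hAE', hE'max⟩ := zorn_le_nonempty₀ S (fun c hcS hchain y hy => by
    refine ⟨sSup c, ⟨le_trans (hcS hy).1 (le_sSup hy), ?_⟩, fun z hz => le_sSup hz⟩
    intro x hx hx0
    rcases (Submodule.mem_sSup_of_directed ⟨y, hy⟩ hchain.directedOn).1 hx with ⟨X, hXc, hxX⟩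
    exact (hcS hXc).2 x hxX hx0) A hAS
  have hE'S : E' ∈ S := hE'max.1
  have hE'B : ∀ x ∈ E', x ∈ B → x = 0 := by
    intro x hxE' hxB
    by_contra hx0
    rcases hE'S.2 x hxE' hx0 with ⟨r, hrA, hr0⟩
    have : r • x ∈ A ⊓ B := ⟨hrA, B.smul_mem r hxB⟩
    rw [hAB] at this
    exact hr0 (by simpa using this)
  set T : Set (Submodule R E) := {Y | B ≤ Y ∧ Y ⊓ E' = ⊥} with hTdef
  have hBT : B ∈ T := by
    refine ⟨le_rfl, ?_⟩
    rw [eq_bot_iff]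
    rintro x ⟨hxB, hxE'⟩
    simpa using hE'B x hxE' hxB
  obtain ⟨C, hBC, hCmax⟩ := zorn_le_nonempty₀ T (fun c hcT hchain y hy => by
    refine ⟨sSup c, ⟨le_trans (hcT hy).1 (le_sSup hy), ?_⟩, fun z hz => le_sSup hz⟩
    rw [eq_bot_iff]
    rintro x ⟨hxs, hxE'⟩
    rcases (Submodule.mem_sSup_of_directed ⟨y, hy⟩ hchain.directedOn).1 hxs with ⟨X, hXc, hxX⟩
    have : x ∈ X ⊓ E' := ⟨hxX, hxE'⟩
    rw [(hcT hXc).2] at this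
    simpa using this) B hBT
  have hCT : C ∈ T := hCmax.1
  have hCE' : C ⊓ E' = ⊥ := hCT.2
  -- key property of the quotient
  have keyQ : ∀ xb : E ⧸ C, xb ≠ 0 →
      ∃ r : R, (∃ y ∈ E', C.mkQ y = r • xb) ∧ r • xb ≠ 0 := by
    intro xb hxb
    obtain ⟨x, rfl⟩ := C.mkQ_surjective xb
    have hxC : x ∉ C := by
      intro h
      exact hxb (by simpa [Submodule.Quotient.mk_eq_zero] using h)
    set L : Submodule R E := C ⊔ Submodule.span R {x} with hL
    have hLT : L ∉ T := by
      intro hLTmem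
      have : L ≤ C := hCmax.2 hLTmem le_sup_left
      exact hxC (this (le_sup_right (α := Submodule R E) (Submodule.mem_span_singleton_self x)))
    have hLE' : L ⊓ E' ≠ ⊥ := by
      intro h
      exact hLT ⟨le_trans hBC le_sup_left, h⟩
    rcases Submodule.ne_bot_iff _ |>.1 hLE' with ⟨z, ⟨hzL, hzE'⟩, hz0⟩
    rcases Submodule.mem_sup.1 hzL with ⟨c, hc, w, hw, rfl⟩
    rcases Submodule.mem_span_singleton.1 hw with ⟨s, rfl⟩
    refine ⟨s, ⟨c + s • x, hzE', ?_⟩, ?_⟩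
    · rw [← map_smul]
      apply (Submodule.Quotient.eq C).2
      have : c + s • x - s • x = c := by abel
      rw [this]
      exact hc
    · intro h
      have hmk : C.mkQ (c + s • x) = 0 := by
        rw [← map_smul] at h
        have : C.mkQ (c + s • x) = C.mkQ (s • x) := by
          apply (Submodule.Quotient.eq C).2
          have : c + s • x - s • x = c := by abel
          rw [this]; exact hc
        rw [this, h]
      have : c + s • x ∈ C := (Submodule.Quotient.mk_eq_zero C).1 hmk
      have : c + s • x ∈ C ⊓ E' := ⟨this, hzE'⟩
      rw [hCE'] at this
      exact hz0 (by simpa using this)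
  -- the linear equivalence between E' and its image in the quotient
  set Q' : Submodule R (E ⧸ C) := Submodule.map C.mkQ E' with hQ'
  have hφmem : ∀ y : ↥E', C.mkQ (E'.subtype y) ∈ Q' := fun y =>
    Submodule.mem_map_of_mem y.2
  set φ₀ : ↥E' →ₗ[R] ↥Q' := LinearMap.codRestrict Q' (C.mkQ ∘ₗ E'.subtype) hφmem with hφ₀
  have hφinj : Function.Injective φ₀ := by
    intro y₁ y₂ h
    have h' : C.mkQ (↑y₁ - ↑y₂ : E) = 0 := by
      have := congrArg (Subtype.val) h
      simp only [hφ₀, LinearMap.codRestrict_apply] at this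
      rw [map_sub]
      simpa [sub_eq_zero] using this
    have hmem : (↑y₁ - ↑y₂ : E) ∈ C := (Submodule.Quotient.mk_eq_zero C).1 h'
    have : (↑y₁ - ↑y₂ : E) ∈ C ⊓ E' := ⟨hmem, E'.sub_mem y₁.2 y₂.2⟩
    rw [hCE'] at this
    have := (Submodule.mem_bot R).1 this
    exact Subtype.ext (sub_eq_zero.1 this)
  have hφsurj : Function.Surjective φ₀ := by
    rintro ⟨z, hz⟩
    rcases hz with ⟨y, hyE', hyz⟩
    exact ⟨⟨y, hyE'⟩, Subtype.ext hyz⟩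
  set eqv := LinearEquiv.ofBijective φ₀ ⟨hφinj, hφsurj⟩ with heqv
  set g : ↥Q' →ₗ[R] E := E'.subtype ∘ₗ (eqv.symm : ↥Q' →ₗ[R] ↥E') with hg
  obtain ⟨hq, hhq⟩ := hE.out Q'.subtype (Submodule.injective_subtype Q') g
  set p : E →ₗ[R] E := hq ∘ₗ C.mkQ with hp
  have hfixE' : ∀ y ∈ E', p y = y := by
    intro y hy
    have hmem : C.mkQ y ∈ Q' := Submodule.mem_map_of_mem hy
    have h1 : p y = g ⟨C.mkQ y, hmem⟩ := hhq ⟨C.mkQ y, hmem⟩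
    have h2 : eqv ⟨y, hy⟩ = ⟨C.mkQ y, hmem⟩ := Subtype.ext rfl
    rw [h1, hg]
    simp only [LinearMap.coe_comp, Function.comp_apply, LinearEquiv.coe_coe]
    rw [← h2, LinearEquiv.symm_apply_apply]
    rfl
  have hqfix : ∀ y ∈ E', hq (C.mkQ y) = y := fun y hy => hfixE' y hy
  have hqinj : ∀ z : E ⧸ C, hq z = 0 → z = 0 := by
    intro z hz
    by_contra hz0
    rcases keyQ z hz0 with ⟨r, ⟨y, hyE', hy⟩, hr0⟩
    have : hq (r • z) = 0 := by rw [map_smul, hz, smul_zero]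
    rw [← hy, hqfix y hyE'] at this
    rw [← hy, this] at hr0
    simp at hr0
  have hBker : ∀ b ∈ B, p b = 0 := by
    intro b hb
    have : C.mkQ b = 0 := (Submodule.Quotient.mk_eq_zero C).1 rfl |> fun _ => by
      rw [Submodule.mkQ_apply, Submodule.Quotient.mk_eq_zero]
      exact hBC hb
    rw [hp]
    simp only [LinearMap.coe_comp, Function.comp_apply]
    rw [this, map_zero]
  have hessE' : ∀ x : E, (∃ y, p y = x) → x ≠ 0 → ∃ r : R, r • x ∈ E' ∧ r • x ≠ 0 := by
    rintro x ⟨y₀, rfl⟩ hx0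
    have hz0 : C.mkQ y₀ ≠ 0 := by
      intro h
      apply hx0
      rw [hp]
      simp only [LinearMap.coe_comp, Function.comp_apply]
      rw [h, map_zero]
    rcases keyQ (C.mkQ y₀) hz0 with ⟨r, ⟨y, hyE', hy⟩, hr0⟩
    have hrx : r • (p y₀) = y := by
      rw [hp]
      simp only [LinearMap.coe_comp, Function.comp_apply]
      rw [← map_smul, ← hy, hqfix y hyE']
    refine ⟨r, hrx ▸ hyE', ?_⟩
    rw [hrx]
    intro h
    rw [h] at hy
    have : C.mkQ (0 : E) = 0 := by simp
    rw [this] at hy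
    exact hr0 hy.symm
  have hessA : ∀ x : E, (∃ y, p y = x) → x ≠ 0 → ∃ r : R, r • x ∈ A ∧ r • x ≠ 0 := by
    intro x hx hx0
    rcases hessE' x hx hx0 with ⟨r, hrE', hr0⟩
    rcases hE'S.2 _ hrE' hr0 with ⟨r', hr'A, hr'0⟩
    exact ⟨r' * r, by rw [mul_smul]; exact hr'A, by rw [mul_smul]; exact hr'0⟩
  have hrangeE' : ∀ x : E, (∃ y, p y = x) → x ∈ E' := by
    have hrS : LinearMap.range p ∈ S := by
      constructor
      · exact le_trans hAE' (fun y hy => ⟨y, hfixE' y hy⟩)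
      · intro x hx hx0
        exact hessA x (by rcases hx with ⟨y, hy⟩; exact ⟨y, hy⟩) hx0
    have hle : E' ≤ LinearMap.range p := fun y hy => ⟨y, hfixE' y hy⟩
    have := hE'max.2 hrS hle
    rintro x ⟨y, rfl⟩
    exact this ⟨y, rfl⟩
  refine ⟨p, ?_, fun a ha => hfixE' a (hAE' ha), hBker, hessA⟩
  intro x
  exact hfixE' (p x) (hrangeE' (p x) ⟨x, rfl⟩)

end ModuleHelpers

section Platform

variable {R E : Type*} [Ring R] [AddCommGroup E] [Module R E] {M : Submodule R E}

lemma restrict_coe (g : E →ₗ[R] E) (hgM : ∀ x ∈ M, g x ∈ M) (m : ↥M) :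
    ((g.restrict hgM) m : E) = g ↑m := rfl

lemma restrict_comp_mem_jac (v g : E →ₗ[R] E) (hv : ∀ x ∈ M, v x ∈ M)
    (hg : ∀ x ∈ M, g x ∈ M) (hcomp : ∀ x ∈ M, (v ∘ₗ g) x ∈ M)
    (hgJ : (g.restrict hg : Module.End R ↥M) ∈ Ideal.jacobson (⊥ : Ideal (Module.End R ↥M))) :
    ((v ∘ₗ g).restrict hcomp : Module.End R ↥M) ∈
      Ideal.jacobson (⊥ : Ideal (Module.End R ↥M)) := by
  have heq : ((v ∘ₗ g).restrict hcomp : Module.End R ↥M) =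
      (v.restrict hv : Module.End R ↥M) * (g.restrict hg) := by
    ext m
    rfl
  rw [heq]
  have := (Ideal.jacobson (⊥ : Ideal (Module.End R ↥M))).smul_mem
    (v.restrict hv : Module.End R ↥M) hgJ
  simpa [smul_eq_mul] using this

lemma platform (hE : Module.Injective R E) (hess : IsEssential M)
    (g : E →ₗ[R] E) (hgM : ∀ x ∈ M, g x ∈ M)
    (hgJ : (g.restrict hgM : Module.End R ↥M) ∈ Ideal.jacobson (⊥ : Ideal (Module.End R ↥M))) :
    Function.Bijective (LinearMap.id (R := R) (M := E) - g) := by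
  set r : Module.End R ↥M := g.restrict hgM with hr
  have hu : IsUnit ((1 : Module.End R ↥M) - r) := by
    simpa using isUnit_one_sub_of_mem_jac hgJ 1
  obtain ⟨u, hu⟩ := hu
  have hcoe : ∀ m : ↥M, (((1 - r) m : ↥M) : E) = ↑m - g ↑m := by
    intro m
    show ((m - r m : ↥M) : E) = ↑m - g ↑m
    rw [Submodule.coe_sub]
    rfl
  have hinj : Function.Injective (LinearMap.id (R := R) (M := E) - g) := by
    have hker : ∀ x : E, x - g x = 0 → x = 0 := by
      intro x hx
      by_contra hx0
      rcases (isEssential_iff M).1 hess x hx0 with ⟨t, htM, ht0⟩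
      set m : ↥M := ⟨t • x, htM⟩ with hm
      have h1 : (1 - r) m = 0 := by
        apply Subtype.ext
        rw [hcoe m]
        show t • x - g (t • x) = 0
        rw [map_smul, ← smul_sub, hx, smul_zero]
      have h2 : m = 0 := by
        have : ((↑u⁻¹ * ↑u : Module.End R ↥M)) m = m := by
          rw [u.inv_mul]; rfl
        rw [← this]
        show (↑u⁻¹ : Module.End R ↥M) ((↑u : Module.End R ↥M) m) = 0
        rw [hu, h1, map_zero]
      exact ht0 (by simpa [hm] using congrArg (Submodule.subtype M) h2)
    intro a b hab
    have h1 : a - g a = b - g b := hab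
    have h2 : (a - b) - g (a - b) = 0 := by
      rw [map_sub, sub_sub_sub_comm, h1, sub_self]
    exact sub_eq_zero.1 (hker _ h2)
  have hrange : M ≤ LinearMap.range (LinearMap.id (R := R) (M := E) - g) := by
    intro m hm
    set m' : ↥M := (↑u⁻¹ : Module.End R ↥M) ⟨m, hm⟩ with hm'
    refine ⟨↑m', ?_⟩
    have h1 : (1 - r) m' = ⟨m, hm⟩ := by
      rw [hm']
      have : ((↑u * ↑u⁻¹ : Module.End R ↥M)) ⟨m, hm⟩ = ⟨m, hm⟩ := by
        rw [u.mul_inv]; rfl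
      rw [← hu]
      exact this
    have := congrArg (Subtype.val) h1
    rw [hcoe m'] at this
    exact this
  exact bij_of_inj_ess hE _ hinj M hess hrange

end Platform

section QLemma

variable {R E : Type*} [Ring R] [AddCommGroup E] [Module R E] {M : Submodule R E}

lemma platform_fix (hE : Module.Injective R E) (hess : IsEssential M)
    (g : E →ₗ[R] E) (hgM : ∀ x ∈ M, g x ∈ M)
    (hgJ : (g.restrict hgM : Module.End R ↥M) ∈ Ideal.jacobson (⊥ : Ideal (Module.End R ↥M)))
    (x : E) (hgx : g x = x) (hx0 : x ≠ 0) : False := by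
  have hb := platform hE hess g hgM hgJ
  have h0 : (LinearMap.id (R := R) (M := E) - g) x =
      (LinearMap.id (R := R) (M := E) - g) 0 := by
    simp [LinearMap.sub_apply, hgx]
  exact hx0 (hb.1 h0)

lemma Q_lemma (hE : Module.Injective R E) (hess : IsEssential M)
    (hinv : ∀ φ : E ≃ₗ[R] E, ∀ x ∈ M, φ x ∈ M)
    (g : E →ₗ[R] E) (hgM : ∀ x ∈ M, g x ∈ M)
    (hgJ : (g.restrict hgM : Module.End R ↥M) ∈ Ideal.jacobson (⊥ : Ideal (Module.End R ↥M)))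
    (K : Submodule R E)
    (hd : ∀ x ∈ K, x - g x ∈ K → x - g x = 0) : K = ⊥ := by
  by_contra hK
  rcases Submodule.ne_bot_iff _ |>.1 hK with ⟨x₀, hx₀K, hx₀0⟩
  set d : E →ₗ[R] E := LinearMap.id - g with hd'
  have hdapp : ∀ x, d x = x - g x := fun x => rfl
  set B : Submodule R E := Submodule.map d K with hB
  have hAB : K ⊓ B = ⊥ := by
    rw [eq_bot_iff]
    rintro z ⟨hzK, hzB⟩
    rcases hzB with ⟨x, hxK, rfl⟩
    rw [Submodule.mem_bot]
    rw [hdapp] at hzK ⊢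
    exact hd x hxK hzK
  obtain ⟨p, hpp, hpK, hpB, -⟩ := split_lemma hE K B hAB
  set N : E →ₗ[R] E := ((LinearMap.id - p) ∘ₗ d) ∘ₗ p with hN
  have hNapp : ∀ x, N x = d (p x) - p (d (p x)) := fun x => rfl
  have hNN : ∀ x, N (N x) = 0 := by
    intro x
    have h1 : p (N x) = 0 := by
      rw [hNapp x, map_sub, hpp]
      exact sub_self _
    rw [hNapp (N x), h1, map_zero, map_zero, sub_self]
  set v : E →ₗ[R] E := LinearMap.id + N with hv
  set vinv : E →ₗ[R] E := LinearMap.id - N with hvinv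
  have hvapp : ∀ x, v x = x + N x := fun x => rfl
  have hvinvapp : ∀ x, vinv x = x - N x := fun x => rfl
  have hcomp1 : v ∘ₗ vinv = LinearMap.id := by
    ext x
    show v (vinv x) = x
    rw [hvinvapp, hvapp, map_sub, hNN, sub_zero]
    abel
  have hcomp2 : vinv ∘ₗ v = LinearMap.id := by
    ext x
    show vinv (v x) = x
    rw [hvapp, hvinvapp, map_add, hNN, add_zero]
    abel
  set vE : E ≃ₗ[R] E := LinearEquiv.ofLinear v vinv hcomp1 hcomp2 with hvE
  have hvM : ∀ x ∈ M, v x ∈ M := fun x hx => hinv vE x hx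
  have hfixK : ∀ x ∈ K, v (g x) = x := by
    intro x hxK
    have hdx : d x ∈ B := Submodule.mem_map_of_mem hxK
    have hgx : g x = x - d x := by rw [hdapp]; abel
    have hpgx : p (g x) = x := by
      rw [hgx, map_sub, hpK x hxK, hpB _ hdx, sub_zero]
    have hNgx : N (g x) = d x := by
      rw [hNapp, hpgx, hpB _ hdx, sub_zero]
    rw [hvapp, hNgx, hgx]
    abel
  set h : E →ₗ[R] E := v ∘ₗ g with hh
  have hhM : ∀ x ∈ M, h x ∈ M := fun x hx => hvM _ (hgM x hx)
  have hhJ : (h.restrict hhM : Module.End R ↥M) ∈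
      Ideal.jacobson (⊥ : Ideal (Module.End R ↥M)) :=
    restrict_comp_mem_jac v g hvM hgM hhM hgJ
  exact platform_fix hE hess h hhM hhJ x₀ (hfixK x₀ hx₀K) hx₀0

end QLemma

section JacKer

variable {R E : Type*} [Ring R] [AddCommGroup E] [Module R E] {M : Submodule R E}

lemma jac_ker_ess (hE : Module.Injective R E) (hess : IsEssential M)
    (hinv : ∀ φ : E ≃ₗ[R] E, ∀ x ∈ M, φ x ∈ M) (f : Module.End R ↥M)
    (hf : f ∈ Ideal.jacobson (⊥ : Ideal (Module.End R ↥M))) :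
    IsEssential (LinearMap.ker f) := by
  intro Km hKm
  intro hdisj
  -- extend f to E
  obtain ⟨fh, hfh⟩ := hE.out M.subtype (Submodule.injective_subtype M) (M.subtype ∘ₗ f)
  have hfh' : ∀ m : ↥M, fh ↑m = ↑(f m) := fun m => hfh m
  have hfM : ∀ x ∈ M, fh x ∈ M := by
    intro x hx
    have h1 : fh x = ↑(f ⟨x, hx⟩) := hfh' ⟨x, hx⟩
    rw [h1]
    exact (f ⟨x, hx⟩).2
  have hres : fh.restrict hfM = f := by
    ext m
    exact hfh' m
  have hfhJ : (fh.restrict hfM : Module.End R ↥M) ∈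
      Ideal.jacobson (⊥ : Ideal (Module.End R ↥M)) := by rw [hres]; exact hf
  set K : Submodule R E := Submodule.map M.subtype Km with hKdef
  have hK0 : K ≠ ⊥ := by
    rcases Submodule.ne_bot_iff _ |>.1 hKm with ⟨m, hm, hm0⟩
    refine Submodule.ne_bot_iff _ |>.2 ⟨↑m, Submodule.mem_map_of_mem hm, ?_⟩
    simpa using hm0
  have hmono : ∀ x ∈ K, fh x = 0 → x = 0 := by
    rintro x ⟨m, hm, rfl⟩ hfx
    have hfm : f m = 0 := by
      apply Subtype.ext
      have he : fh ↑m = ↑(f m) := hfh' m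
      rw [← he]
      exact hfx
    have : m ∈ LinearMap.ker f ⊓ Km := ⟨hfm, hm⟩
    rw [hdisj] at this
    simp only [Submodule.mem_bot] at this
    rw [this]
    simp
  obtain ⟨p, hpp, hpK, -, hpess⟩ := split_lemma hE K ⊥ (by simp)
  set Csub : Submodule R E := LinearMap.range p with hCsub
  have hpfix : ∀ x ∈ Csub, p x = x := by rintro x ⟨y, rfl⟩; exact hpp y
  have hKC : K ≤ Csub := fun a ha => ⟨a, hpK a ha⟩
  have stepA : ∀ x ∈ Csub, fh x = 0 → x = 0 := by
    intro x hx hfx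
    by_contra hx0
    rcases hpess x hx hx0 with ⟨r, hrK, hr0⟩
    have : fh (r • x) = 0 := by rw [map_smul, hfx, smul_zero]
    exact hr0 (hmono _ hrK this)
  set C' : Submodule R E := LinearMap.ker p with hC'
  have hCC' : ∀ x, x ∈ Csub → x ∈ C' → x = 0 := by
    intro x h1 h2
    rw [← hpfix x h1]
    exact h2
  -- step 3 : Csub ⊓ fh⁻¹ C' = ⊥
  set K0 : Submodule R E := Csub ⊓ Submodule.comap fh C' with hK0def
  have hK0bot : K0 = ⊥ := by
    apply Q_lemma hE hess hinv fh hfM hfhJ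
    rintro x ⟨hxC, hxcm⟩ hz
    rcases hz with ⟨hzC, -⟩
    have hfhx : fh x ∈ Csub := by
      have : fh x = x - (x - fh x) := by abel
      rw [this]
      exact Csub.sub_mem hxC hzC
    have h0 : fh x = 0 := hCC' _ hfhx hxcm
    have hx0 : x = 0 := stepA x hxC h0
    rw [hx0]
    simp
  have step4 : ∀ x ∈ Csub, p (fh x) = 0 → x = 0 := by
    intro x hx hpfx
    have : x ∈ K0 := ⟨hx, hpfx⟩
    rw [hK0bot] at this
    simpa using this
  -- step 5 : build v with (v ∘ fh) = p ∘ fh on Csub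
  set F : Submodule R E := Submodule.map fh Csub with hF
  have hFC' : F ⊓ C' = ⊥ := by
    rw [eq_bot_iff]
    rintro z ⟨⟨x, hxC, rfl⟩, hzC'⟩
    have : x ∈ K0 := ⟨hxC, hzC'⟩
    rw [hK0bot] at this
    simp only [Submodule.mem_bot] at this
    rw [this]
    simp
  obtain ⟨ρ, hρρ, hρF, hρC', -⟩ := split_lemma hE F C' hFC'
  set N₅ : E →ₗ[R] E := (LinearMap.id - p) ∘ₗ ρ with hN₅def
  have hN₅app : ∀ x, N₅ x = ρ x - p (ρ x) := fun x => rfl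
  have hN₅C' : ∀ x, N₅ x ∈ C' := by
    intro x
    show p (N₅ x) = 0
    rw [hN₅app, map_sub, hpp]
    exact sub_self _
  have hN₅N₅ : ∀ x, N₅ (N₅ x) = 0 := by
    intro x
    rw [hN₅app (N₅ x), hρC' _ (hN₅C' x), map_zero, sub_self]
  set v : E →ₗ[R] E := LinearMap.id - N₅ with hvdef
  set vinv : E →ₗ[R] E := LinearMap.id + N₅ with hvinvdef
  have hvapp : ∀ x, v x = x - N₅ x := fun x => rfl
  have hvinvapp : ∀ x, vinv x = x + N₅ x := fun x => rfl
  have hcomp1 : v ∘ₗ vinv = LinearMap.id := by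
    ext x
    show v (vinv x) = x
    rw [hvinvapp, hvapp, map_add, hN₅N₅, add_zero]
    abel
  have hcomp2 : vinv ∘ₗ v = LinearMap.id := by
    ext x
    show vinv (v x) = x
    rw [hvapp, hvinvapp, map_sub, hN₅N₅, sub_zero]
    abel
  set vE : E ≃ₗ[R] E := LinearEquiv.ofLinear v vinv hcomp1 hcomp2 with hvE
  have hvM : ∀ x ∈ M, v x ∈ M := fun x hx => hinv vE x hx
  set h : E →ₗ[R] E := v ∘ₗ fh with hhdef
  have hhM : ∀ x ∈ M, h x ∈ M := fun x hx => hvM _ (hfM x hx)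
  have hhJ : (h.restrict hhM : Module.End R ↥M) ∈
      Ideal.jacobson (⊥ : Ideal (Module.End R ↥M)) :=
    restrict_comp_mem_jac v fh hvM hfM hhM hfhJ
  have hhC : ∀ x ∈ Csub, h x = p (fh x) := by
    intro x hx
    have hfhF : fh x ∈ F := Submodule.mem_map_of_mem hx
    show v (fh x) = p (fh x)
    rw [hvapp, hN₅app, hρF _ hfhF]
    abel
  -- the projection π₂ onto F₂ = (p ∘ fh) Csub
  set pf : E →ₗ[R] E := p ∘ₗ fh with hpfdef
  have hpfapp : ∀ x, pf x = p (fh x) := fun x => rfl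
  set F₂ : Submodule R E := Submodule.map pf Csub with hF₂
  have hF₂C : F₂ ≤ Csub := by
    rintro z ⟨x, hx, rfl⟩
    exact ⟨fh x, rfl⟩
  have hφmem : ∀ y : ↥Csub, pf (Csub.subtype y) ∈ F₂ := fun y =>
    Submodule.mem_map_of_mem y.2
  set φ₀ : ↥Csub →ₗ[R] ↥F₂ := LinearMap.codRestrict F₂ (pf ∘ₗ Csub.subtype) hφmem with hφ₀
  have hφ₀coe : ∀ y : ↥Csub, (↑(φ₀ y) : E) = pf ↑y := fun y => rfl
  have hφinj : Function.Injective φ₀ := by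
    intro a b hab
    have h1 : pf ((↑a : E) - ↑b) = 0 := by
      rw [map_sub]
      have := congrArg (Subtype.val) hab
      rw [hφ₀coe, hφ₀coe] at this
      rw [this, sub_self]
    have h2 : (↑a : E) - ↑b = 0 := step4 _ (Csub.sub_mem a.2 b.2) h1
    exact Subtype.ext (sub_eq_zero.1 h2)
  have hφsurj : Function.Surjective φ₀ := by
    rintro ⟨z, hz⟩
    rcases hz with ⟨x, hx, rfl⟩
    exact ⟨⟨x, hx⟩, Subtype.ext rfl⟩
  set θ := LinearEquiv.ofBijective φ₀ ⟨hφinj, hφsurj⟩ with hθ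
  have hθapp : ∀ y : ↥Csub, θ y = φ₀ y := fun y => rfl
  set α : ↥F₂ →ₗ[R] E := Csub.subtype ∘ₗ (θ.symm : ↥F₂ →ₗ[R] ↥Csub) with hα
  obtain ⟨A', hA'⟩ := hE.out F₂.subtype (Submodule.injective_subtype F₂) α
  set π₂ : E →ₗ[R] E := pf ∘ₗ (p ∘ₗ A') with hπ₂def
  have hπ₂fix : ∀ z ∈ F₂, π₂ z = z := by
    intro z hz
    have h1 : A' z = ↑(θ.symm ⟨z, hz⟩) := hA' ⟨z, hz⟩
    show pf (p (A' z)) = z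
    rw [h1, hpfix _ (θ.symm ⟨z, hz⟩).2]
    have h2 : pf ↑(θ.symm ⟨z, hz⟩) = ↑(φ₀ (θ.symm ⟨z, hz⟩)) := rfl
    rw [h2, ← hθapp, θ.apply_symm_apply]
  have hπ₂mem : ∀ x, π₂ x ∈ F₂ := by
    intro x
    show pf (p (A' x)) ∈ F₂
    exact Submodule.mem_map_of_mem ⟨A' x, rfl⟩
  set D₁ : Submodule R E := LinearMap.ker π₂ ⊓ Csub with hD₁def
  have hD₁bot : D₁ = ⊥ := by
    apply Q_lemma hE hess hinv h hhM hhJ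
    rintro x ⟨hxk, hxC⟩ ⟨hzk, hzC⟩
    have hhx : h x ∈ F₂ := by
      rw [hhC x hxC, ← hpfapp]
      exact Submodule.mem_map_of_mem hxC
    have hxk' : π₂ x = 0 := hxk
    have hzk' : π₂ (x - h x) = 0 := hzk
    have h1 : π₂ (h x) = 0 := by
      have heq : h x = x - (x - h x) := by abel
      rw [heq, map_sub, hxk', hzk', sub_self]
    have h2 : h x = 0 := by rw [← hπ₂fix _ hhx, h1]
    have h3 : x = 0 := step4 x hxC (by rw [← hhC x hxC]; exact h2)
    rw [h3, map_zero, sub_zero]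
  have hCF₂ : ∀ x ∈ Csub, x ∈ F₂ := by
    intro x hx
    have hw : x - π₂ x ∈ D₁ := by
      constructor
      · show π₂ (x - π₂ x) = 0
        rw [map_sub, hπ₂fix _ (hπ₂mem x), sub_self]
      · exact Csub.sub_mem hx (hF₂C (hπ₂mem x))
    rw [hD₁bot] at hw
    simp only [Submodule.mem_bot] at hw
    have : x = π₂ x := by
      have := sub_eq_zero.1 hw
      exact this
    rw [this]
    exact hπ₂mem x
  -- build the unit u and conclude
  set Ψ : ↥Csub →ₗ[R] ↥Csub := (Submodule.inclusion hF₂C) ∘ₗ (θ : ↥Csub →ₗ[R] ↥F₂) with hΨ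
  have hΨcoe : ∀ y : ↥Csub, (↑(Ψ y) : E) = pf ↑y := fun y => rfl
  have hΨinj : Function.Injective Ψ := by
    intro a b hab
    apply θ.injective
    apply Subtype.ext
    have := congrArg (Subtype.val) hab
    exact this
  have hΨsurj : Function.Surjective Ψ := by
    intro y
    have hy : (↑y : E) ∈ F₂ := hCF₂ _ y.2
    refine ⟨θ.symm ⟨↑y, hy⟩, ?_⟩
    apply Subtype.ext
    have : (↑(Ψ (θ.symm ⟨↑y, hy⟩)) : E) = ↑(θ (θ.symm ⟨↑y, hy⟩)) := rfl
    rw [this, θ.apply_symm_apply]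
  set ΨE := LinearEquiv.ofBijective Ψ ⟨hΨinj, hΨsurj⟩ with hΨE
  have hΨEapp : ∀ y, ΨE y = Ψ y := fun y => rfl
  set pC : E →ₗ[R] ↥Csub := p.codRestrict Csub (fun x => ⟨x, rfl⟩) with hpC
  have hpCapp : ∀ x, (↑(pC x) : E) = p x := fun x => rfl
  set u₁ : E →ₗ[R] E := Csub.subtype ∘ₗ (ΨE.symm : ↥Csub →ₗ[R] ↥Csub) ∘ₗ pC +
    (LinearMap.id - p) with hu₁
  set u₂ : E →ₗ[R] E := Csub.subtype ∘ₗ (ΨE : ↥Csub →ₗ[R] ↥Csub) ∘ₗ pC +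
    (LinearMap.id - p) with hu₂
  have hu₁app : ∀ x, u₁ x = ↑(ΨE.symm (pC x)) + (x - p x) := fun x => rfl
  have hu₂app : ∀ x, u₂ x = ↑(ΨE (pC x)) + (x - p x) := fun x => rfl
  have hpCu₂ : ∀ x, pC (u₂ x) = ΨE (pC x) := by
    intro x
    apply Subtype.ext
    rw [hpCapp, hu₂app, map_add, map_sub, hpp, sub_self, add_zero,
      hpfix _ (ΨE (pC x)).2]
  have hpCu₁ : ∀ x, pC (u₁ x) = ΨE.symm (pC x) := by
    intro x
    apply Subtype.ext
    rw [hpCapp, hu₁app, map_add, map_sub, hpp, sub_self, add_zero,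
      hpfix _ (ΨE.symm (pC x)).2]
  have hucomp1 : u₁ ∘ₗ u₂ = LinearMap.id := by
    ext x
    show u₁ (u₂ x) = x
    rw [hu₁app, hpCu₂, ΨE.symm_apply_apply]
    have h1 : u₂ x - p (u₂ x) = x - p x := by
      have h2 : p (u₂ x) = ↑(ΨE (pC x)) := congrArg Subtype.val (hpCu₂ x)
      rw [h2, hu₂app]
      abel
    rw [h1, hpCapp]
    abel
  have hucomp2 : u₂ ∘ₗ u₁ = LinearMap.id := by
    ext x
    show u₂ (u₁ x) = x
    rw [hu₂app, hpCu₁, ΨE.apply_symm_apply]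
    have h1 : u₁ x - p (u₁ x) = x - p x := by
      have h2 : p (u₁ x) = ↑(ΨE.symm (pC x)) := congrArg Subtype.val (hpCu₁ x)
      rw [h2, hu₁app]
      abel
    rw [h1, hpCapp]
    abel
  set uE : E ≃ₗ[R] E := LinearEquiv.ofLinear u₁ u₂ hucomp1 hucomp2 with huE
  have hu₁M : ∀ x ∈ M, u₁ x ∈ M := fun x hx => hinv uE x hx
  set h₂ : E →ₗ[R] E := u₁ ∘ₗ h with hh₂def
  have hh₂M : ∀ x ∈ M, h₂ x ∈ M := fun x hx => hu₁M _ (hhM x hx)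
  have hh₂J : (h₂.restrict hh₂M : Module.End R ↥M) ∈
      Ideal.jacobson (⊥ : Ideal (Module.End R ↥M)) :=
    restrict_comp_mem_jac u₁ h hu₁M hhM hh₂M hhJ
  have hfixC : ∀ x ∈ Csub, h₂ x = x := by
    intro x hx
    set c : ↥Csub := ⟨x, hx⟩ with hc
    have hhx : h x = pf x := hhC x hx
    have hhxC : h x ∈ Csub := by rw [hhx]; exact ⟨fh x, rfl⟩
    have hpCh : pC (h x) = Ψ c := by
      apply Subtype.ext
      rw [hpCapp, hpfix _ hhxC, hΨcoe]
      exact hhx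
    show u₁ (h x) = x
    rw [hu₁app, hpCh, ← hΨEapp, ΨE.symm_apply_apply]
    have : h x - p (h x) = 0 := by rw [hpfix _ hhxC, sub_self]
    rw [this, add_zero]
  rcases Submodule.ne_bot_iff _ |>.1 hK0 with ⟨x₀, hx₀K, hx₀0⟩
  exact platform_fix hE hess h₂ hh₂M hh₂J x₀ (hfixC x₀ (hKC hx₀K)) hx₀0

end JacKer

section Delta

variable {R E : Type*} [Ring R] [AddCommGroup E] [Module R E] {M : Submodule R E}

lemma ess_ker_mem_jac (hE : Module.Injective R E) (hess : IsEssential M)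
    (hinv : ∀ φ : E ≃ₗ[R] E, ∀ x ∈ M, φ x ∈ M) (r : Module.End R ↥M)
    (hr : IsEssential (LinearMap.ker r)) :
    r ∈ Ideal.jacobson (⊥ : Ideal (Module.End R ↥M)) := by
  apply mem_jac_of_units
  intro s
  set w : Module.End R ↥M := 1 - s * r with hwdef
  have hwapp : ∀ m : ↥M, w m = m - s (r m) := fun m => rfl
  have hker : ∀ m : ↥M, w m = 0 → m = 0 := by
    intro m hm
    by_contra hm0
    rcases (isEssential_iff _).1 hr m hm0 with ⟨t, htker, ht0⟩
    have h1 : w (t • m) = 0 := by rw [map_smul, hm, smul_zero]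
    have h2 : w (t • m) = t • m := by
      rw [hwapp]
      have : r (t • m) = 0 := htker
      rw [this, map_zero, sub_zero]
    exact ht0 (by rw [← h2, h1])
  obtain ⟨wE, hwE⟩ := hE.out M.subtype (Submodule.injective_subtype M) (M.subtype ∘ₗ w)
  have hwE' : ∀ m : ↥M, wE ↑m = ↑(w m) := fun m => hwE m
  have hwM : ∀ x ∈ M, wE x ∈ M := by
    intro x hx
    have h1 : wE x = ↑(w ⟨x, hx⟩) := hwE' ⟨x, hx⟩
    rw [h1]
    exact (w ⟨x, hx⟩).2
  have hwinj : Function.Injective wE := by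
    have h : ∀ x, wE x = 0 → x = 0 := by
      intro x hx
      by_contra hx0
      rcases (isEssential_iff M).1 hess x hx0 with ⟨t, htM, ht0⟩
      have h1 : wE (t • x) = 0 := by rw [map_smul, hx, smul_zero]
      have h2 : wE ↑(⟨t • x, htM⟩ : ↥M) = ↑(w ⟨t • x, htM⟩) := hwE' _
      have h3 : w ⟨t • x, htM⟩ = 0 := by
        apply Subtype.ext
        rw [← h2]
        exact h1
      have := hker _ h3
      exact ht0 (by simpa using congrArg (Submodule.subtype M) this)
    intro a b hab
    have : wE (a - b) = 0 := by rw [map_sub, hab, sub_self]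
    exact sub_eq_zero.1 (h _ this)
  set Kr : Submodule R E := Submodule.map M.subtype (LinearMap.ker r) with hKr
  have hKress : IsEssential Kr := ess_map_subtype hess hr
  have hfix : ∀ x ∈ Kr, wE x = x := by
    rintro x ⟨m, hm, rfl⟩
    show wE (↑m : E) = (↑m : E)
    rw [hwE' m]
    have : w m = m := by
      rw [hwapp]
      have h0 : r m = 0 := hm
      rw [h0, map_zero, sub_zero]
    rw [this]
  have hrange : Kr ≤ LinearMap.range wE := fun x hx => ⟨x, hfix x hx⟩
  have hbij := bij_of_inj_ess hE wE hwinj Kr hKress hrange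
  set ω : E ≃ₗ[R] E := LinearEquiv.ofBijective wE hbij with hω
  have hωapp : ∀ x, ω x = wE x := fun x => rfl
  have hsymmM : ∀ x ∈ M, (ω.symm : E →ₗ[R] E) x ∈ M := fun x hx => hinv ω.symm x hx
  set y : Module.End R ↥M := (ω.symm : E →ₗ[R] E).restrict hsymmM with hy
  have hyw : ∀ m : ↥M, y (w m) = m := by
    intro m
    apply Subtype.ext
    show (ω.symm : E →ₗ[R] E) ↑(w m) = ↑m
    rw [← hwE' m, ← hωapp]
    exact ω.symm_apply_apply ↑m
  have hwy : ∀ m : ↥M, w (y m) = m := by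
    intro m
    apply Subtype.ext
    have h1 : (↑(w (y m)) : E) = wE ↑(y m) := (hwE' (y m)).symm
    rw [h1]
    show wE ((ω.symm : E →ₗ[R] E) ↑m) = ↑m
    rw [← hωapp]
    exact ω.apply_symm_apply ↑m
  refine ⟨⟨w, y, ?_, ?_⟩, rfl⟩
  · ext m
    exact congrArg Subtype.val (hwy m)
  · ext m
    exact congrArg Subtype.val (hyw m)

end Delta

/-- For an automorphism-invariant module M, idempotents lift modulo J(End(M)). -/
theorem stmt4 {R E : Type*} [Ring R] [AddCommGroup E] [Module R E]
    (hE : Module.Injective R E) (M : Submodule R E)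
    (hess : IsEssential M)
    (hinv : ∀ φ : E ≃ₗ[R] E, ∀ x ∈ M, φ x ∈ M) :
    ∀ e' : Module.End R ↥M,
      e' * e' - e' ∈ Ideal.jacobson (⊥ : Ideal (Module.End R ↥M)) →
      ∃ e : Module.End R ↥M, e * e = e ∧
        e - e' ∈ Ideal.jacobson (⊥ : Ideal (Module.End R ↥M)) := by
  intro e' he'
  set t : Module.End R ↥M := e' * e' - e' with ht
  have htess : IsEssential (LinearMap.ker t) := jac_ker_ess hE hess hinv t he'
  obtain ⟨gh, hgh⟩ := hE.out M.subtype (Submodule.injective_subtype M) (M.subtype ∘ₗ e')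
  have hgh' : ∀ m : ↥M, gh ↑m = ↑(e' m) := fun m => hgh m
  have hghM : ∀ x ∈ M, gh x ∈ M := by
    intro x hx
    have h1 : gh x = ↑(e' ⟨x, hx⟩) := hgh' ⟨x, hx⟩
    rw [h1]
    exact (e' ⟨x, hx⟩).2
  set W : Submodule R E := Submodule.map M.subtype (LinearMap.ker t) with hW
  have hWess : IsEssential W := ess_map_subtype hess htess
  have hWgh : ∀ x ∈ W, gh (gh x) = gh x := by
    rintro x ⟨m, hm, rfl⟩
    show gh (gh (↑m : E)) = gh (↑m : E)
    have h1 : gh ↑m = ↑(e' m) := hgh' m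
    have h2 : gh ↑(e' m) = ↑(e' (e' m)) := hgh' (e' m)
    have h3 : e' (e' m) = e' m := by
      have h4 : t m = 0 := hm
      have h5 : e' (e' m) - e' m = 0 := h4
      exact sub_eq_zero.1 h5
    rw [h1, h2, h3]
  set A : Submodule R E := Submodule.map gh W with hA
  set B : Submodule R E := Submodule.map (LinearMap.id - gh) W with hB
  have hAfix : ∀ a ∈ A, gh a = a := by
    rintro a ⟨x, hxW, rfl⟩
    exact hWgh x hxW
  have hBker : ∀ b ∈ B, gh b = 0 := by
    rintro b ⟨x, hxW, rfl⟩
    show gh (x - gh x) = 0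
    rw [map_sub, hWgh x hxW, sub_self]
  have hAB : A ⊓ B = ⊥ := by
    rw [eq_bot_iff]
    rintro z ⟨hzA, hzB⟩
    rw [Submodule.mem_bot]
    rw [← hAfix z hzA]
    exact hBker z hzB
  obtain ⟨p, hpp, hpA, hpB, -⟩ := split_lemma hE A B hAB
  set j : E →ₗ[R] E := p - gh with hj
  have hjapp : ∀ x, j x = p x - gh x := fun x => rfl
  have hjW : ∀ x ∈ W, j x = 0 := by
    intro x hxW
    have hxA : gh x ∈ A := Submodule.mem_map_of_mem hxW
    have hxB : x - gh x ∈ B := ⟨x, hxW, rfl⟩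
    have h1 : p x = gh x := by
      have : p x = p (gh x) + p (x - gh x) := by rw [← map_add]; congr 1; abel
      rw [this, hpA _ hxA, hpB _ hxB, add_zero]
    rw [hjapp, h1, sub_self]
  have hWker : W ≤ LinearMap.ker j := fun x hx => hjW x hx
  have hkerj : IsEssential (LinearMap.ker j) := hWess.mono hWker
  set oj : E →ₗ[R] E := LinearMap.id + j with hoj
  have hojapp : ∀ x, oj x = x + j x := fun x => rfl
  have hojinj : Function.Injective oj := by
    have h : ∀ x, oj x = 0 → x = 0 := by
      intro x hx
      by_contra hx0
      rcases (isEssential_iff _).1 hkerj x hx0 with ⟨t', ht'ker, ht'0⟩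
      have h1 : j (t' • x) = 0 := ht'ker
      have h2 : oj (t' • x) = 0 := by rw [map_smul, hx, smul_zero]
      have h3 : oj (t' • x) = t' • x := by rw [hojapp, h1, add_zero]
      exact ht'0 (h3.symm.trans h2)
    intro a b hab
    have : oj (a - b) = 0 := by rw [map_sub, hab, sub_self]
    exact sub_eq_zero.1 (h _ this)
  have hojrange : LinearMap.ker j ≤ LinearMap.range oj := by
    intro z hz
    refine ⟨z, ?_⟩
    rw [hojapp, hz, add_zero]
  have hojbij := bij_of_inj_ess hE oj hojinj _ hkerj hojrange
  set ojE : E ≃ₗ[R] E := LinearEquiv.ofBijective oj hojbij with hojE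
  have hjM : ∀ x ∈ M, j x ∈ M := by
    intro x hx
    have h1 : oj x ∈ M := hinv ojE x hx
    have h2 : j x = oj x - x := by rw [hojapp]; abel
    rw [h2]
    exact M.sub_mem h1 hx
  have hpM : ∀ x ∈ M, p x ∈ M := by
    intro x hx
    have h1 : p x = gh x + j x := by rw [hjapp]; abel
    rw [h1]
    exact M.add_mem (hghM x hx) (hjM x hx)
  set e : Module.End R ↥M := p.restrict hpM with he
  have hee : e * e = e := by
    ext m
    show p (p ↑m) = p ↑m
    exact hpp ↑m
  have hdiff : ∀ m : ↥M, ((e - e') m : E) = j ↑m := by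
    intro m
    show (↑(e m - e' m) : E) = j ↑m
    rw [Submodule.coe_sub]
    have h1 : (↑(e m) : E) = p ↑m := rfl
    rw [h1, ← hgh' m, hjapp]
  have hkerdiff : IsEssential (LinearMap.ker (e - e')) := by
    rw [isEssential_iff]
    intro m hm0
    have hcoe : (↑m : E) ≠ 0 := by
      intro h
      exact hm0 (Subtype.ext h)
    rcases (isEssential_iff _).1 hkerj ↑m hcoe with ⟨t', ht'ker, ht'0⟩
    refine ⟨t', ?_, ?_⟩
    · rw [LinearMap.mem_ker]
      apply Subtype.ext
      rw [hdiff (t' • m)]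
      have hcoe2 : (↑(t' • m) : E) = t' • (↑m : E) := rfl
      rw [hcoe2]
      have h6 : j (t' • (↑m : E)) = 0 := ht'ker
      rw [h6]
      simp
    · intro h
      apply ht'0
      have := congrArg (Submodule.subtype M) h
      simpa using this
  exact ⟨e, hee, ess_ker_mem_jac hE hess hinv _ hkerdiff⟩
end

section
/- Every semiregular ring is an exchange ring. That is, if R/J(R) is von Neumann regular and idempotents lift modulo J(R), then for every a ∈ R there exists an idempotent e ∈ R with e ∈ aR and 1 - e ∈ (1-a)R. -/
private lemma jac_mul_right {R : Type*} [Ring R] {x : R} (y : R)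
    (hx : x ∈ Ideal.jacobson (⊥ : Ideal R)) : x * y ∈ Ideal.jacobson (⊥ : Ideal R) :=
  Ideal.mul_mem_right y _ hx

private lemma jac_unit {R : Type*} [Ring R] {j : R}
    (hj : j ∈ Ideal.jacobson (⊥ : Ideal R)) :
    ∃ u : R, u * (1 - j) = 1 ∧ (1 - j) * u = 1 := by
  have h1 : (1 - j) - 1 ∈ Ideal.jacobson (⊥ : Ideal R) := by
    have : (1 - j) - 1 = -j := by abel
    rw [this]; exact neg_mem hj
  obtain ⟨u, hu⟩ := Ideal.exists_mul_sub_mem_of_sub_one_mem_jacobson (1 - j) h1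
  rw [Ideal.mem_bot, sub_eq_zero] at hu
  have hu' : u - 1 ∈ Ideal.jacobson (⊥ : Ideal R) := by
    have h2 : u - 1 = u * j := by rw [← hu]; noncomm_ring
    rw [h2]; exact Ideal.mul_mem_left _ u hj
  obtain ⟨t, ht⟩ := Ideal.exists_mul_sub_mem_of_sub_one_mem_jacobson u hu'
  rw [Ideal.mem_bot, sub_eq_zero] at ht
  have htj : t = 1 - j := by
    calc t = t * (u * (1 - j)) := by rw [hu, mul_one]
      _ = (t * u) * (1 - j) := by rw [mul_assoc]
      _ = 1 - j := by rw [ht, one_mul]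
  exact ⟨u, hu, by rw [← htj, ht]⟩

private lemma corner {R : Type*} [Ring R] {e x : R} (he : e * e = e)
    (hex : e - x ∈ Ideal.jacobson (⊥ : Ideal R)) :
    ∃ v : R, (x * v) * (x * v) = x * v ∧ e * (x * v) = e ∧ (x * v) * e = x * v ∧
      e - x * v ∈ Ideal.jacobson (⊥ : Ideal R) := by
  have hjJ : e - e * x * e ∈ Ideal.jacobson (⊥ : Ideal R) := by
    have h1 : (e * (e - x)) * e ∈ Ideal.jacobson (⊥ : Ideal R) :=
      jac_mul_right e (Ideal.mul_mem_left _ e hex)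
    have h2 : (e * (e - x)) * e = e - e * x * e := by
      calc (e * (e - x)) * e = (e * e) * e - e * x * e := by noncomm_ring
        _ = e - e * x * e := by rw [he, he]
    rwa [h2] at h1
  obtain ⟨u, hu1, hu2⟩ := jac_unit hjJ
  set j := e - e * x * e with hjdef
  have hej : e * j = j := by
    calc e * (e - e * x * e) = e * e - (e * e) * x * e := by noncomm_ring
      _ = e - e * x * e := by rw [he]
  have hje : j * e = j := by
    calc (e - e * x * e) * e = e * e - e * x * (e * e) := by noncomm_ring
      _ = e - e * x * e := by rw [he]
  have h1 : e * (1 - j) = (1 - j) * e := by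
    rw [mul_sub, sub_mul, mul_one, one_mul, hej, hje]
  have hcomm : u * e = e * u := by
    calc u * e = u * ((e * (1 - j)) * u) := by rw [mul_assoc e, hu2, mul_one]
      _ = u * (((1 - j) * e) * u) := by rw [h1]
      _ = (u * (1 - j)) * (e * u) := by simp only [mul_assoc]
      _ = e * u := by rw [hu1, one_mul]
  set v := e * u with hv
  have hev : e * v = v := by rw [hv, ← mul_assoc, he]
  have hve : v * e = v := by
    calc (e * u) * e = e * (u * e) := by rw [mul_assoc]
      _ = e * (e * u) := by rw [hcomm]
      _ = (e * e) * u := by rw [mul_assoc]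
      _ = e * u := by rw [he]
  have h2 : e * x * e = e - j := by rw [hjdef]; abel
  have hemj : e * (1 - j) = e - j := by rw [mul_sub, mul_one, hej]
  have hmje : (1 - j) * e = e - j := by rw [sub_mul, one_mul, hje]
  have key : (e * x * e) * v = e := by
    calc (e * x * e) * v = (e * (1 - j)) * (e * u) := by rw [h2, hemj, hv]
      _ = e * (((1 - j) * e) * u) := by simp only [mul_assoc]
      _ = e * ((e * (1 - j)) * u) := by rw [← h1]
      _ = (e * e) * ((1 - j) * u) := by simp only [mul_assoc]
      _ = e := by rw [he, hu2, mul_one]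
  have keyv : v * (e * x * e) = e := by
    calc v * (e * x * e) = (e * u) * ((1 - j) * e) := by rw [h2, hmje, hv]
      _ = e * ((u * (1 - j)) * e) := by simp only [mul_assoc]
      _ = e * e := by rw [hu1, one_mul]
      _ = e := he
  refine ⟨v, ?_, ?_, ?_, ?_⟩
  · have h3 : ((v * e) * x) * (e * v) = v := by
      calc ((v * e) * x) * (e * v) = (v * (e * x * e)) * v := by simp only [mul_assoc]
        _ = e * v := by rw [keyv]
        _ = v := hev
    have h4 : ((v * e) * x) * (e * v) = v * (x * v) := by
      rw [hve, hev]; simp only [mul_assoc]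
    have hvxv : v * (x * v) = v := h4.symm.trans h3
    calc (x * v) * (x * v) = x * (v * (x * v)) := by simp only [mul_assoc]
      _ = x * v := by rw [hvxv]
  · calc e * (x * v) = e * (x * (e * v)) := by rw [hev]
      _ = (e * x * e) * v := by simp only [mul_assoc]
      _ = e := key
  · rw [mul_assoc, hve]
  · have hu' : u - 1 = u * j := by rw [← hu1]; noncomm_ring
    have m1 : e - v ∈ Ideal.jacobson (⊥ : Ideal R) := by
      have h6 : e - v = -(e * (u * j)) := by rw [hv, ← hu']; noncomm_ring
      rw [h6]
      exact neg_mem (Ideal.mul_mem_left _ e (Ideal.mul_mem_left _ u hjJ))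
    have m2 : v - x * v ∈ Ideal.jacobson (⊥ : Ideal R) := by
      have h7 : (e - x) * v = v - x * v := by rw [sub_mul, hev]
      rw [← h7]; exact jac_mul_right v hex
    have h8 : e - x * v = (e - v) + (v - x * v) := by abel
    rw [h8]; exact add_mem m1 m2

/-- Every semiregular ring is an exchange ring: if R/J(R) is von Neumann regular
and idempotents lift modulo J(R), then for every a there is an idempotent
e ∈ aR with 1 - e ∈ (1-a)R. -/
theorem stmt6 {R : Type*} [Ring R]
    (hreg : ∀ a : R, ∃ b : R, a * b * a - a ∈ Ideal.jacobson (⊥ : Ideal R))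
    (hlift : ∀ e' : R, e' * e' - e' ∈ Ideal.jacobson (⊥ : Ideal R) →
      ∃ e : R, e * e = e ∧ e - e' ∈ Ideal.jacobson (⊥ : Ideal R)) :
    ∀ a : R, ∃ e r s : R, e * e = e ∧ e = a * r ∧ 1 - e = (1 - a) * s := by
  intro a
  obtain ⟨c, hc⟩ := hreg (a - a * a)
  set r' : R := 1 + (1 - a) * c * (1 - a) with hr'
  set s' : R := 1 - a * c * (1 - a) with hs'def
  set e₀ : R := a * r' with he₀def
  -- e₀ is idempotent mod J
  have hid : e₀ * e₀ - e₀ = ((a - a * a) * c * (a - a * a) - (a - a * a)) * r' := by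
    rw [he₀def, hr']; noncomm_ring
  have he₀J : e₀ * e₀ - e₀ ∈ Ideal.jacobson (⊥ : Ideal R) := by
    rw [hid]; exact jac_mul_right r' hc
  -- 1 - e₀ = (1-a) * s'
  have hs' : 1 - e₀ = (1 - a) * s' := by rw [he₀def, hr', hs'def]; noncomm_ring
  obtain ⟨e, he, heJ⟩ := hlift e₀ he₀J
  -- first corner: f = e₀ * v ∈ aR
  obtain ⟨v, hf1, hf2, hf3, hf4⟩ := corner he heJ
  set f : R := e₀ * v with hfdef
  -- 1 - f is idempotent
  have hf : (1 - f) * (1 - f) = 1 - f := by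
    calc (1 - f) * (1 - f) = 1 - f - f + f * f := by noncomm_ring
      _ = 1 - f := by rw [hf1]; abel
  have hdiff2 : (1 - f) - (1 - e₀) ∈ Ideal.jacobson (⊥ : Ideal R) := by
    have h9 : (1 - f) - (1 - e₀) = (e₀ - e) + (e - f) := by abel
    rw [h9]
    exact add_mem (neg_sub e e₀ ▸ neg_mem heJ) hf4
  -- second corner: g = (1 - e₀) * w ∈ (1-a)R
  obtain ⟨w, hg1, hg2, hg3, hg4⟩ := corner hf hdiff2
  set g : R := (1 - e₀) * w with hgdef
  refine ⟨1 - g, r' * v * (1 - g), s' * w, ?_, ?_, ?_⟩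
  · calc (1 - g) * (1 - g) = 1 - g - g + g * g := by noncomm_ring
      _ = 1 - g := by rw [hg1]; abel
  · -- 1 - g = f * (1 - g) = a * (r' * v * (1 - g))
    have hfg : f * g = g - (1 - f) := by
      have h := hg2
      rw [sub_mul, one_mul] at h
      rw [← h]; abel
    have h10 : 1 - g = f * (1 - g) := by
      rw [mul_sub, mul_one, hfg]; abel
    calc 1 - g = f * (1 - g) := h10
      _ = a * (r' * v * (1 - g)) := by rw [hfdef, he₀def]; simp only [mul_assoc]
  · rw [sub_sub_cancel, hgdef, hs', mul_assoc]
end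

section
/- An exchange ring in which all idempotents are central is a clean ring: every element is the sum of an idempotent and a unit. -/
/-- In a ring where all idempotents are central, one-sided inverses are two-sided. -/
lemma aux_one_sided {R : Type*} [Ring R]
    (hcentral : ∀ e : R, e * e = e → ∀ x : R, e * x = x * e)
    {x y : R} (h : x * y = 1) : y * x = 1 := by
  have hf : (y * x) * (y * x) = y * x := by
    rw [show (y * x) * (y * x) = y * (x * y) * x by noncomm_ring, h, mul_one]
  have hc := hcentral (y * x) hf x
  have h0 : x * (1 - y * x) = 0 := by
    rw [mul_sub, mul_one, show x * (y * x) = (x * y) * x by noncomm_ring, h, one_mul, sub_self]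
  have h0' : (1 - y * x) * x = 0 := by
    have : (1 - y * x) * x = x * (1 - y * x) := by
      rw [sub_mul, mul_sub, one_mul, mul_one, hc]
    rw [this, h0]
  have : 1 - y * x = 0 := by
    calc 1 - y * x = (1 - y * x) * (x * y) := by rw [h, mul_one]
    _ = ((1 - y * x) * x) * y := by rw [mul_assoc]
    _ = 0 := by rw [h0', zero_mul]
  exact (sub_eq_zero.mp this).symm

/-- An exchange ring in which all idempotents are central is clean. -/
theorem stmt8 {R : Type*} [Ring R]
    (hex : ∀ a : R, ∃ e r s : R, e * e = e ∧ e = a * r ∧ 1 - e = (1 - a) * s)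
    (hcentral : ∀ e : R, e * e = e → ∀ x : R, e * x = x * e) :
    ∀ a : R, ∃ (e : R) (u : Rˣ), e * e = e ∧ a = e + u := by
  intro a
  obtain ⟨e, r, s, he, her, hes⟩ := hex a
  have hca : e * a = a * e := hcentral e he a
  set u : R := a - 1 + e with hu
  set v : R := e * r * e - (1 - e) * s * (1 - e) with hv
  -- e commutes with u
  have hcu : u * e = e * u := by
    rw [hu]; calc (a - 1 + e) * e = a * e - e + e * e := by noncomm_ring
    _ = e * a - e + e * e := by rw [hca]
    _ = e * (a - 1 + e) := by noncomm_ring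
  -- e * u = e * a
  have heu : e * u = e * a := by
    calc e * u = e * a - e + e * e := by rw [hu]; noncomm_ring
    _ = e * a := by rw [he]; noncomm_ring
  -- (1-e) * u = (1-e) * (a - 1)
  have h1eu : (1 - e) * u = (1 - e) * (a - 1) := by
    calc (1 - e) * u = (1 - e) * (a - 1) + (e - e * e) := by rw [hu]; noncomm_ring
    _ = (1 - e) * (a - 1) := by rw [he]; noncomm_ring
  have huv : u * v = 1 := by
    have t1 : (e * u) * (r * e) = e := by
      rw [heu, show (e * a) * (r * e) = e * (a * r) * e by noncomm_ring, ← her, he, he]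
    have t2 : ((1 - e) * u) * (s * (1 - e)) = -(1 - e) := by
      rw [h1eu, show ((1 - e) * (a - 1)) * (s * (1 - e)) = -(((1 - e) * ((1 - a) * s)) * (1 - e))
        by noncomm_ring, ← hes]
      have : (1 - e) * (1 - e) = 1 - e := by
        calc (1 - e) * (1 - e) = 1 - e - e + e * e := by noncomm_ring
        _ = 1 - e := by rw [he]; noncomm_ring
      rw [this, this]
    calc u * v = (u * e) * (r * e) - (u * (1 - e)) * (s * (1 - e)) := by rw [hv]; noncomm_ring
    _ = (e * u) * (r * e) - ((1 - e) * u) * (s * (1 - e)) := by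
        have hcu' : u * (1 - e) = (1 - e) * u := by
          rw [mul_sub, sub_mul, mul_one, one_mul, hcu]
        rw [hcu, hcu']
    _ = e - -(1 - e) := by rw [t1, t2]
    _ = 1 := by noncomm_ring
  have hvu : v * u = 1 := aux_one_sided hcentral huv
  refine ⟨1 - e, ⟨u, v, huv, hvu⟩, ?_, ?_⟩
  · calc (1 - e) * (1 - e) = 1 - e - e + e * e := by noncomm_ring
    _ = 1 - e := by rw [he]; noncomm_ring
  · show a = (1 - e) + u
    rw [hu]; noncomm_ring
end

section
/- Let R be a ring such that R/J(R) is a clean ring and idempotents lift modulo J(R). Then R is a clean ring. -/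
/-- One plus an element of the Jacobson radical is a unit (noncommutative). -/
lemma one_add_jacobson_isUnit {R : Type*} [Ring R] (x : R)
    (hx : x ∈ Ideal.jacobson (⊥ : Ideal R)) : IsUnit (1 + x) := by
  obtain ⟨s, hs⟩ := Ideal.exists_mul_add_sub_mem_of_mem_jacobson x hx
  rw [Ideal.mem_bot, sub_eq_zero] at hs
  -- hs : s * (x + 1) = 1
  have hsx : s * x ∈ Ideal.jacobson (⊥ : Ideal R) := Ideal.mul_mem_left _ s hx
  have hs1 : s - 1 ∈ Ideal.jacobson (⊥ : Ideal R) := by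
    have h2 : s - 1 = -(s * x) := by
      have h3 := hs
      rw [mul_add, mul_one] at h3
      rw [← h3]; noncomm_ring
    rw [h2]
    exact neg_mem hsx
  obtain ⟨t, ht⟩ := Ideal.exists_mul_sub_mem_of_sub_one_mem_jacobson s hs1
  rw [Ideal.mem_bot, sub_eq_zero] at ht
  -- ht : t * s = 1
  have key : t = 1 + x := by
    calc t = t * (s * (x + 1)) := by rw [hs, mul_one]
    _ = (t * s) * (x + 1) := by rw [mul_assoc]
    _ = 1 + x := by rw [ht, one_mul, add_comm]
  have h1 : s * (1 + x) = 1 := by rw [add_comm]; exact hs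
  have h2 : (1 + x) * s = 1 := by rw [← key]; exact ht
  exact ⟨⟨1 + x, s, h2, h1⟩, rfl⟩

lemma unit_of_mod_jacobson {R : Type*} [Ring R] (u v : R)
    (h1 : u * v - 1 ∈ Ideal.jacobson (⊥ : Ideal R))
    (h2 : v * u - 1 ∈ Ideal.jacobson (⊥ : Ideal R)) : IsUnit u := by
  have huv : IsUnit (u * v) := by
    have h := one_add_jacobson_isUnit (u * v - 1) h1
    simpa using h
  have hvu : IsUnit (v * u) := by
    have h := one_add_jacobson_isUnit (v * u - 1) h2
    simpa using h
  obtain ⟨A, hA⟩ := huv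
  obtain ⟨B, hB⟩ := hvu
  set r : R := v * (A⁻¹ : Rˣ) with hr
  set l : R := (B⁻¹ : Rˣ) * v with hl
  have hur : u * r = 1 := by
    rw [hr, ← mul_assoc, ← hA]
    exact A.mul_inv
  have hlu : l * u = 1 := by
    rw [hl, mul_assoc, ← hB]
    exact B.inv_mul
  have hrl : l = r := by
    calc l = l * (u * r) := by rw [hur, mul_one]
    _ = (l * u) * r := by rw [← mul_assoc]
    _ = r := by rw [hlu, one_mul]
  exact ⟨⟨u, r, hur, by rw [← hrl]; exact hlu⟩, rfl⟩

/-- If R/J(R) is clean and idempotents lift modulo J(R), then R is clean. -/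
theorem stmt9 {R : Type*} [Ring R]
    (hclean : ∀ a : R, ∃ e u v : R,
      e * e - e ∈ Ideal.jacobson (⊥ : Ideal R) ∧
      u * v - 1 ∈ Ideal.jacobson (⊥ : Ideal R) ∧
      v * u - 1 ∈ Ideal.jacobson (⊥ : Ideal R) ∧
      a - (e + u) ∈ Ideal.jacobson (⊥ : Ideal R))
    (hlift : ∀ e' : R, e' * e' - e' ∈ Ideal.jacobson (⊥ : Ideal R) →
      ∃ e : R, e * e = e ∧ e - e' ∈ Ideal.jacobson (⊥ : Ideal R)) :
    ∀ a : R, ∃ (e : R) (u : Rˣ), e * e = e ∧ a = e + u := by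
  intro a
  obtain ⟨e', u0, v, he', hu1, hu2, ha⟩ := hclean a
  obtain ⟨e, hee, hee'⟩ := hlift e' he'
  obtain ⟨U, hU⟩ := unit_of_mod_jacobson u0 v hu1 hu2
  have hj : a - e - u0 ∈ Ideal.jacobson (⊥ : Ideal R) := by
    have heq : a - e - u0 = (a - (e' + u0)) - (e - e') := by noncomm_ring
    rw [heq]
    exact sub_mem ha hee'
  have hj' : (U⁻¹ : Rˣ) * (a - e - u0) ∈ Ideal.jacobson (⊥ : Ideal R) :=
    Ideal.mul_mem_left _ _ hj
  have hunit : IsUnit (a - e) := by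
    have hfact : a - e = (U : R) * (1 + (U⁻¹ : Rˣ) * (a - e - u0)) := by
      rw [mul_add, mul_one, ← mul_assoc, U.mul_inv, one_mul, hU]
      noncomm_ring
    rw [hfact]
    exact U.isUnit.mul (one_add_jacobson_isUnit _ hj')
  obtain ⟨W, hW⟩ := hunit
  exact ⟨e, W, hee, by rw [hW]; noncomm_ring⟩
end

section
/- Let M be an automorphism-invariant module such that End(M)/J(End(M)) has all idempotents central and idempotents lift modulo J(End(M)). Then M is a clean module, i.e., every endomorphism of M is the sum of an idempotent endomorphism and an automorphism. -/
section JacRing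
variable {A : Type*} [Ring A]

local notation "J" => Ideal.jacobson (⊥ : Ideal A)

theorem myIsUnit_of_left_right {u l r : A} (hl : l * u = 1) (hr : u * r = 1) : IsUnit u := by
  have : l = r := by
    calc l = l * (u * r) := by rw [hr, mul_one]
    _ = (l * u) * r := by rw [mul_assoc]
    _ = r := by rw [hl, one_mul]
  exact ⟨⟨u, r, hr, this ▸ hl⟩, rfl⟩

theorem jac_isUnit {x : A} (hx : x ∈ J) (y : A) : IsUnit (y * x + 1) := by
  obtain ⟨z, hz⟩ := Ideal.mem_jacobson_iff.1 hx y
  rw [Ideal.mem_bot, sub_eq_zero] at hz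
  -- hz : z * y * x + z = 1
  have hz1 : z * (y * x + 1) = 1 := by rw [mul_add, mul_one, ← mul_assoc]; exact hz
  -- z = 1 - z*y*x, find left inverse of z
  obtain ⟨w, hw⟩ := Ideal.mem_jacobson_iff.1 hx (-(z * y))
  rw [Ideal.mem_bot, sub_eq_zero] at hw
  have hw1 : w * (-(z * y) * x + 1) = 1 := by rw [mul_add, mul_one, ← mul_assoc]; exact hw
  have hzval : -(z * y) * x + 1 = z := by
    rw [neg_mul, ← hz]; abel
  rw [hzval] at hw1
  have hu : IsUnit z := myIsUnit_of_left_right hw1 hz1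
  obtain ⟨zu, hzu⟩ := hu
  refine ⟨⟨y * x + 1, z, ?_, hz1⟩, rfl⟩
  -- (y*x+1) * z = 1 : z has left inverse w and right inverse (y*x+1)... need u * r
  -- z * (y*x+1) = 1 means y*x+1 is right inverse of z; since z is a unit, also left
  have : (y * x + 1) = zu⁻¹ := by
    have := hzu ▸ hz1
    calc (y * x + 1) = (zu⁻¹ * zu) * (y * x + 1) := by simp
    _ = zu⁻¹ * (zu * (y * x + 1)) := by rw [mul_assoc]
    _ = zu⁻¹ := by rw [show (zu : A) * (y * x + 1) = 1 from hzu ▸ hz1, mul_one]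
  rw [this, ← hzu]
  simp

theorem jac_mem_of (x : A) (h : ∀ y, IsUnit (y * x + 1)) : x ∈ J := by
  rw [Ideal.mem_jacobson_iff]
  intro y
  obtain ⟨u, hu⟩ := h y
  refine ⟨(↑u⁻¹ : A), ?_⟩
  rw [Ideal.mem_bot, sub_eq_zero]
  have : (↑u⁻¹ : A) * (y * x + 1) = 1 := by rw [← hu]; exact u.inv_mul
  calc (↑u⁻¹ : A) * y * x + ↑u⁻¹ = ↑u⁻¹ * (y * x + 1) := by noncomm_ring
  _ = 1 := this

theorem isUnit_one_add_swap {a b : A} (h : IsUnit (1 + a * b)) : IsUnit (1 + b * a) := by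
  obtain ⟨u, hu⟩ := h
  have h1 : (1 + a * b) * ↑u⁻¹ = 1 := by rw [← hu]; exact u.mul_inv
  have h2 : (↑u⁻¹ : A) * (1 + a * b) = 1 := by rw [← hu]; exact u.inv_mul
  refine myIsUnit_of_left_right (l := 1 - b * ↑u⁻¹ * a) (r := 1 - b * ↑u⁻¹ * a) ?_ ?_
  · -- (1 - b u' a) * (1 + b a) = 1
    have key : (↑u⁻¹ : A) + ↑u⁻¹ * a * b = 1 := by
      have : (↑u⁻¹ : A) * (1 + a * b) = 1 := h2
      calc (↑u⁻¹ : A) + ↑u⁻¹ * a * b = ↑u⁻¹ * (1 + a * b) := by noncomm_ring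
      _ = 1 := h2
    calc (1 - b * ↑u⁻¹ * a) * (1 + b * a)
        = 1 + b * a - b * (↑u⁻¹ + ↑u⁻¹ * a * b) * a := by noncomm_ring
    _ = 1 + b * a - b * 1 * a := by rw [key]
    _ = 1 := by noncomm_ring
  · have key : (↑u⁻¹ : A) + a * b * ↑u⁻¹ = 1 := by
      calc (↑u⁻¹ : A) + a * b * ↑u⁻¹ = (1 + a * b) * ↑u⁻¹ := by noncomm_ring
      _ = 1 := h1
    calc (1 + b * a) * (1 - b * ↑u⁻¹ * a)
        = 1 + b * a - b * (↑u⁻¹ + a * b * ↑u⁻¹) * a := by noncomm_ring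
    _ = 1 + b * a - b * 1 * a := by rw [key]
    _ = 1 := by noncomm_ring

theorem jac_mul_right_s10 {x : A} (hx : x ∈ J) (s : A) : x * s ∈ J := by
  apply jac_mem_of
  intro y
  have h1 : IsUnit (1 + (s * y) * x) := by
    have := jac_isUnit hx (s * y); rwa [add_comm] at this
  have h2 : IsUnit (1 + x * (s * y)) := isUnit_one_add_swap h1
  have h3 : IsUnit (1 + (x * s) * y) := by rwa [← mul_assoc] at h2
  have := isUnit_one_add_swap h3
  rwa [add_comm] at this

theorem jac_one_add {x : A} (hx : x ∈ J) : IsUnit (1 + x) := by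
  have := jac_isUnit hx 1
  rwa [one_mul, add_comm] at this

theorem jac_unit_lift {u v : A} (h1 : u * v - 1 ∈ J) (h2 : v * u - 1 ∈ J) : IsUnit u := by
  have hu1 : IsUnit (u * v) := by
    have := jac_one_add h1; rwa [add_sub_cancel] at this
  have hu2 : IsUnit (v * u) := by
    have := jac_one_add h2; rwa [add_sub_cancel] at this
  obtain ⟨c, hc⟩ := hu1
  obtain ⟨d, hd⟩ := hu2
  have hr : u * (v * ↑c⁻¹) = 1 := by
    rw [← mul_assoc, ← hc]; exact c.mul_inv
  have hl : (↑d⁻¹ * v) * u = 1 := by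
    rw [mul_assoc, ← hd]; exact d.inv_mul
  exact myIsUnit_of_left_right hl hr

theorem jac_congr_right {a b : A} (h : a - b ∈ J) (c : A) : a * c - b * c ∈ J := by
  have := jac_mul_right_s10 h c; rwa [sub_mul] at this

theorem jac_congr_left {a b : A} (h : a - b ∈ J) (c : A) : c * a - c * b ∈ J := by
  have := Ideal.mul_mem_left _ c h; rwa [mul_sub] at this

end JacRing

section Ess
variable {R V : Type*} [Ring R] [AddCommGroup V] [Module R V]

/-- pointwise essentiality -/
def EssP (N : Submodule R V) : Prop :=
  ∀ x : V, x ≠ 0 → ∃ r : R, r • x ∈ N ∧ r • x ≠ 0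

/-- relative (pointwise) essentiality -/
def EssIn (A B : Submodule R V) : Prop :=
  A ≤ B ∧ ∀ x ∈ B, x ≠ 0 → ∃ r : R, r • x ∈ A ∧ r • x ≠ 0

theorem essP_iff (N : Submodule R V) : EssP N ↔ IsEssential N := by
  constructor
  · intro h K hK
    obtain ⟨x, hxK, hx0⟩ := Submodule.exists_mem_ne_zero_of_ne_bot hK
    obtain ⟨r, hr1, hr2⟩ := h x hx0
    intro hbot
    have : r • x ∈ N ⊓ K := ⟨hr1, K.smul_mem r hxK⟩
    rw [hbot, Submodule.mem_bot] at this
    exact hr2 this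
  · intro h x hx
    have hK : (R ∙ x) ≠ ⊥ := by
      intro hb
      have : x ∈ (R ∙ x) := Submodule.mem_span_singleton_self x
      rw [hb, Submodule.mem_bot] at this
      exact hx this
    have := h _ hK
    obtain ⟨y, hy, hy0⟩ := Submodule.exists_mem_ne_zero_of_ne_bot this
    obtain ⟨r, hr⟩ := Submodule.mem_span_singleton.1 hy.2
    exact ⟨r, by rw [hr]; exact hy.1, by rw [hr]; exact hy0⟩

theorem essP_mono {A B : Submodule R V} (h : A ≤ B) (hA : EssP A) : EssP B := by
  intro x hx
  obtain ⟨r, h1, h2⟩ := hA x hx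
  exact ⟨r, h h1, h2⟩

theorem essP_inf {A B : Submodule R V} (hA : EssP A) (hB : EssP B) : EssP (A ⊓ B) := by
  intro x hx
  obtain ⟨r, h1, h2⟩ := hA x hx
  obtain ⟨s, h3, h4⟩ := hB _ h2
  refine ⟨s * r, ?_, ?_⟩
  · rw [← smul_smul]
    exact ⟨A.smul_mem s h1, h3⟩
  · rwa [← smul_smul]

theorem essIn_trans {A B C : Submodule R V} (h1 : EssIn A B) (h2 : EssIn B C) : EssIn A C := by
  refine ⟨h1.1.trans h2.1, ?_⟩
  intro x hx hx0
  obtain ⟨r, hr1, hr2⟩ := h2.2 x hx hx0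
  obtain ⟨s, hs1, hs2⟩ := h1.2 _ hr1 hr2
  rw [smul_smul] at hs1 hs2
  exact ⟨s * r, hs1, hs2⟩

theorem essIn_refl (A : Submodule R V) : EssIn A A :=
  ⟨le_refl _, fun x hx hx0 => ⟨1, by rwa [one_smul], by rwa [one_smul]⟩⟩

/-- kernel of composition t ∘ s where t has essential kernel -/
theorem essP_ker_comp {t : V →ₗ[R] V} (ht : EssP (LinearMap.ker t)) (s : V →ₗ[R] V) :
    EssP (LinearMap.ker (t ∘ₗ s)) := by
  intro x hx
  by_cases h : s x = 0
  · exact ⟨1, by simp [LinearMap.mem_ker, h], by simpa⟩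
  · obtain ⟨r, h1, h2⟩ := ht (s x) h
    refine ⟨r, ?_, ?_⟩
    · rw [LinearMap.mem_ker, LinearMap.comp_apply, map_smul]
      rw [LinearMap.mem_ker] at h1
      exact h1
    · intro hc
      apply h2
      rw [← map_smul s r x, hc, map_zero]

/-- Zorn: maximal disjoint complement containing a given disjoint submodule -/
theorem exists_max_disjoint (A C : Submodule R V) (h : A ⊓ C = ⊥) :
    ∃ B, C ≤ B ∧ A ⊓ B = ⊥ ∧ ∀ B', A ⊓ B' = ⊥ → B ≤ B' → B' = B := by
  obtain ⟨B, hCB, hBs, hBmax⟩ := zorn_le_nonempty₀ {B : Submodule R V | A ⊓ B = ⊥}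
    (fun c hc hchain y hy => by
      refine ⟨sSup c, ?_, fun z hz => le_sSup hz⟩
      rw [Set.mem_setOf_eq, eq_bot_iff]
      rintro x ⟨hxA, hxS⟩
      have hcne : c.Nonempty := ⟨y, hy⟩
      rw [sSup_eq_iSup'] at hxS
      have hdir : Directed (· ≤ ·) (fun (i : c) => (i : Submodule R V)) := by
        intro i j
        rcases hchain.total i.2 j.2 with h | h
        · exact ⟨j, h, le_refl _⟩
        · exact ⟨i, le_refl _, h⟩
      haveI : Nonempty c := hcne.to_subtype
      rcases (Submodule.mem_iSup_of_directed _ hdir).1 hxS with ⟨⟨b, hb⟩, hxb⟩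
      have : x ∈ A ⊓ b := ⟨hxA, hxb⟩
      rw [hc hb] at this
      exact this) C h
  refine ⟨B, hCB, hBs, fun B' h1 h2 => le_antisymm (hBmax h1 h2) h2⟩

/-- a maximal complement makes the sup essential -/
theorem essP_sup_of_max (A B : Submodule R V) (hd : A ⊓ B = ⊥)
    (hmax : ∀ B', A ⊓ B' = ⊥ → B ≤ B' → B' = B) : EssP (A ⊔ B) := by
  rw [essP_iff]
  intro K hK hbot
  -- show A ⊓ (B ⊔ K) = ⊥
  have hdisj : A ⊓ (B ⊔ K) = ⊥ := by
    rw [eq_bot_iff]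
    rintro x ⟨hxA, hxBK⟩
    obtain ⟨b, hb, k, hk, rfl⟩ := Submodule.mem_sup.1 hxBK
    have hkmem : k ∈ (A ⊔ B) ⊓ K := by
      constructor
      · have : k = (b + k) - b := by abel
        rw [this]
        exact Submodule.sub_mem _ (Submodule.mem_sup_left hxA) (Submodule.mem_sup_right hb)
      · exact hk
    rw [hbot, Submodule.mem_bot] at hkmem
    rw [hkmem, add_zero] at hxA ⊢
    have : b ∈ A ⊓ B := ⟨hxA, hb⟩
    rw [hd] at this
    simpa using this
  have hBKB := hmax _ hdisj le_sup_left
  have hKB : K ≤ B := by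
    intro k hk
    have hmem : k ∈ B ⊔ K := Submodule.mem_sup_right hk
    rwa [hBKB] at hmem
  apply hK
  rw [eq_bot_iff]
  intro k hk
  have : k ∈ (A ⊔ B) ⊓ K := ⟨Submodule.mem_sup_right (hKB hk), hk⟩
  rw [hbot] at this
  exact this

/-- existence of maximal essential extensions (closures) -/
theorem exists_closure (A : Submodule R V) :
    ∃ Ahat, EssIn A Ahat ∧ ∀ X, EssIn Ahat X → X = Ahat := by
  obtain ⟨Ahat, hAAhat, hAhats, hAhatmax⟩ := zorn_le_nonempty₀ {X : Submodule R V | EssIn A X}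
    (fun c hc hchain y hy => by
      refine ⟨sSup c, ⟨le_trans (hc hy).1 (le_sSup hy), ?_⟩, fun z hz => le_sSup hz⟩
      intro x hx hx0
      have hcne : c.Nonempty := ⟨y, hy⟩
      rw [sSup_eq_iSup'] at hx
      have hdir : Directed (· ≤ ·) (fun (i : c) => (i : Submodule R V)) := by
        intro i j
        rcases hchain.total i.2 j.2 with h | h
        · exact ⟨j, h, le_refl _⟩
        · exact ⟨i, le_refl _, h⟩
      haveI : Nonempty c := hcne.to_subtype
      rcases (Submodule.mem_iSup_of_directed _ hdir).1 hx with ⟨⟨b, hb⟩, hxb⟩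
      exact (hc hb).2 x hxb hx0) A (essIn_refl A)
  refine ⟨Ahat, hAhats, fun X hX => ?_⟩
  have hXs : EssIn A X := essIn_trans hAhats hX
  exact le_antisymm (hAhatmax hXs hX.1) hX.1
end Ess

section Inj
variable {R E : Type*} [Ring R] [AddCommGroup E] [Module R E]

theorem idem_fix {π : E →ₗ[R] E} (h : π ∘ₗ π = π) {x : E} :
    x ∈ LinearMap.range π ↔ π x = x := by
  constructor
  · rintro ⟨y, rfl⟩
    have := LinearMap.congr_fun h y
    simpa using this
  · intro hx
    exact ⟨x, hx⟩

variable (hE : Module.Injective R E)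
include hE

theorem ext_submodule (A : Submodule R E) (φ : ↥A →ₗ[R] E) :
    ∃ Φ : E →ₗ[R] E, ∀ a : ↥A, Φ (a : E) = φ a := by
  obtain ⟨Φ, hΦ⟩ := hE.out A.subtype (Submodule.injective_subtype A) φ
  exact ⟨Φ, hΦ⟩

omit hE

theorem ess_quot (A B : Submodule R E) (hd : A ⊓ B = ⊥)
    (hmax : ∀ B', A ⊓ B' = ⊥ → B ≤ B' → B' = B) :
    ∀ z : E ⧸ B, z ≠ 0 → ∃ r : R, r • z ∈ A.map B.mkQ ∧ r • z ≠ 0 := by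
  intro z hz
  obtain ⟨x, rfl⟩ := B.mkQ_surjective z
  have hxB : x ∉ B := by
    intro hx
    apply hz
    rwa [Submodule.mkQ_apply, Submodule.Quotient.mk_eq_zero]
  have hne : A ⊓ (B ⊔ R ∙ x) ≠ ⊥ := by
    intro hbot
    have := hmax _ hbot le_sup_left
    apply hxB
    rw [← this]
    exact Submodule.mem_sup_right (Submodule.mem_span_singleton_self x)
  obtain ⟨a, ⟨haA, haBK⟩, ha0⟩ := Submodule.exists_mem_ne_zero_of_ne_bot hne
  obtain ⟨b, hb, k, hk, rfl⟩ := Submodule.mem_sup.1 haBK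
  obtain ⟨r, rfl⟩ := Submodule.mem_span_singleton.1 hk
  refine ⟨r, ?_, ?_⟩
  · have : B.mkQ (b + r • x) = r • B.mkQ x := by
      rw [map_add, map_smul]
      have : B.mkQ b = 0 := by rwa [Submodule.mkQ_apply, Submodule.Quotient.mk_eq_zero]
      rw [this, zero_add]
    rw [← this]
    exact Submodule.mem_map_of_mem haA
  · intro hc
    have : B.mkQ (b + r • x) = 0 := by
      rw [map_add, map_smul]
      have hb0 : B.mkQ b = 0 := by rwa [Submodule.mkQ_apply, Submodule.Quotient.mk_eq_zero]
      rw [hb0, zero_add]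
      exact hc
    rw [Submodule.mkQ_apply, Submodule.Quotient.mk_eq_zero] at this
    have : b + r • x ∈ A ⊓ B := ⟨haA, this⟩
    rw [hd] at this
    exact ha0 this

include hE

theorem isCompl_of_closed (A B : Submodule R E) (hd : A ⊓ B = ⊥)
    (hmax : ∀ B', A ⊓ B' = ⊥ → B ≤ B' → B' = B)
    (hclosed : ∀ X, EssIn A X → X = A) : IsCompl A B := by
  set g : ↥A →ₗ[R] E ⧸ B := B.mkQ ∘ₗ A.subtype with hg
  have ginj : Function.Injective g := by
    intro a a' haa
    have : B.mkQ ((a : E) - a') = 0 := by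
      rw [map_sub]
      rw [LinearMap.comp_apply] at haa
      rw [sub_eq_zero]
      simpa [hg] using haa
    rw [Submodule.mkQ_apply, Submodule.Quotient.mk_eq_zero] at this
    have hmem : (a : E) - a' ∈ A ⊓ B := ⟨A.sub_mem a.2 a'.2, this⟩
    rw [hd, Submodule.mem_bot, sub_eq_zero] at hmem
    exact Subtype.ext hmem
  obtain ⟨φ, hφ⟩ := hE.out g ginj A.subtype
  have hφA : ∀ a : ↥A, φ (B.mkQ a) = a := fun a => hφ a
  have φinj : Function.Injective φ := by
    rw [injective_iff_map_eq_zero]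
    intro z hz
    by_contra hz0
    obtain ⟨r, hr1, hr2⟩ := ess_quot A B hd hmax z hz0
    obtain ⟨a, haA, hamk⟩ := hr1
    have : φ (r • z) = a := by rw [← hamk]; exact hφA ⟨a, haA⟩
    rw [map_smul, hz, smul_zero] at this
    apply hr2
    rw [← hamk, ← this]
    simp
  have hrange : EssIn A (LinearMap.range φ) := by
    constructor
    · intro a ha
      exact ⟨B.mkQ a, hφA ⟨a, ha⟩⟩
    · rintro y ⟨z, rfl⟩ hy0
      have hz0 : z ≠ 0 := by rintro rfl; simp at hy0
      obtain ⟨r, hr1, hr2⟩ := ess_quot A B hd hmax z hz0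
      obtain ⟨a, haA, hamk⟩ := hr1
      refine ⟨r, ?_, ?_⟩
      · rw [← map_smul, ← hamk]
        have : φ (B.mkQ a) = a := hφA ⟨a, haA⟩
        rw [this]
        exact haA
      · rw [← map_smul]
        intro hc
        exact hr2 (by rw [← (map_eq_zero_iff φ φinj)]; exact hc)
  have hreq : LinearMap.range φ = A := hclosed _ hrange
  constructor
  · rw [disjoint_iff]; exact hd
  · rw [codisjoint_iff, eq_top_iff]
    intro x _
    have hmem : φ (B.mkQ x) ∈ A := by rw [← hreq]; exact ⟨B.mkQ x, rfl⟩
    set a := φ (B.mkQ x) with ha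
    have h1 : φ (B.mkQ a) = a := hφA ⟨a, hmem⟩
    have h2 : B.mkQ a = B.mkQ x := φinj (by rw [h1])
    have h3 : x - a ∈ B := by
      rw [← Submodule.Quotient.mk_eq_zero, ← Submodule.mkQ_apply, map_sub, h2, sub_self]
    have : x = a + (x - a) := by abel
    rw [this]
    exact Submodule.add_mem_sup hmem h3

theorem exists_idem_hull (A C : Submodule R E) (hd : A ⊓ C = ⊥) :
    ∃ π : E →ₗ[R] E, π ∘ₗ π = π ∧ EssIn A (LinearMap.range π) ∧ C ≤ LinearMap.ker π := by
  obtain ⟨B₀, hCB₀, hAB₀, hB₀max⟩ := exists_max_disjoint A C hd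
  obtain ⟨Ahat, hAAhat, hBAhat, hAhatmax⟩ := exists_max_disjoint B₀ A (by rwa [inf_comm])
  have essAB : EssP (A ⊔ B₀) := essP_sup_of_max A B₀ hAB₀ hB₀max
  have hessA : EssIn A Ahat := by
    refine ⟨hAAhat, fun x hx hx0 => ?_⟩
    obtain ⟨r, hr1, hr2⟩ := essAB x hx0
    obtain ⟨a, haA, b, hbB, hab⟩ := Submodule.mem_sup.1 hr1
    have hbmem : b ∈ B₀ ⊓ Ahat := by
      refine ⟨hbB, ?_⟩
      have : b = r • x - a := by rw [← hab]; abel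
      rw [this]
      exact Ahat.sub_mem (Ahat.smul_mem r hx) (hAAhat haA)
    rw [hBAhat, Submodule.mem_bot] at hbmem
    rw [hbmem, add_zero] at hab
    exact ⟨r, hab ▸ haA, hr2⟩
  have hclosed : ∀ X, EssIn Ahat X → X = Ahat := by
    intro X hX
    have hbx : B₀ ⊓ X = ⊥ := by
      rw [eq_bot_iff]
      rintro w ⟨hwB, hwX⟩
      rw [Submodule.mem_bot]
      by_contra hw0
      obtain ⟨r, hr1, hr2⟩ := hX.2 w hwX hw0
      have : r • w ∈ B₀ ⊓ Ahat := ⟨B₀.smul_mem r hwB, hr1⟩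
      rw [hBAhat, Submodule.mem_bot] at this
      exact hr2 this
    exact hAhatmax X hbx hX.1
  have hcompl : IsCompl Ahat B₀ := by
    apply isCompl_of_closed hE Ahat B₀ (by rwa [inf_comm])
      (fun B' h1 h2 => hB₀max B' (by
        rw [eq_bot_iff]
        intro x hx
        rw [← h1]
        exact ⟨hAAhat hx.1, hx.2⟩) h2) hclosed
  set π : E →ₗ[R] E := Ahat.subtype ∘ₗ (Submodule.projectionOnto Ahat B₀ hcompl) with hπ
  have hπval : ∀ x ∈ Ahat, π x = x := by
    intro x hx
    simp only [hπ, LinearMap.comp_apply]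
    rw [Submodule.projectionOnto_apply_left hcompl ⟨x, hx⟩]
    rfl
  have hπmem : ∀ x, π x ∈ Ahat := fun x => (Submodule.projectionOnto Ahat B₀ hcompl x).2
  have hrange : LinearMap.range π = Ahat := by
    apply le_antisymm
    · rintro y ⟨x, rfl⟩; exact hπmem x
    · intro x hx; exact ⟨x, hπval x hx⟩
  refine ⟨π, ?_, ?_, ?_⟩
  · ext x
    simp only [LinearMap.comp_apply]
    exact hπval _ (hπmem x)
  · rwa [hrange]
  · intro c hc
    have : c ∈ B₀ := hCB₀ hc
    simp only [hπ, LinearMap.mem_ker, LinearMap.comp_apply]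
    rw [Submodule.projectionOnto_apply_of_mem_right hcompl this]
    simp

theorem inj_ess_range_bij (h : E →ₗ[R] E) (hinj : Function.Injective h)
    (hrange : EssP (LinearMap.range h)) : Function.Bijective h := by
  obtain ⟨k, hk⟩ := hE.out h hinj LinearMap.id
  refine ⟨hinj, fun b => ?_⟩
  by_cases hd : b - h (k b) = 0
  · exact ⟨k b, by rw [← sub_eq_zero]; rw [← neg_sub]; rw [hd]; simp⟩
  · exfalso
    obtain ⟨r, hr1, hr2⟩ := hrange _ hd
    obtain ⟨a, ha⟩ := hr1
    have hkd : k (b - h (k b)) = 0 := by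
      rw [map_sub, hk (k b)]
      simp
    have hka : k (h a) = a := hk a
    have : a = 0 := by
      rw [← hka, ha, map_smul, hkd, smul_zero]
    rw [this, map_zero] at ha
    exact hr2 ha.symm

theorem gen_equiv (πA πB h : E →ₗ[R] E) (hA : πA ∘ₗ πA = πA) (_hB : πB ∘ₗ πB = πB)
    (h1 : ∀ x ∈ LinearMap.range πA, h x ∈ LinearMap.range πB)
    (h2 : ∀ x ∈ LinearMap.range πA, h x = 0 → x = 0)
    (h3 : ∀ y ∈ LinearMap.range πB, y ≠ 0 →
      ∃ (r : R) (a : E), a ∈ LinearMap.range πA ∧ h a = r • y ∧ r • y ≠ 0) :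
    ∃ θ : ↥(LinearMap.range πA) ≃ₗ[R] ↥(LinearMap.range πB),
      ∀ a : ↥(LinearMap.range πA), (θ a : E) = h a := by
  set A := LinearMap.range πA
  set B := LinearMap.range πB
  set g₀ : ↥A →ₗ[R] E := h ∘ₗ A.subtype with hg₀
  have g₀inj : Function.Injective g₀ := by
    rw [injective_iff_map_eq_zero]
    intro a ha
    exact Subtype.ext (h2 _ a.2 ha)
  obtain ⟨k, hk⟩ := hE.out g₀ g₀inj A.subtype
  set k' : E →ₗ[R] E := πA ∘ₗ k with hk'def
  have hk'mem : ∀ x, k' x ∈ A := fun x => ⟨k x, rfl⟩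
  have hk' : ∀ x ∈ A, k' (h x) = x := by
    intro x hx
    have := hk ⟨x, hx⟩
    simp only [hg₀, LinearMap.comp_apply, Submodule.coe_subtype] at this
    simp only [hk'def, LinearMap.comp_apply]
    rw [this]
    exact (idem_fix hA).1 hx
  have hsurj : ∀ b ∈ B, h (k' b) = b := by
    intro b hb
    by_contra hne
    have hd : b - h (k' b) ≠ 0 := fun hc => hne (by rw [← sub_eq_zero, ← neg_sub, hc]; simp)
    have hdB : b - h (k' b) ∈ B := B.sub_mem hb (h1 _ (hk'mem b))
    obtain ⟨r, a, haA, hha, hne0⟩ := h3 _ hdB hd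
    have hk'd : k' (b - h (k' b)) = 0 := by
      rw [map_sub, hk' _ (hk'mem b), sub_self]
    have : a = 0 := by
      rw [← hk' a haA, hha, map_smul, hk'd, smul_zero]
    rw [this, map_zero] at hha
    exact hne0 hha.symm
  set f₁ : ↥A →ₗ[R] ↥B := (h ∘ₗ A.subtype).codRestrict B (fun a => h1 _ a.2) with hf₁
  set f₂ : ↥B →ₗ[R] ↥A := (k' ∘ₗ B.subtype).codRestrict A (fun b => hk'mem _) with hf₂
  refine ⟨LinearEquiv.ofLinear f₁ f₂ ?_ ?_, fun a => rfl⟩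
  · ext b
    have : h (k' (b : E)) = b := hsurj _ b.2
    simpa [hf₁, hf₂] using this
  · ext a
    have : k' (h (a : E)) = a := hk' _ a.2
    simpa [hf₁, hf₂] using this

end Inj

section Stab
variable {R E : Type*} [Ring R] [AddCommGroup E] [Module R E]
variable (M : Submodule R E)

/-- restriction of an M-stabilizing endomorphism of E to an endomorphism of M -/
def restr (g : E →ₗ[R] E) (hg : ∀ x ∈ M, g x ∈ M) : Module.End R ↥M :=
  g.restrict hg

theorem restr_apply (g : E →ₗ[R] E) (hg : ∀ x ∈ M, g x ∈ M) (m : ↥M) :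
    ((restr M g hg) m : E) = g m := rfl

theorem restr_mul (g₁ g₂ : E →ₗ[R] E) (hg₁ : ∀ x ∈ M, g₁ x ∈ M) (hg₂ : ∀ x ∈ M, g₂ x ∈ M)
    (hg₁₂ : ∀ x ∈ M, (g₁ ∘ₗ g₂) x ∈ M) :
    restr M (g₁ ∘ₗ g₂) hg₁₂ = restr M g₁ hg₁ * restr M g₂ hg₂ := by
  ext m
  rfl

variable {M}

theorem stab_sq_zero (hinv : ∀ φ : E ≃ₗ[R] E, ∀ x ∈ M, φ x ∈ M)
    (σ : E →ₗ[R] E) (hσ : σ ∘ₗ σ = 0) : ∀ x ∈ M, σ x ∈ M := by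
  have hpt : ∀ x, σ (σ x) = 0 := fun x => LinearMap.congr_fun hσ x
  have h1 : (LinearMap.id (R := R) (M := E) + σ) ∘ₗ (LinearMap.id - σ) = LinearMap.id := by
    ext x
    simp [hpt]
  have h2 : (LinearMap.id (R := R) (M := E) - σ) ∘ₗ (LinearMap.id + σ) = LinearMap.id := by
    ext x
    simp [hpt]
  set θ : E ≃ₗ[R] E := LinearEquiv.ofLinear _ _ h1 h2 with hθ
  intro x hx
  have h3 : θ x ∈ M := hinv θ x hx
  have h4 : θ x = x + σ x := rfl
  have : σ x = θ x - x := by rw [h4]; abel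
  rw [this]
  exact M.sub_mem h3 hx

theorem isUnit_one_add_essker (hE : Module.Injective R E)
    (hess : IsEssential M)
    (hinv : ∀ φ : E ≃ₗ[R] E, ∀ x ∈ M, φ x ∈ M)
    (t : Module.End R ↥M) (ht : EssP (LinearMap.ker t)) : IsUnit (1 + t) := by
  have hMp : ∀ x : E, x ≠ 0 → ∃ r : R, r • x ∈ M ∧ r • x ≠ 0 := (essP_iff M).2 hess
  set w : Module.End R ↥M := 1 + t with hw
  have hwfix : ∀ m : ↥M, t m = 0 → w m = m := by
    intro m hm
    simp [hw, hm]
  have wmono : ∀ m : ↥M, w m = 0 → m = 0 := by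
    intro m hm
    by_contra hm0
    obtain ⟨r, hr1, hr2⟩ := ht m hm0
    rw [LinearMap.mem_ker] at hr1
    have : w (r • m) = r • m := hwfix _ hr1
    rw [map_smul, hm, smul_zero] at this
    exact hr2 this.symm
  obtain ⟨W₀, hW₀⟩ := ext_submodule hE M (M.subtype ∘ₗ w)
  have hW₀m : ∀ m : ↥M, W₀ (m : E) = ((w m : ↥M) : E) := fun m => hW₀ m
  have W₀inj : Function.Injective W₀ := by
    rw [injective_iff_map_eq_zero]
    intro x hx
    by_contra hx0
    obtain ⟨r, hr1, hr2⟩ := hMp x hx0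
    set m : ↥M := ⟨r • x, hr1⟩ with hm
    have h1 : W₀ (r • x) = ((w m : ↥M) : E) := hW₀m m
    rw [map_smul, hx, smul_zero] at h1
    have : w m = 0 := by
      rwa [eq_comm, Submodule.coe_eq_zero] at h1
    have := wmono m this
    rw [hm] at this
    apply hr2
    simpa using this
  have rangeEss : EssP (LinearMap.range W₀) := by
    intro x hx0
    obtain ⟨r, hr1, hr2⟩ := hMp x hx0
    set m : ↥M := ⟨r • x, hr1⟩ with hm
    have hm0 : m ≠ 0 := by
      intro hc
      apply hr2
      rw [hm] at hc
      simpa using congrArg (Subtype.val) hc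
    obtain ⟨r', hr'1, hr'2⟩ := ht m hm0
    rw [LinearMap.mem_ker] at hr'1
    refine ⟨r' * r, ?_, ?_⟩
    · have : W₀ ((r' • m : ↥M) : E) = ((w (r' • m) : ↥M) : E) := hW₀m _
      rw [hwfix _ hr'1] at this
      have hco : ((r' • m : ↥M) : E) = (r' * r) • x := by
        rw [hm]; simp [smul_smul]
      rw [hco] at this
      exact ⟨(r' * r) • x, this.trans rfl⟩
    · intro hc
      apply hr'2
      apply Subtype.ext
      show ((r' • m : ↥M) : E) = 0
      rw [hm]
      simpa [smul_smul] using hc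
  have bij := inj_ess_range_bij hE W₀ W₀inj rangeEss
  set θ := LinearEquiv.ofBijective W₀ bij with hθ
  have hθap : ∀ x, θ x = W₀ x := fun x => rfl
  set s₂ : Module.End R ↥M := restr M θ.symm.toLinearMap (hinv θ.symm) with hs₂
  have h1 : s₂ * w = 1 := by
    ext m
    show ((s₂ (w m) : ↥M) : E) = (m : E)
    rw [restr_apply]
    show θ.symm ((w m : ↥M) : E) = (m : E)
    rw [← hW₀m m, ← hθap]
    exact θ.symm_apply_apply _
  have h2 : w * s₂ = 1 := by
    ext m
    show ((w (s₂ m) : ↥M) : E) = (m : E)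
    have : ((w (s₂ m) : ↥M) : E) = W₀ ((s₂ m : ↥M) : E) := (hW₀m _).symm
    rw [this, restr_apply]
    show W₀ (θ.symm (m : E)) = (m : E)
    rw [← hθap]
    exact θ.apply_symm_apply _
  rw [hw] at h1 h2
  exact myIsUnit_of_left_right h1 h2

theorem essker_mem_jacobson (hE : Module.Injective R E)
    (hess : IsEssential M)
    (hinv : ∀ φ : E ≃ₗ[R] E, ∀ x ∈ M, φ x ∈ M)
    (g : Module.End R ↥M) (hg : EssP (LinearMap.ker g)) :
    g ∈ Ideal.jacobson (⊥ : Ideal (Module.End R ↥M)) := by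
  apply jac_mem_of
  intro y
  have hky : EssP (LinearMap.ker (y * g)) := by
    apply essP_mono _ hg
    intro m hm
    rw [LinearMap.mem_ker] at hm ⊢
    show y (g m) = 0
    rw [hm, map_zero]
  have := isUnit_one_add_essker hE hess hinv (y * g) hky
  rwa [add_comm] at this

end Stab

section SF
variable {R E : Type*} [Ring R] [AddCommGroup E] [Module R E]
variable {M : Submodule R E}

/-- no two nonzero independent isomorphic summands: squarefreeness from hcentral -/
theorem squarefree_of_central (hE : Module.Injective R E)
    (hess : IsEssential M)
    (hinv : ∀ φ : E ≃ₗ[R] E, ∀ x ∈ M, φ x ∈ M)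
    (hcentral : ∀ e x : Module.End R ↥M,
      e * e - e ∈ Ideal.jacobson (⊥ : Ideal (Module.End R ↥M)) →
      e * x - x * e ∈ Ideal.jacobson (⊥ : Ideal (Module.End R ↥M)))
    (πX πY : E →ₗ[R] E) (hX : πX ∘ₗ πX = πX) (hY : πY ∘ₗ πY = πY)
    (hdisj : LinearMap.range πX ⊓ LinearMap.range πY = ⊥)
    (θ : ↥(LinearMap.range πX) ≃ₗ[R] ↥(LinearMap.range πY)) :
    LinearMap.range πX = ⊥ := by
  set X := LinearMap.range πX with hXdef
  set Y := LinearMap.range πY with hYdef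
  set Z := X ⊔ Y with hZ
  set X₁ : Submodule R ↥Z := X.comap Z.subtype with hX₁
  set Y₁ : Submodule R ↥Z := Y.comap Z.subtype with hY₁
  have hXY₁ : IsCompl X₁ Y₁ := by
    constructor
    · rw [disjoint_iff, eq_bot_iff]
      rintro z ⟨hz1, hz2⟩
      have : (z : E) ∈ X ⊓ Y := ⟨hz1, hz2⟩
      rw [hdisj, Submodule.mem_bot] at this
      exact Submodule.mem_bot _ |>.2 (Subtype.ext this)
    · rw [codisjoint_iff, eq_top_iff]
      intro z _
      obtain ⟨x, hx, y, hy, hxy⟩ := Submodule.mem_sup.1 z.2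
      have hzd : z = (⟨x, le_sup_left (a := X) (b := Y) hx⟩ : ↥Z)
          + (⟨y, le_sup_right (a := X) (b := Y) hy⟩ : ↥Z) := by
        apply Subtype.ext
        simp [← hxy]
      rw [hzd]
      exact Submodule.add_mem_sup (by simpa [hX₁] using hx) (by simpa [hY₁] using hy)
  -- projections inside Z, extended to E
  set prX := Submodule.projectionOnto X₁ Y₁ hXY₁ with hprX
  set pZX : ↥Z →ₗ[R] E := Z.subtype ∘ₗ X₁.subtype ∘ₗ prX with hpZX
  obtain ⟨RX, hRX⟩ := ext_submodule hE Z pZX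
  set rX : E →ₗ[R] E := πX ∘ₗ RX with hrX
  set prY := Submodule.projectionOnto Y₁ X₁ hXY₁.symm with hprY
  set pZY : ↥Z →ₗ[R] E := Z.subtype ∘ₗ Y₁.subtype ∘ₗ prY with hpZY
  obtain ⟨RY, hRY⟩ := ext_submodule hE Z pZY
  set rY : E →ₗ[R] E := πY ∘ₗ RY with hrYdef
  have hrX_mem : ∀ e, rX e ∈ X := fun e => ⟨RX e, rfl⟩
  have hrY_mem : ∀ e, rY e ∈ Y := fun e => ⟨RY e, rfl⟩
  have hRX_X : ∀ x ∈ X, RX x = x := by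
    intro x hx
    have hxZ : x ∈ Z := le_sup_left (a := X) (b := Y) hx
    have h1 : RX x = pZX ⟨x, hxZ⟩ := hRX ⟨x, hxZ⟩
    rw [h1, hpZX]
    simp only [LinearMap.comp_apply]
    have hmem : (⟨x, hxZ⟩ : ↥Z) ∈ X₁ := by simpa [hX₁] using hx
    rw [hprX, Submodule.projectionOnto_apply_left hXY₁ ⟨⟨x, hxZ⟩, hmem⟩]
    rfl
  have hrX_X : ∀ x ∈ X, rX x = x := by
    intro x hx
    rw [hrX]
    simp only [LinearMap.comp_apply]
    rw [hRX_X x hx]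
    exact (idem_fix hX).1 hx
  have hRX_Y : ∀ y ∈ Y, RX y = 0 := by
    intro y hy
    have hyZ : y ∈ Z := le_sup_right (a := X) (b := Y) hy
    have h1 : RX y = pZX ⟨y, hyZ⟩ := hRX ⟨y, hyZ⟩
    rw [h1, hpZX]
    simp only [LinearMap.comp_apply]
    have hmem : (⟨y, hyZ⟩ : ↥Z) ∈ Y₁ := by simpa [hY₁] using hy
    rw [hprX, Submodule.projectionOnto_apply_of_mem_right hXY₁ hmem]
    simp
  have hrX_Y : ∀ y ∈ Y, rX y = 0 := by
    intro y hy
    rw [hrX]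
    simp only [LinearMap.comp_apply]
    rw [hRX_Y y hy, map_zero]
  have hRY_Y : ∀ y ∈ Y, RY y = y := by
    intro y hy
    have hyZ : y ∈ Z := le_sup_right (a := X) (b := Y) hy
    have h1 : RY y = pZY ⟨y, hyZ⟩ := hRY ⟨y, hyZ⟩
    rw [h1, hpZY]
    simp only [LinearMap.comp_apply]
    have hmem : (⟨y, hyZ⟩ : ↥Z) ∈ Y₁ := by simpa [hY₁] using hy
    rw [hprY, Submodule.projectionOnto_apply_left hXY₁.symm ⟨⟨y, hyZ⟩, hmem⟩]
    rfl
  have hrY_Y : ∀ y ∈ Y, rY y = y := by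
    intro y hy
    rw [hrYdef]
    simp only [LinearMap.comp_apply]
    rw [hRY_Y y hy]
    exact (idem_fix hY).1 hy
  have hRY_X : ∀ x ∈ X, RY x = 0 := by
    intro x hx
    have hxZ : x ∈ Z := le_sup_left (a := X) (b := Y) hx
    have h1 : RY x = pZY ⟨x, hxZ⟩ := hRY ⟨x, hxZ⟩
    rw [h1, hpZY]
    simp only [LinearMap.comp_apply]
    have hmem : (⟨x, hxZ⟩ : ↥Z) ∈ X₁ := by simpa [hX₁] using hx
    rw [hprY, Submodule.projectionOnto_apply_of_mem_right hXY₁.symm hmem]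
    simp
  have hrY_X : ∀ x ∈ X, rY x = 0 := by
    intro x hx
    rw [hrYdef]
    simp only [LinearMap.comp_apply]
    rw [hRY_X x hx, map_zero]
  -- the transfer maps
  set σ : E →ₗ[R] E := Y.subtype ∘ₗ θ.toLinearMap ∘ₗ (LinearMap.codRestrict X rX hrX_mem)
    with hσdef
  set τ : E →ₗ[R] E := X.subtype ∘ₗ θ.symm.toLinearMap ∘ₗ (LinearMap.codRestrict Y rY hrY_mem)
    with hτdef
  have hσ_mem : ∀ e, σ e ∈ Y := fun e => (θ _).2
  have hτ_mem : ∀ e, τ e ∈ X := fun e => (θ.symm _).2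
  have hσap : ∀ e, σ e = ((θ ⟨rX e, hrX_mem e⟩ : ↥Y) : E) := fun e => rfl
  have hτap : ∀ e, τ e = ((θ.symm ⟨rY e, hrY_mem e⟩ : ↥X) : E) := fun e => rfl
  have hσσ : σ ∘ₗ σ = 0 := by
    ext e
    simp only [LinearMap.comp_apply, LinearMap.zero_apply]
    rw [hσap (σ e)]
    have : (⟨rX (σ e), hrX_mem (σ e)⟩ : ↥X) = 0 := by
      apply Subtype.ext
      simpa using hrX_Y _ (hσ_mem e)
    rw [this, map_zero]
    rfl
  have hττ : τ ∘ₗ τ = 0 := by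
    ext e
    simp only [LinearMap.comp_apply, LinearMap.zero_apply]
    rw [hτap (τ e)]
    have : (⟨rY (τ e), hrY_mem (τ e)⟩ : ↥Y) = 0 := by
      apply Subtype.ext
      simpa using hrY_X _ (hτ_mem e)
    rw [this, map_zero]
    rfl
  set q : E →ₗ[R] E := σ ∘ₗ τ with hqdef
  have hq : ∀ e, q e = rY e := by
    intro e
    show σ (τ e) = rY e
    rw [hσap (τ e)]
    have h1 : (⟨rX (τ e), hrX_mem (τ e)⟩ : ↥X) = θ.symm ⟨rY e, hrY_mem e⟩ := by
      apply Subtype.ext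
      show rX (τ e) = _
      rw [hrX_X _ (hτ_mem e), hτap e]
    rw [h1, θ.apply_symm_apply]
  have hq_mem : ∀ e, q e ∈ Y := fun e => hq e ▸ hrY_mem e
  -- restrictions to M
  have hstabσ : ∀ x ∈ M, σ x ∈ M := stab_sq_zero hinv σ hσσ
  have hstabτ : ∀ x ∈ M, τ x ∈ M := stab_sq_zero hinv τ hττ
  have hstabq : ∀ x ∈ M, q x ∈ M := fun x hx => hstabσ _ (hstabτ _ hx)
  set a : Module.End R ↥M := restr M σ hstabσ with ha
  set b : Module.End R ↥M := restr M τ hstabτ with hb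
  set e₀ : Module.End R ↥M := restr M q hstabq with he₀def
  have hab : a * b = e₀ := by
    ext m
    rfl
  have hqq : ∀ e, q (q e) = q e := by
    intro e
    rw [hq (q e), hrY_Y _ (hq_mem e)]
  have he₀ : e₀ * e₀ = e₀ := by
    ext m
    show (q (q (m : E)) : E) = q (m : E)
    exact hqq _
  have hqσ : ∀ e, q (σ e) = σ e := by
    intro e
    rw [hq (σ e), hrY_Y _ (hσ_mem e)]
  have hσq : ∀ e, σ (q e) = 0 := by
    intro e
    rw [hσap (q e)]
    have : (⟨rX (q e), hrX_mem (q e)⟩ : ↥X) = 0 := by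
      apply Subtype.ext
      simpa using hrX_Y _ (hq_mem e)
    rw [this, map_zero]
    rfl
  have hqτ : ∀ e, q (τ e) = 0 := by
    intro e
    rw [hq (τ e), hrY_X _ (hτ_mem e)]
  have hτq : ∀ e, τ (q e) = τ e := by
    intro e
    rw [hτap (q e), hτap e]
    congr 2
    apply Subtype.ext
    show rY (q e) = rY e
    rw [hrY_Y _ (hq_mem e), hq e]
  have he₀a : e₀ * a = a := by
    ext m
    show (q (σ (m : E)) : E) = σ (m : E)
    exact hqσ _
  have hae₀ : a * e₀ = 0 := by
    ext m
    show (σ (q (m : E)) : E) = 0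
    exact hσq _
  have he₀b : e₀ * b = 0 := by
    ext m
    show (q (τ (m : E)) : E) = 0
    exact hqτ _
  have hbe₀ : b * e₀ = b := by
    ext m
    show (τ (q (m : E)) : E) = τ (m : E)
    exact hτq _
  -- hcentral forces a, b into the radical
  have haJ : a ∈ Ideal.jacobson (⊥ : Ideal (Module.End R ↥M)) := by
    have := hcentral e₀ a (by rw [he₀, sub_self]; exact Submodule.zero_mem _)
    rwa [he₀a, hae₀, sub_zero] at this
  have hbJ : b ∈ Ideal.jacobson (⊥ : Ideal (Module.End R ↥M)) := by
    have := hcentral e₀ b (by rw [he₀, sub_self]; exact Submodule.zero_mem _)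
    rw [he₀b, hbe₀, zero_sub] at this
    have := Submodule.neg_mem _ this
    rwa [neg_neg] at this
  have he₀J : e₀ ∈ Ideal.jacobson (⊥ : Ideal (Module.End R ↥M)) := by
    rw [← hab]
    exact jac_mul_right_s10 haJ b
  -- idempotent in the radical is zero
  have he₀0 : e₀ = 0 := by
    have hu : IsUnit (1 - e₀) := by
      have := jac_one_add (Submodule.neg_mem _ he₀J)
      rwa [← sub_eq_add_neg] at this
    obtain ⟨v, hv⟩ := hu
    have hv1 : (1 - e₀) * ↑v⁻¹ = 1 := by rw [← hv]; exact v.mul_inv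
    have h0 : e₀ * (1 - e₀) = 0 := by rw [mul_sub, mul_one, he₀, sub_self]
    calc e₀ = e₀ * ((1 - e₀) * ↑v⁻¹) := by rw [hv1, mul_one]
    _ = (e₀ * (1 - e₀)) * ↑v⁻¹ := by rw [mul_assoc]
    _ = 0 := by rw [h0, zero_mul]
  -- conclude Y = ⊥, then X = ⊥
  have hMY : M ⊓ Y = ⊥ := by
    rw [eq_bot_iff]
    rintro w ⟨hwM, hwY⟩
    have : ((e₀ ⟨w, hwM⟩ : ↥M) : E) = q w := rfl
    rw [he₀0] at this
    simp only [LinearMap.zero_apply] at this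
    have hw0 : q w = 0 := by
      rw [← this]
      rfl
    rw [hq w, hrY_Y _ hwY] at hw0
    simp [hw0]
  have hYbot : Y = ⊥ := by
    by_contra hY0
    exact (hess Y hY0) hMY
  rw [eq_bot_iff]
  intro x hx
  have h1 : ∀ w : ↥Y, (w : E) = 0 := by
    intro w
    have hw : (w : E) ∈ (⊥ : Submodule R E) := hYbot.le w.2
    simpa using hw
  have h2 : θ ⟨x, hx⟩ = 0 := Subtype.ext (h1 _)
  have h3 : (⟨x, hx⟩ : ↥X) = 0 := by
    have := congrArg θ.symm h2
    rw [θ.symm_apply_apply] at this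
    simpa using this
  simpa using congrArg Subtype.val h3

end SF

section Tlevel
variable {R E : Type*} [Ring R] [AddCommGroup E] [Module R E]

/-- the ideal of endomorphisms of E with essential kernel -/
def DT : Ideal (Module.End R E) where
  carrier := {g | EssP (LinearMap.ker g)}
  add_mem' := by
    intro a b ha hb
    apply essP_mono _ (essP_inf ha hb)
    rintro x ⟨hx1, hx2⟩
    have h1 : a x = 0 := hx1
    have h2 : b x = 0 := hx2
    exact SetLike.mem_coe.mpr (LinearMap.mem_ker.mpr
      (by rw [LinearMap.add_apply, h1, h2, add_zero]))
  zero_mem' := by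
    intro x hx
    exact ⟨1, by simp, by simpa⟩
  smul_mem' := by
    intro c x hx
    apply essP_mono _ hx
    intro m hm
    have h1 : x m = 0 := hm
    exact SetLike.mem_coe.mpr (LinearMap.mem_ker.mpr
      (by show c (x m) = 0; rw [h1, map_zero]))

theorem mem_DT {g : Module.End R E} : g ∈ (DT : Ideal (Module.End R E)) ↔
    EssP (LinearMap.ker g) := Iff.rfl

theorem DT_mul_right {g : Module.End R E} (hg : g ∈ (DT : Ideal (Module.End R E)))
    (h : Module.End R E) : g * h ∈ (DT : Ideal (Module.End R E)) := by
  rw [mem_DT] at hg ⊢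
  rw [Module.End.mul_eq_comp]
  exact essP_ker_comp hg h

variable {M : Submodule R E}

theorem T_offdiag_essker (hE : Module.Injective R E)
    (hess : IsEssential M)
    (hinv : ∀ φ : E ≃ₗ[R] E, ∀ x ∈ M, φ x ∈ M)
    (hcentral : ∀ e x : Module.End R ↥M,
      e * e - e ∈ Ideal.jacobson (⊥ : Ideal (Module.End R ↥M)) →
      e * x - x * e ∈ Ideal.jacobson (⊥ : Ideal (Module.End R ↥M)))
    (p : Module.End R E) (hp : p * p = p) (t : Module.End R E) :
    (1 - p) * t * p ∈ (DT : Ideal (Module.End R E)) := by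
  set σ : Module.End R E := (1 - p) * t * p with hσ
  have hσap : ∀ z, σ z = (1 - p) (t (p z)) := fun z => rfl
  rw [mem_DT]
  by_contra hns
  rw [EssP] at hns
  push_neg at hns
  obtain ⟨x, hx0, hxr⟩ := hns
  set Z : Submodule R E := R ∙ x with hZdef
  have hZker : ∀ z ∈ Z, σ z = 0 → z = 0 := by
    intro z hz hσz
    obtain ⟨r, rfl⟩ := Submodule.mem_span_singleton.1 hz
    by_contra h0
    exact h0 (hxr r (by rwa [LinearMap.mem_ker]))
  have hpp : ∀ w, p (p w) = p w := fun w => LinearMap.congr_fun hp w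
  have hidem : p ∘ₗ p = p := hp
  have hkerp : ∀ z ∈ Z, p z = 0 → z = 0 := by
    intro z hz hpz
    apply hZker z hz
    rw [hσap, hpz, map_zero, map_zero]
  set V₀ : Submodule R E := Z.map σ with hV₀
  have hV₀p : ∀ v ∈ V₀, p v = 0 := by
    rintro v ⟨z, _, rfl⟩
    rw [hσap]
    show p (t (p z) - p (t (p z))) = 0
    rw [map_sub, hpp, sub_self]
  obtain ⟨πZ, hπZidem, hessZ, _⟩ := exists_idem_hull hE Z ⊥ (by simp)
  obtain ⟨πV, hπVidem, hessV, _⟩ := exists_idem_hull hE V₀ ⊥ (by simp)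
  have hdisj : LinearMap.range πZ ⊓ LinearMap.range πV = ⊥ := by
    rw [eq_bot_iff]
    rintro w ⟨hw1, hw2⟩
    rw [Submodule.mem_bot]
    by_contra hw0
    obtain ⟨r, hr1, hr2⟩ := hessZ.2 w hw1 hw0
    obtain ⟨r', hr'1, hr'2⟩ := hessV.2 (r • w) (Submodule.smul_mem _ r hw2) hr2
    have hZm : r' • r • w ∈ Z := Submodule.smul_mem _ r' hr1
    exact hr'2 (hkerp _ hZm (hV₀p _ hr'1))
  have hσV₀ : ∀ z ∈ Z, σ z ∈ V₀ := fun z hz => Submodule.mem_map_of_mem hz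
  have hπVfix : ∀ v ∈ V₀, πV v = v := fun v hv => (idem_fix hπVidem).1 (hessV.1 hv)
  obtain ⟨θ, hθ⟩ := gen_equiv hE πZ πV (πV ∘ₗ σ) hπZidem hπVidem
    (fun w _ => ⟨σ w, rfl⟩)
    (by
      intro w hw hw0
      by_contra hne
      obtain ⟨r, hr1, hr2⟩ := hessZ.2 w hw hne
      have h1 : (πV ∘ₗ σ) (r • w) = 0 := by
        rw [map_smul, hw0, smul_zero]
      rw [LinearMap.comp_apply, hπVfix _ (hσV₀ _ hr1)] at h1
      exact hr2 (hZker _ hr1 h1))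
    (by
      intro y hy hy0
      obtain ⟨r, hr1, hr2⟩ := hessV.2 y hy hy0
      obtain ⟨z, hzZ, hzv⟩ := hr1
      refine ⟨r, z, hessZ.1 hzZ, ?_, hr2⟩
      rw [LinearMap.comp_apply, hzv, hπVfix _ (hzv ▸ hσV₀ _ hzZ)])
  have := squarefree_of_central hE hess hinv hcentral πZ πV hπZidem hπVidem hdisj θ
  apply hx0
  have hxZ : x ∈ Z := Submodule.mem_span_singleton_self x
  have := this.le (hessZ.1 hxZ)
  simpa using this

theorem T_idem_central (hE : Module.Injective R E)
    (hess : IsEssential M)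
    (hinv : ∀ φ : E ≃ₗ[R] E, ∀ x ∈ M, φ x ∈ M)
    (hcentral : ∀ e x : Module.End R ↥M,
      e * e - e ∈ Ideal.jacobson (⊥ : Ideal (Module.End R ↥M)) →
      e * x - x * e ∈ Ideal.jacobson (⊥ : Ideal (Module.End R ↥M)))
    (p : Module.End R E) (hp : p * p = p) (t : Module.End R E) :
    p * t - t * p ∈ (DT : Ideal (Module.End R E)) := by
  have h1 : (1 - p) * t * p ∈ (DT : Ideal (Module.End R E)) :=
    T_offdiag_essker hE hess hinv hcentral p hp t
  have h1p : (1 - p) * (1 - p) = 1 - p := by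
    rw [mul_sub, mul_one, sub_mul, one_mul, hp, sub_self, sub_zero]
  have h2' := T_offdiag_essker hE hess hinv hcentral (1 - p) h1p t
  have h2 : p * t * (1 - p) ∈ (DT : Ideal (Module.End R E)) := by
    rwa [sub_sub_cancel] at h2'
  have hid : p * t - t * p = p * t * (1 - p) - (1 - p) * t * p := by noncomm_ring
  rw [hid]
  exact Submodule.sub_mem _ h2 h1

theorem T_lift (hE : Module.Injective R E) (t : Module.End R E)
    (ht : t * t - t ∈ (DT : Ideal (Module.End R E))) :
    ∃ p : Module.End R E, p * p = p ∧ p - t ∈ (DT : Ideal (Module.End R E)) := by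
  set W : Submodule R E := LinearMap.ker (t * t - t) with hW
  have hWt : ∀ w ∈ W, t (t w) = t w := by
    intro w hw
    rw [hW, LinearMap.mem_ker] at hw
    have : t (t w) - t w = 0 := hw
    rw [← sub_eq_zero]
    exact this
  set W₁ : Submodule R E := W ⊓ LinearMap.ker t with hW₁
  set W₂ : Submodule R E := W.map t with hW₂
  have hW₂fix : ∀ w ∈ W₂, t w = w := by
    rintro w ⟨v, hv, rfl⟩
    exact hWt v hv
  have hd : W₂ ⊓ W₁ = ⊥ := by
    rw [eq_bot_iff]
    rintro w ⟨hw2, _, hwk⟩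
    have hwk' : t w = 0 := hwk
    have : w = 0 := by rw [← hW₂fix w hw2, hwk']
    exact SetLike.mem_coe.mpr (Submodule.mem_bot _ |>.mpr this)
  obtain ⟨π, hπidem, hessW₂, hW₁ker⟩ := exists_idem_hull hE W₂ W₁ hd
  refine ⟨π, hπidem, ?_⟩
  rw [mem_DT]
  intro x hx0
  obtain ⟨r, hr1, hr2⟩ := ht x hx0
  refine ⟨r, ?_, hr2⟩
  rw [LinearMap.mem_ker]
  set w := r • x with hwdef
  have hwW : w ∈ W := hr1
  have hsplit : w = (w - t w) + t w := by abel
  have hmem1 : w - t w ∈ W₁ := by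
    constructor
    · show w - t w ∈ LinearMap.ker (t * t - t)
      rw [LinearMap.mem_ker]
      have h1 : (t * t - t) w = 0 := hwW
      have h2 : (t * t - t) (t w) = 0 := by
        show t (t (t w)) - t (t w) = 0
        rw [hWt w hwW, hWt w hwW, sub_self]
      rw [map_sub, h1, h2, sub_self]
    · show w - t w ∈ LinearMap.ker t
      rw [LinearMap.mem_ker, map_sub, hWt w hwW, sub_self]
  have hmem2 : t w ∈ W₂ := Submodule.mem_map_of_mem hwW
  have hπ1 : π (w - t w) = 0 := hW₁ker hmem1
  have hπ2 : π (t w) = t w := (idem_fix hπidem).1 (hessW₂.1 hmem2)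
  show π w - t w = 0
  calc π w - t w = π ((w - t w) + t w) - t w := by rw [← hsplit]
  _ = π (w - t w) + π (t w) - t w := by rw [map_add]
  _ = 0 := by rw [hπ1, hπ2, zero_add, sub_self]

theorem T_modidem_central (hE : Module.Injective R E)
    (hess : IsEssential M)
    (hinv : ∀ φ : E ≃ₗ[R] E, ∀ x ∈ M, φ x ∈ M)
    (hcentral : ∀ e x : Module.End R ↥M,
      e * e - e ∈ Ideal.jacobson (⊥ : Ideal (Module.End R ↥M)) →
      e * x - x * e ∈ Ideal.jacobson (⊥ : Ideal (Module.End R ↥M)))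
    (w : Module.End R E) (hw : w * w - w ∈ (DT : Ideal (Module.End R E)))
    (t : Module.End R E) : w * t - t * w ∈ (DT : Ideal (Module.End R E)) := by
  obtain ⟨p, hp, hpw⟩ := T_lift hE w hw
  have hid : w * t - t * w = (w - p) * t + (p * t - t * p) + t * (p - w) := by noncomm_ring
  rw [hid]
  apply Submodule.add_mem
  apply Submodule.add_mem
  · have : w - p ∈ (DT : Ideal (Module.End R E)) := by
      have := Submodule.neg_mem _ hpw
      rwa [neg_sub] at this
    exact DT_mul_right this t
  · exact T_idem_central hE hess hinv hcentral p hp t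
  · exact Ideal.mul_mem_left _ t hpw

end Tlevel

section LZ
variable {A : Type*} [Ring A]

theorem LZ (I : Ideal A)
    (Iright : ∀ a ∈ I, ∀ b, a * b ∈ I)
    (Hc : ∀ e x : A, e * e - e ∈ I → e * x - x * e ∈ I)
    {x y : A} (hxyx : x * y * x - x ∈ I) (hyxy : y * x * y - y ∈ I) :
    x * y - y * x ∈ I := by
  have hml : ∀ (c : A) {a b : A}, a - b ∈ I → c * a - c * b ∈ I := by
    intro c a b h
    rw [← mul_sub]
    exact Ideal.mul_mem_left I c h
  have hmr : ∀ (c : A) {a b : A}, a - b ∈ I → a * c - b * c ∈ I := by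
    intro c a b h
    rw [← sub_mul]
    exact Iright _ h c
  have htr : ∀ {a b c : A}, a - b ∈ I → b - c ∈ I → a - c ∈ I := by
    intro a b c h1 h2
    have := I.add_mem h1 h2
    rwa [sub_add_sub_cancel] at this
  have hsy : ∀ {a b : A}, a - b ∈ I → b - a ∈ I := by
    intro a b h
    have := I.neg_mem h
    rwa [neg_sub] at this
  set e := y * x with hedef
  set f := x * y with hfdef
  have he : e * e - e ∈ I := by
    have h1 := hml y hxyx
    have heq : e * e - e = y * (x * y * x) - y * x := by rw [hedef]; try noncomm_ring
    rw [heq]; exact h1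
  have hf : f * f - f ∈ I := by
    have h1 := hmr y hxyx
    have heq : f * f - f = (x * y * x) * y - x * y := by rw [hfdef]; try noncomm_ring
    rw [heq]; exact h1
  have hxe : x * e - x ∈ I := by
    have heq : x * e - x = x * y * x - x := by rw [hedef]; try noncomm_ring
    rw [heq]; exact hxyx
  have hfx : f * x - x ∈ I := by
    have heq : f * x - x = x * y * x - x := by rw [hfdef]; try noncomm_ring
    rw [heq]; exact hxyx
  have hex : e * x - x ∈ I := htr (Hc e x he) hxe
  -- commutator moves
  have t1 : (1 - e) * f - f * (1 - e) ∈ I := by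
    have h1 := hsy (Hc e f he)
    have heq : (1 - e) * f - f * (1 - e) = f * e - e * f := by noncomm_ring
    rw [heq]; exact h1
  have t1' : (1 - f) * e - e * (1 - f) ∈ I := by
    have h1 := hsy (Hc f e hf)
    have heq : (1 - f) * e - e * (1 - f) = e * f - f * e := by noncomm_ring
    rw [heq]; exact h1
  -- Step 1 : x₁ = f - f*e  is in I
  set x₁ := f - f * e with hx₁def
  have hx₁eq : x₁ = f * (1 - e) := by rw [hx₁def]; try noncomm_ring
  have hx₁x : x₁ * x ∈ I := by
    have h1 : f * (e * x) - x ∈ I := htr (hml f hex) hfx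
    have h2 : f * x - x ∈ I := hfx
    have heq : x₁ * x = (f * x - x) - (f * (e * x) - x) := by rw [hx₁def]; try noncomm_ring
    rw [heq]
    exact I.sub_mem h2 h1
  have hmove : ∀ c : A, c * ((1 - e) * f) * (1 - e) - c * (f * (1 - e)) * (1 - e) ∈ I := by
    intro c
    exact hmr (1 - e) (hml c t1)
  have hx₁idem : x₁ * x₁ - x₁ ∈ I := by
    have s1 : x₁ * x₁ - f * (f * (1 - e)) * (1 - e) ∈ I := by
      have heq : x₁ * x₁ = f * ((1 - e) * f) * (1 - e) := by rw [hx₁def]; try noncomm_ring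
      rw [heq]
      exact hmove f
    have s2 : f * (f * (1 - e)) * (1 - e) - f * f * (1 - e) ∈ I := by
      have h1 : (1 - e) * (1 - e) - (1 - e) ∈ I := by
        have heq : (1 - e) * (1 - e) - (1 - e) = e * e - e := by noncomm_ring
        rw [heq]; exact he
      have h2 := hml (f * f) h1
      have heq : f * (f * (1 - e)) * (1 - e) - f * f * (1 - e)
          = f * f * ((1 - e) * (1 - e)) - f * f * (1 - e) := by noncomm_ring
      rw [heq]; exact h2
    have s3 : f * f * (1 - e) - x₁ ∈ I := by
      have h1 := hmr (1 - e) hf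
      have heq : f * f * (1 - e) - x₁ = f * f * (1 - e) - f * (1 - e) := by
        rw [hx₁eq]
      rw [heq]; exact h1
    exact htr (htr s1 s2) s3
  have hx₁f : x₁ * f - x₁ ∈ I := by
    have s1 : x₁ * f - f * (f * (1 - e)) ∈ I := by
      have h1 := hml f t1
      have heq : x₁ * f - f * (f * (1 - e)) = f * ((1 - e) * f) - f * (f * (1 - e)) := by
        rw [hx₁eq]; try noncomm_ring
      rw [heq]; exact h1
    have s2 : f * (f * (1 - e)) - x₁ ∈ I := by
      have h1 := hmr (1 - e) hf
      have heq : f * (f * (1 - e)) - x₁ = f * f * (1 - e) - f * (1 - e) := by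
        rw [hx₁eq]; try noncomm_ring
      rw [heq]; exact h1
    exact htr s1 s2
  have hx₁I : x₁ ∈ I := by
    have h1 : x₁ - x₁ * f ∈ I := hsy hx₁f
    have h2 : (x₁ * x) * y ∈ I := Iright _ hx₁x y
    have heq : x₁ = (x₁ - x₁ * f) + (x₁ * x) * y := by rw [hfdef]; try noncomm_ring
    rw [heq]
    exact I.add_mem h1 h2
  -- Step 2 : z = e - e*f is in I
  set z := e - e * f with hzdef
  have hzeq : z = e * (1 - f) := by rw [hzdef]; try noncomm_ring
  have hzx : z * x ∈ I := by
    have h1 : e * (f * x) - x ∈ I := htr (hml e hfx) hex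
    have heq : z * x = (e * x - x) - (e * (f * x) - x) := by rw [hzdef]; try noncomm_ring
    rw [heq]
    exact I.sub_mem hex h1
  have hzidem : z * z - z ∈ I := by
    have s1 : z * z - e * (e * (1 - f)) * (1 - f) ∈ I := by
      have h1 := hmr (1 - f) (hml e t1')
      have heq : z * z = e * ((1 - f) * e) * (1 - f) := by rw [hzdef]; try noncomm_ring
      rw [heq]; exact h1
    have s2 : e * (e * (1 - f)) * (1 - f) - e * e * (1 - f) ∈ I := by
      have h1 : (1 - f) * (1 - f) - (1 - f) ∈ I := by
        have heq : (1 - f) * (1 - f) - (1 - f) = f * f - f := by noncomm_ring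
        rw [heq]; exact hf
      have h2 := hml (e * e) h1
      have heq : e * (e * (1 - f)) * (1 - f) - e * e * (1 - f)
          = e * e * ((1 - f) * (1 - f)) - e * e * (1 - f) := by noncomm_ring
      rw [heq]; exact h2
    have s3 : e * e * (1 - f) - z ∈ I := by
      have h1 := hmr (1 - f) he
      have heq : e * e * (1 - f) - z = e * e * (1 - f) - e * (1 - f) := by rw [hzeq]
      rw [heq]; exact h1
    exact htr (htr s1 s2) s3
  have hze : z * e - z ∈ I := by
    have s1 : z * e - e * (e * (1 - f)) ∈ I := by
      have h1 := hml e t1'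
      have heq : z * e - e * (e * (1 - f)) = e * ((1 - f) * e) - e * (e * (1 - f)) := by
        rw [hzeq]; try noncomm_ring
      rw [heq]; exact h1
    have s2 : e * (e * (1 - f)) - z ∈ I := by
      have h1 := hmr (1 - f) he
      have heq : e * (e * (1 - f)) - z = e * e * (1 - f) - e * (1 - f) := by
        rw [hzeq]; try noncomm_ring
      rw [heq]; exact h1
    exact htr s1 s2
  have hzI : z ∈ I := by
    have h1 : z - z * e ∈ I := hsy hze
    have h2 : (z * y) * x - (y * z) * x ∈ I := hmr x (Hc z y hzidem)
    have h3 : (y * z) * x ∈ I := by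
      have := Ideal.mul_mem_left I y hzx
      have heq : (y * z) * x = y * (z * x) := by noncomm_ring
      rw [heq]; exact this
    have heq : z = (z - z * e) + ((z * y) * x - (y * z) * x) + (y * z) * x := by
      rw [hedef]; try noncomm_ring
    rw [heq]
    exact I.add_mem (I.add_mem h1 h2) h3
  -- conclusion
  have hcomm : f * e - e * f ∈ I := hsy (Hc e f he)
  have heq : x * y - y * x = x₁ + (f * e - e * f) - z := by
    rw [hx₁def, hzdef, hedef, hfdef]; try noncomm_ring
  rw [heq]
  exact I.sub_mem (I.add_mem hx₁I hcomm) hzI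

end LZ

section Main
variable {R E : Type*} [Ring R] [AddCommGroup E] [Module R E]

set_option maxHeartbeats 1000000 in
theorem stmt10' (hE : Module.Injective R E) (M : Submodule R E)
    (hess : IsEssential M)
    (hinv : ∀ φ : E ≃ₗ[R] E, ∀ x ∈ M, φ x ∈ M)
    (hcentral : ∀ e x : Module.End R ↥M,
      e * e - e ∈ Ideal.jacobson (⊥ : Ideal (Module.End R ↥M)) →
      e * x - x * e ∈ Ideal.jacobson (⊥ : Ideal (Module.End R ↥M)))
    (hlift : ∀ e' : Module.End R ↥M,
      e' * e' - e' ∈ Ideal.jacobson (⊥ : Ideal (Module.End R ↥M)) →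
      ∃ e : Module.End R ↥M, e * e = e ∧
        e - e' ∈ Ideal.jacobson (⊥ : Ideal (Module.End R ↥M))) :
    ∀ f : Module.End R ↥M, ∃ (e : Module.End R ↥M) (u : (Module.End R ↥M)ˣ),
      e * e = e ∧ f = e + u := by
  intro f
  -- extend f to an endomorphism F of E
  obtain ⟨F, hF⟩ := ext_submodule hE M (M.subtype ∘ₗ f)
  have hFm : ∀ m : ↥M, F (m : E) = ((f m : ↥M) : E) := fun m => hF m
  -- hull of the kernel
  obtain ⟨pK, hpKidem, hessK, _⟩ := exists_idem_hull hE (LinearMap.ker F) ⊥ (by simp)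
  have hpK : pK * pK = pK := hpKidem
  set pC : Module.End R E := 1 - pK with hpCdef
  have hPidem : pC * pC = pC := by
    rw [hpCdef, mul_sub, mul_one, sub_mul, one_mul, hpK, sub_self, sub_zero]
  have hPc : pC ∘ₗ pC = pC := hPidem
  have hpCap : ∀ z, pC z = z - pK z := fun z => rfl
  set EC : Submodule R E := LinearMap.range pC with hECdef
  have hpCmem : ∀ z, pC z ∈ EC := fun z => ⟨z, rfl⟩
  have hpCfix : ∀ z ∈ EC, pC z = z := fun z hz => (idem_fix hPc).1 hz
  have hECof : ∀ z, pK z = 0 → z ∈ EC := fun z h => ⟨z, by rw [hpCap, h, sub_zero]⟩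
  -- kernel of F meets EC trivially
  have hKC : ∀ c, F c = 0 → c ∈ EC → c = 0 := by
    intro c hc hcr
    have h1 : pK c = c := (idem_fix hpKidem).1 (hessK.1 (LinearMap.mem_ker.2 hc))
    have h2 : pC c = c := hpCfix c hcr
    rw [hpCap, h1, sub_self] at h2
    exact h2.symm
  -- retraction for F on EC
  set μ : ↥EC →ₗ[R] E := F ∘ₗ EC.subtype with hμdef
  have μinj : Function.Injective μ := by
    rw [injective_iff_map_eq_zero]
    intro c hc
    exact Subtype.ext (hKC _ hc c.2)
  obtain ⟨ρ₁, hρ₁⟩ := hE.out μ μinj EC.subtype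
  have hρ : ∀ c ∈ EC, ρ₁ (F c) = c := fun c hc => hρ₁ ⟨c, hc⟩
  -- the T-level elements
  set xT : Module.End R E := F * pC with hxTdef
  set y₀ : Module.End R E := pC * ρ₁ with hy₀def
  have hy₀x : y₀ * xT = pC := by
    ext z
    show pC (ρ₁ (F (pC z))) = pC z
    rw [hρ _ (hpCmem z), hpCfix _ (hpCmem z)]
  have hxTpC : xT * pC = xT := by
    rw [hxTdef, mul_assoc, hPidem]
  have hFxT : ∀ c ∈ EC, F c = xT c := by
    intro c hc
    show F c = F (pC c)
    rw [hpCfix _ hc]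
  clear_value xT y₀
  clear_value pC
  set P' : Module.End R E := xT * y₀ with hP'def
  have hP'x : P' * xT = xT := by
    rw [hP'def, mul_assoc, hy₀x, hxTpC]
  have hP'idem : P' * P' = P' := by
    rw [hP'def]
    calc (xT * y₀) * (xT * y₀) = xT * ((y₀ * xT) * y₀) := by noncomm_ring
    _ = (xT * pC) * y₀ := by rw [hy₀x]; noncomm_ring
    _ = xT * y₀ := by rw [hxTpC]
  clear_value P'
  set yT : Module.End R E := pC * y₀ * P' with hyTdef
  have hyx : yT * xT = pC := by
    rw [hyTdef]
    calc (pC * y₀ * P') * xT = pC * (y₀ * (P' * xT)) := by noncomm_ring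
    _ = pC * (y₀ * xT) := by rw [hP'x]
    _ = pC * pC := by rw [hy₀x]
    _ = pC := hPidem
  have hxy : xT * yT = P' := by
    rw [hyTdef]
    calc xT * (pC * y₀ * P') = (xT * pC) * (y₀ * P') := by noncomm_ring
    _ = (xT * y₀) * P' := by rw [hxTpC]; noncomm_ring
    _ = P' * P' := by rw [← hP'def]
    _ = P' := hP'idem
  have hPy : pC * yT = yT := by
    rw [hyTdef]
    calc pC * (pC * y₀ * P') = (pC * pC) * (y₀ * P') := by noncomm_ring
    _ = pC * (y₀ * P') := by rw [hPidem]
    _ = pC * y₀ * P' := by noncomm_ring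
  have hyP'0 : yT * (1 - P') = 0 := by
    rw [hyTdef]
    calc (pC * y₀ * P') * (1 - P') = pC * y₀ * (P' * (1 - P')) := by noncomm_ring
    _ = 0 := by rw [mul_sub, mul_one, hP'idem, sub_self, mul_zero]
  clear_value yT
  -- LZ at the T level gives P' ≡ pC
  have hDTc : ∀ e x : Module.End R E, e * e - e ∈ (DT : Ideal (Module.End R E)) →
      e * x - x * e ∈ (DT : Ideal (Module.End R E)) :=
    fun e x he => T_modidem_central hE hess hinv hcentral e he x
  have hPP' : P' - pC ∈ (DT : Ideal (Module.End R E)) := by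
    have h1 : xT * yT * xT - xT ∈ (DT : Ideal (Module.End R E)) := by
      rw [hxy, hP'x, sub_self]; exact Submodule.zero_mem _
    have h2 : yT * xT * yT - yT ∈ (DT : Ideal (Module.End R E)) := by
      rw [hyx, hPy, sub_self]; exact Submodule.zero_mem _
    have := LZ (DT : Ideal (Module.End R E)) (fun a ha b => DT_mul_right ha b) hDTc h1 h2
    rwa [hxy, hyx] at this
  -- the unit uT
  set uT : Module.End R E := pC * P' + (1 - pC) * (1 - P') with huTdef
  have huT1 : uT - 1 ∈ (DT : Ideal (Module.End R E)) := by
    have heq : uT - 1 = (pC + pC - 1) * (P' - pC) + (pC * pC - pC) + (pC * pC - pC) := by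
      rw [huTdef]; noncomm_ring
    rw [heq, hPidem, sub_self, add_zero, add_zero]
    exact Ideal.mul_mem_left _ _ hPP'
  have e1 : P' * (1 - P') = 0 := by rw [mul_sub, mul_one, hP'idem, sub_self]
  have e2 : (1 - P') * (1 - P') = 1 - P' := by
    rw [sub_mul, one_mul, mul_sub, mul_one, hP'idem, sub_self, sub_zero]
  have e3 : (1 - pC) * pC = 0 := by rw [sub_mul, one_mul, hPidem, sub_self]
  have e3' : pC * (1 - pC) = 0 := by rw [mul_sub, mul_one, hPidem, sub_self]
  have e4 : (1 - pC) * (1 - pC) = 1 - pC := by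
    rw [sub_mul, one_mul, mul_sub, mul_one, hPidem, sub_self, sub_zero]
  have hint : uT * (1 - P') = (1 - pC) * uT := by
    have l1 : uT * (1 - P') = pC * (P' * (1 - P')) + (1 - pC) * ((1 - P') * (1 - P')) := by
      rw [huTdef]; noncomm_ring
    have l2 : (1 - pC) * uT = ((1 - pC) * pC) * P' + ((1 - pC) * (1 - pC)) * (1 - P') := by
      rw [huTdef]; noncomm_ring
    rw [l1, l2, e1, e2, e3, e4, mul_zero, zero_add, zero_mul, zero_add]
  clear_value uT
  have hDapply : EssP (LinearMap.ker (uT - 1)) := huT1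
  have uTinj : Function.Injective uT := by
    rw [injective_iff_map_eq_zero]
    intro w hw
    by_contra hw0
    obtain ⟨r, hr1, hr2⟩ := hDapply w hw0
    rw [LinearMap.mem_ker] at hr1
    have h1 : uT (r • w) = r • w := by
      have h2 : uT (r • w) - r • w = 0 := hr1
      rw [← sub_eq_zero]; exact h2
    rw [map_smul, hw, smul_zero] at h1
    exact hr2 h1.symm
  have uTrange : EssP (LinearMap.range uT) := by
    apply essP_mono _ hDapply
    intro w hw
    have hw' : uT w - w = 0 := hw
    exact SetLike.mem_coe.mpr ⟨w, by rw [← sub_eq_zero]; exact hw'⟩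
  have uTbij := inj_ess_range_bij hE uT uTinj uTrange
  set θu := LinearEquiv.ofBijective uT uTbij with hθu
  set uT' : Module.End R E := θu.symm.toLinearMap with huT'def
  have huu' : uT * uT' = 1 := by
    ext w
    show uT (θu.symm w) = w
    exact θu.apply_symm_apply w
  have hu'u : uT' * uT = 1 := by
    ext w
    show θu.symm (uT w) = w
    exact θu.symm_apply_apply w
  clear_value uT'
  have hint' : uT' * (1 - pC) = (1 - P') * uT' := by
    calc uT' * (1 - pC) = uT' * (1 - pC) * (uT * uT') := by rw [huu', mul_one]
    _ = uT' * ((1 - pC) * uT) * uT' := by noncomm_ring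
    _ = uT' * (uT * (1 - P')) * uT' := by rw [← hint]
    _ = (uT' * uT) * ((1 - P') * uT') := by noncomm_ring
    _ = (1 - P') * uT' := by rw [hu'u, one_mul]
  -- the automorphism U of E
  set U : Module.End R E := yT + uT * (1 - P') with hUdef
  set V : Module.End R E := xT * pC + uT' * (1 - pC) with hVdef
  have ht1 : yT * (xT * pC) = pC := by
    rw [← mul_assoc, hyx, hPidem]
  have ht2 : yT * (uT' * (1 - pC)) = 0 := by
    rw [hint', ← mul_assoc, hyP'0, zero_mul]
  have h30 : (1 - P') * xT = 0 := by rw [sub_mul, one_mul, hP'x, sub_self]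
  have ht3 : (uT * (1 - P')) * (xT * pC) = 0 := by
    calc (uT * (1 - P')) * (xT * pC) = uT * (((1 - P') * xT) * pC) := by noncomm_ring
    _ = 0 := by rw [h30, zero_mul, mul_zero]
  have ht4 : (uT * (1 - P')) * (uT' * (1 - pC)) = 1 - pC := by
    rw [hint']
    calc (uT * (1 - P')) * ((1 - P') * uT') = uT * (((1 - P') * (1 - P')) * uT') := by
          noncomm_ring
    _ = uT * ((1 - P') * uT') := by rw [e2]
    _ = (uT * (1 - P')) * uT' := by noncomm_ring
    _ = ((1 - pC) * uT) * uT' := by rw [hint]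
    _ = (1 - pC) * (uT * uT') := by noncomm_ring
    _ = 1 - pC := by rw [huu', mul_one]
  have hUV : U * V = 1 := by
    rw [hUdef, hVdef, add_mul, mul_add, mul_add]
    rw [ht1, ht2, ht3, ht4]
    abel
  have ht5 : (xT * pC) * yT = P' := by
    rw [hxTpC, hxy]
  have ht6 : (xT * pC) * (uT * (1 - P')) = 0 := by
    rw [hint]
    calc (xT * pC) * ((1 - pC) * uT) = xT * ((pC * (1 - pC)) * uT) := by noncomm_ring
    _ = 0 := by rw [e3', zero_mul, mul_zero]
  have ht7 : (uT' * (1 - pC)) * yT = 0 := by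
    have hz : (1 - pC) * yT = 0 := by
      rw [sub_mul, one_mul, hPy, sub_self]
    rw [mul_assoc, hz, mul_zero]
  have ht8 : (uT' * (1 - pC)) * (uT * (1 - P')) = 1 - P' := by
    rw [hint']
    calc ((1 - P') * uT') * (uT * (1 - P')) = (1 - P') * ((uT' * uT) * (1 - P')) := by
          noncomm_ring
    _ = (1 - P') * (1 - P') := by rw [hu'u, one_mul]
    _ = 1 - P' := e2
  have hVU : V * U = 1 := by
    rw [hUdef, hVdef, add_mul, mul_add, mul_add]
    rw [ht5, ht6, ht7, ht8]
    abel
  -- key property of U before making things opaque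
  have hUFc : ∀ c ∈ EC, F (U (F c)) = F c := by
    intro c hc
    have hFc : F c = xT c := hFxT c hc
    have hP'Fc : P' (F c) = F c := by
      rw [hFc]
      show (P' * xT) c = xT c
      rw [hP'x]
    have h1 : U (F c) = yT (F c) := by
      rw [hUdef]
      show yT (F c) + (uT * (1 - P')) (F c) = yT (F c)
      have hz : (1 - P') (F c) = 0 := by
        show F c - P' (F c) = 0
        rw [hP'Fc, sub_self]
      have h2 : (uT * (1 - P')) (F c) = 0 := by
        show uT ((1 - P') (F c)) = 0
        rw [hz, map_zero]
      rw [h2, add_zero]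
    have h3 : yT (F c) = c := by
      rw [hFc]
      show (yT * xT) c = c
      rw [hyx]
      exact hpCfix _ hc
    rw [h1, h3]
  set θU : E ≃ₗ[R] E := LinearEquiv.ofLinear U V hUV hVU with hθU
  have hstabU : ∀ w ∈ M, U w ∈ M := fun w hw => hinv θU w hw
  set s : Module.End R ↥M := restr M U hstabU with hsdef
  have hsm : ∀ m : ↥M, ((s m : ↥M) : E) = U (m : E) := fun m => rfl
  clear_value s
  -- essential kernel of F - F∘U∘F, pointwise
  have hessD : ∀ z : E, z ≠ 0 → ∃ r : R, (F (r • z) - F (U (F (r • z))) = 0) ∧ r • z ≠ 0 := by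
    intro z hz0
    by_cases hpz : pK z = 0
    · refine ⟨1, ?_, by simpa⟩
      rw [one_smul]
      rw [hUFc z (hECof z hpz), sub_self]
    · obtain ⟨r, hr1, hr2⟩ := hessK.2 (pK z) ⟨z, rfl⟩ hpz
      refine ⟨r, ?_, ?_⟩
      · have hsplit : r • z = pK (r • z) + pC (r • z) := by
          rw [hpCap]; abel
        have hk : F (pK (r • z)) = 0 := by
          have hm : pK (r • z) ∈ LinearMap.ker F := by
            rw [map_smul]; exact hr1
          exact hm
        have hDk : F (pK (r • z)) - F (U (F (pK (r • z)))) = 0 := by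
          rw [hk, map_zero, map_zero, sub_self]
        have hDc : F (pC (r • z)) - F (U (F (pC (r • z)))) = 0 := by
          rw [hUFc _ (hpCmem _), sub_self]
        calc F (r • z) - F (U (F (r • z)))
            = F (pK (r • z) + pC (r • z)) - F (U (F (pK (r • z) + pC (r • z)))) := by
              rw [← hsplit]
        _ = (F (pK (r • z)) - F (U (F (pK (r • z)))))
            + (F (pC (r • z)) - F (U (F (pC (r • z))))) := by
              simp only [map_add]
              abel
        _ = 0 := by rw [hDk, hDc, add_zero]
      · intro hc
        apply hr2
        rw [← map_smul, hc, map_zero]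
  -- transfer to End(M)
  have hcoefsf : ∀ m : ↥M, (((f * s * f) m : ↥M) : E) = F (U (F (m : E))) := by
    intro m
    show ((f (s (f m)) : ↥M) : E) = F (U (F (m : E)))
    rw [← hFm (s (f m)), hsm (f m), ← hFm m]
  have hdS : EssP (LinearMap.ker (f - f * s * f)) := by
    intro m hm0
    have hmE : (m : E) ≠ 0 := fun hc => hm0 (Subtype.ext hc)
    obtain ⟨r, hr1, hr2⟩ := hessD (m : E) hmE
    have hcosm : ((r • m : ↥M) : E) = r • (m : E) := rfl
    refine ⟨r, ?_, ?_⟩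
    · rw [LinearMap.mem_ker]
      apply Subtype.ext
      have hco : (((f - f * s * f) (r • m) : ↥M) : E)
          = F ((r • m : ↥M) : E) - F (U (F ((r • m : ↥M) : E))) := by
        have hsub : (f - f * s * f) (r • m) = f (r • m) - (f * s * f) (r • m) := rfl
        rw [hsub, Submodule.coe_sub, hcoefsf (r • m), ← hFm (r • m)]
      rw [hco, hcosm]
      exact hr1
    · intro hc
      apply hr2
      rw [← hcosm, hc]
      rfl
  have hdJ : f - f * s * f ∈ Ideal.jacobson (⊥ : Ideal (Module.End R ↥M)) :=
    essker_mem_jacobson hE hess hinv _ hdS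
  have hd' : f * s * f - f ∈ Ideal.jacobson (⊥ : Ideal (Module.End R ↥M)) := by
    have := Submodule.neg_mem _ hdJ
    rwa [neg_sub] at this
  set J := Ideal.jacobson (⊥ : Ideal (Module.End R ↥M)) with hJdef
  set y : Module.End R ↥M := s * f * s with hydef
  have hxyx : f * y * f - f ∈ J := by
    have heq : f * y * f - f = (f * s * f - f) * (s * f) + (f * s * f - f) := by
      rw [hydef]; simp only [mul_sub, sub_mul, mul_add, add_mul, mul_assoc, mul_one, one_mul]; try abel
    rw [heq]
    exact Submodule.add_mem _ (jac_mul_right_s10 hd' (s * f)) hd'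
  have hyxy : y * f * y - y ∈ J := by
    have heq : y * f * y - y = s * ((f * s * f - f) * (s * f * s))
        + s * ((f * s * f - f) * s) := by
      rw [hydef]; simp only [mul_sub, sub_mul, mul_add, add_mul, mul_assoc, mul_one, one_mul]; try abel
    rw [heq]
    apply Submodule.add_mem
    · exact Ideal.mul_mem_left _ s (jac_mul_right_s10 hd' (s * f * s))
    · exact Ideal.mul_mem_left _ s (jac_mul_right_s10 hd' s)
  clear_value y
  have hcomm : f * y - y * f ∈ J := LZ J (fun a ha b => jac_mul_right_s10 ha b) hcentral hxyx hyxy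
  have he''idem : (y * f) * (y * f) - y * f ∈ J := by
    have heq : (y * f) * (y * f) - y * f = y * (f * y * f - f) := by simp only [mul_sub, sub_mul, mul_add, add_mul, mul_assoc, mul_one, one_mul]; try abel
    rw [heq]
    exact Ideal.mul_mem_left _ y hxyx
  obtain ⟨e, he, heJ⟩ := hlift (y * f) he''idem
  have hyxe : y * f - e ∈ J := by
    have := Submodule.neg_mem _ heJ
    rwa [neg_sub] at this
  have m1 : f * y - e ∈ J := by
    have heq : f * y - e = (f * y - y * f) + (y * f - e) := by abel
    rw [heq]
    exact Submodule.add_mem _ hcomm hyxe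
  have m2 : f * e - f ∈ J := by
    have heq : f * e - f = f * (e - y * f) + (f * y * f - f) := by simp only [mul_sub, sub_mul, mul_add, add_mul, mul_assoc, mul_one, one_mul]; try abel
    rw [heq]
    exact Submodule.add_mem _ (Ideal.mul_mem_left _ f heJ) hxyx
  have m3 : e * y - y ∈ J := by
    have heq : e * y - y = (e - y * f) * y + (y * f * y - y) := by simp only [mul_sub, sub_mul, mul_add, add_mul, mul_assoc, mul_one, one_mul]; try abel
    rw [heq]
    exact Submodule.add_mem _ (jac_mul_right_s10 heJ y) hyxy
  have hecen : ∀ t : Module.End R ↥M, e * t - t * e ∈ J := by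
    intro t
    apply hcentral
    rw [he, sub_self]
    exact Submodule.zero_mem _
  have m4 : y * e - y ∈ J := by
    have heq : y * e - y = -(e * y - y * e) + (e * y - y) := by abel
    rw [heq]
    exact Submodule.add_mem _ (Submodule.neg_mem _ (hecen y)) m3
  have m5 : e * f - f ∈ J := by
    have hfe : f * e - e * f ∈ J := by
      have h2 := Submodule.neg_mem _ (hecen f)
      rwa [neg_sub] at h2
    have heq : e * f - f = -(f * e - e * f) + (f * e - f) := by abel
    rw [heq]
    exact Submodule.add_mem _ (Submodule.neg_mem _ hfe) m2
  have hee0 : e * e - e ∈ J := by rw [he, sub_self]; exact Submodule.zero_mem _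
  have huv : (f - 1 + e) * (y - 1 + e) - 1 ∈ J := by
    have heq : (f - 1 + e) * (y - 1 + e) - 1
        = (f * y - e) + (f * e - f) + (e * y - y) + (e * e - e) := by simp only [mul_sub, sub_mul, mul_add, add_mul, mul_assoc, mul_one, one_mul]; try abel
    rw [heq]
    exact Submodule.add_mem _ (Submodule.add_mem _ (Submodule.add_mem _ m1 m2) m3) hee0
  have hvu : (y - 1 + e) * (f - 1 + e) - 1 ∈ J := by
    have heq : (y - 1 + e) * (f - 1 + e) - 1
        = (y * f - e) + (y * e - y) + (e * f - f) + (e * e - e) := by simp only [mul_sub, sub_mul, mul_add, add_mul, mul_assoc, mul_one, one_mul]; try abel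
    rw [heq]
    exact Submodule.add_mem _ (Submodule.add_mem _ (Submodule.add_mem _ hyxe m4) m5) hee0
  have hufunit : IsUnit (f - 1 + e) := jac_unit_lift huv hvu
  refine ⟨1 - e, hufunit.unit, ?_, ?_⟩
  · rw [mul_sub, mul_one, sub_mul, one_mul, he, sub_self, sub_zero]
  · rw [IsUnit.unit_spec]
    abel

end Main

/-- An automorphism-invariant module M whose endomorphism ring has all idempotents
central modulo the Jacobson radical, with idempotents lifting, is a clean module:
every endomorphism is the sum of an idempotent endomorphism and an automorphism. -/
theorem stmt10 {R E : Type*} [Ring R] [AddCommGroup E] [Module R E]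
    (hE : Module.Injective R E) (M : Submodule R E)
    (hess : IsEssential M)
    (hinv : ∀ φ : E ≃ₗ[R] E, ∀ x ∈ M, φ x ∈ M)
    (hcentral : ∀ e x : Module.End R ↥M,
      e * e - e ∈ Ideal.jacobson (⊥ : Ideal (Module.End R ↥M)) →
      e * x - x * e ∈ Ideal.jacobson (⊥ : Ideal (Module.End R ↥M)))
    (hlift : ∀ e' : Module.End R ↥M,
      e' * e' - e' ∈ Ideal.jacobson (⊥ : Ideal (Module.End R ↥M)) →
      ∃ e : Module.End R ↥M, e * e = e ∧
        e - e' ∈ Ideal.jacobson (⊥ : Ideal (Module.End R ↥M))) :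
    ∀ f : Module.End R ↥M, ∃ (e : Module.End R ↥M) (u : (Module.End R ↥M)ˣ),
      e * e = e ∧ f = e + u :=
  stmt10' hE M hess hinv hcentral hlift
end

section
/- Let M be a directly-finite automorphism-invariant module. Then the injective hull E(M) is directly finite, i.e., End(E(M)) satisfies: t∘s = 1 implies s∘t = 1. -/
namespace Stmt12Aux

variable {R E : Type*} [Ring R] [AddCommGroup E] [Module R E]

/-- Elementwise essentiality of `A` in `B`. -/
def Ess (A B : Submodule R E) : Prop :=
  ∀ x ∈ B, x ≠ 0 → ∃ r : R, r • x ∈ A ∧ r • x ≠ 0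

lemma ess_refl (A : Submodule R E) : Ess A A := by
  intro x hx hx0
  exact ⟨1, by simpa using hx, by simpa using hx0⟩

lemma ess_trans {A B C : Submodule R E} (h1 : Ess A B) (h2 : Ess B C) : Ess A C := by
  intro x hx hx0
  obtain ⟨r, hr, hr0⟩ := h2 x hx hx0
  obtain ⟨r', hr', hr'0⟩ := h1 _ hr hr0
  exact ⟨r' * r, by rwa [mul_smul], by rwa [mul_smul]⟩

lemma ess_sup {A₀ B₀ A₁ B₁ : Submodule R E} (h₀ : Ess A₀ B₀) (h₁ : Ess A₁ B₁)
    (hA₀ : A₀ ≤ B₀) (hA₁ : A₁ ≤ B₁) (hd : B₀ ⊓ B₁ = ⊥) :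
    Ess (A₀ ⊔ A₁) (B₀ ⊔ B₁) := by
  intro x hx hx0
  obtain ⟨y, hy, z, hz, rfl⟩ := Submodule.mem_sup.mp hx
  by_cases hy0 : y = 0
  · subst hy0
    have hz0 : z ≠ 0 := by simpa using hx0
    obtain ⟨r, hr, hr0⟩ := h₁ z hz hz0
    exact ⟨r, by simpa using Submodule.mem_sup_right hr, by simpa using hr0⟩
  · obtain ⟨r, hrA, hr0⟩ := h₀ y hy hy0
    by_cases hz0 : r • z = 0
    · refine ⟨r, ?_, ?_⟩
      · rw [smul_add, hz0, add_zero]; exact Submodule.mem_sup_left hrA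
      · rw [smul_add, hz0, add_zero]; exact hr0
    · obtain ⟨r', hr'A, hr'0⟩ := h₁ (r • z) (Submodule.smul_mem _ _ hz) hz0
      refine ⟨r' * r, ?_, ?_⟩
      · rw [mul_smul, smul_add, smul_add]
        exact Submodule.add_mem _ (Submodule.mem_sup_left (Submodule.smul_mem _ _ hrA))
          (Submodule.mem_sup_right hr'A)
      · rw [mul_smul, smul_add, smul_add]
        intro hcon
        apply hr'0
        have hmem : r' • r • y ∈ B₀ ⊓ B₁ := by
          refine ⟨Submodule.smul_mem _ _ (Submodule.smul_mem _ _ hy), ?_⟩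
          have hx' : r' • r • y = -(r' • r • z) := by
            rw [eq_neg_iff_add_eq_zero]; exact hcon
          rw [hx']
          exact Submodule.neg_mem _ (Submodule.smul_mem _ _ (Submodule.smul_mem _ _ hz))
        rw [hd, Submodule.mem_bot] at hmem
        have h2 := hcon
        rw [hmem, zero_add] at h2
        exact h2

/-- Maximal essential extension of `A` inside `W` (Zorn). -/
lemma exists_ec (A W : Submodule R E) (hAW : A ≤ W) :
    ∃ N : Submodule R E, A ≤ N ∧ N ≤ W ∧ Ess A N ∧
      ∀ N', N ≤ N' → N' ≤ W → Ess A N' → N' = N := by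
  set S : Set (Submodule R E) := {N | A ≤ N ∧ N ≤ W ∧ Ess A N} with hS
  have hmem : A ∈ S := ⟨le_rfl, hAW, ess_refl A⟩
  have hub : ∀ c ⊆ S, IsChain (· ≤ ·) c → ∀ y ∈ c, ∃ ub ∈ S, ∀ z ∈ c, z ≤ ub := by
    intro c hcS hchain y hyc
    have hne : c.Nonempty := ⟨y, hyc⟩
    haveI : Nonempty c := hne.to_subtype
    have hdir : Directed (· ≤ ·) (fun i : c => (i : Submodule R E)) := by
      intro i j
      rcases hchain.total i.2 j.2 with h | h
      · exact ⟨j, h, le_rfl⟩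
      · exact ⟨i, le_rfl, h⟩
    refine ⟨⨆ i : c, (i : Submodule R E), ⟨?_, ?_, ?_⟩,
      fun z hz => le_iSup (fun i : c => (i : Submodule R E)) ⟨z, hz⟩⟩
    · exact (hcS hyc).1.trans (le_iSup (fun i : c => (i : Submodule R E)) ⟨y, hyc⟩)
    · exact iSup_le fun i => (hcS i.2).2.1
    · intro x hx hx0
      obtain ⟨i, hi⟩ := (Submodule.mem_iSup_of_directed _ hdir).mp hx
      exact (hcS i.2).2.2 x hi hx0
  obtain ⟨m, hle, hmax⟩ := zorn_le_nonempty₀ S hub A hmem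
  exact ⟨m, hmax.1.1, hmax.1.2.1, hmax.1.2.2,
    fun N' h1 h2 h3 => le_antisymm (hmax.2 ⟨hmax.1.1.trans h1, h2, h3⟩ h1) h1⟩

/-- Maximal submodule of `W` containing `B` and disjoint from `X` (Zorn). -/
lemma exists_compl (X B W : Submodule R E) (hBW : B ≤ W) (hXB : X ⊓ B = ⊥) :
    ∃ C, B ≤ C ∧ C ≤ W ∧ X ⊓ C = ⊥ ∧ ∀ C', C ≤ C' → C' ≤ W → X ⊓ C' = ⊥ → C' = C := by
  set S : Set (Submodule R E) := {C | B ≤ C ∧ C ≤ W ∧ X ⊓ C = ⊥} with hS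
  have hmem : B ∈ S := ⟨le_rfl, hBW, hXB⟩
  have hub : ∀ c ⊆ S, IsChain (· ≤ ·) c → ∀ y ∈ c, ∃ ub ∈ S, ∀ z ∈ c, z ≤ ub := by
    intro c hcS hchain y hyc
    have hne : c.Nonempty := ⟨y, hyc⟩
    haveI : Nonempty c := hne.to_subtype
    have hdir : Directed (· ≤ ·) (fun i : c => (i : Submodule R E)) := by
      intro i j
      rcases hchain.total i.2 j.2 with h | h
      · exact ⟨j, h, le_rfl⟩
      · exact ⟨i, le_rfl, h⟩
    refine ⟨⨆ i : c, (i : Submodule R E), ⟨?_, ?_, ?_⟩,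
      fun z hz => le_iSup (fun i : c => (i : Submodule R E)) ⟨z, hz⟩⟩
    · exact (hcS hyc).1.trans (le_iSup (fun i : c => (i : Submodule R E)) ⟨y, hyc⟩)
    · exact iSup_le fun i => (hcS i.2).2.1
    · rw [eq_bot_iff]
      rintro x ⟨hxX, hxC⟩
      obtain ⟨i, hi⟩ := (Submodule.mem_iSup_of_directed _ hdir).mp hxC
      have hbot := (hcS i.2).2.2
      rw [eq_bot_iff] at hbot
      exact hbot ⟨hxX, hi⟩
  obtain ⟨m, hle, hmax⟩ := zorn_le_nonempty₀ S hub B hmem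
  exact ⟨m, hmax.1.1, hmax.1.2.1, hmax.1.2.2,
    fun C' h1 h2 h3 => le_antisymm (hmax.2 ⟨hmax.1.1.trans h1, h2, h3⟩ h1) h1⟩

/-- From maximality of a complement: each element of `W` outside `C` can be scaled into
`X ⊕ C` with nonzero `X`-component. -/
lemma compl_step {X C W : Submodule R E}
    (hCW : C ≤ W)
    (hmax : ∀ C', C ≤ C' → C' ≤ W → X ⊓ C' = ⊥ → C' = C)
    {x : E} (hxW : x ∈ W) (hx : x ∉ C) :
    ∃ (r : R) (u : E), u ∈ X ∧ u ≠ 0 ∧ r • x - u ∈ C := by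
  set C' := C ⊔ Submodule.span R {x} with hC'
  have h1 : C ≤ C' := le_sup_left
  have h2 : C' ≤ W := sup_le hCW ((Submodule.span_singleton_le_iff_mem x W).mpr hxW)
  have hne : C' ≠ C := by
    intro h
    exact hx (h ▸ Submodule.mem_sup_right (Submodule.mem_span_singleton_self x))
  have hXC' : X ⊓ C' ≠ ⊥ := fun h => hne (hmax C' h1 h2 h)
  obtain ⟨u, huX, hu0⟩ := Submodule.exists_mem_ne_zero_of_ne_bot hXC'
  obtain ⟨c, hc, z, hz, hcz⟩ := Submodule.mem_sup.mp huX.2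
  obtain ⟨r, hr⟩ := Submodule.mem_span_singleton.mp hz
  refine ⟨r, u, huX.1, hu0, ?_⟩
  have : r • x - u = -c := by rw [hr, ← hcz]; abel
  rw [this]
  exact Submodule.neg_mem _ hc



/-- Extend a linear map defined on a submodule to all of `E`, using injectivity of `E`. -/
lemma ext1 (hE : Module.Injective R E) (A : Submodule R E) (g : ↥A →ₗ[R] E) :
    ∃ G : E →ₗ[R] E, ∀ a : ↥A, G (a : E) = g a := by
  obtain ⟨G, hG⟩ := hE.out A.subtype (Submodule.injective_subtype A) g
  exact ⟨G, hG⟩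

/-- Extend the projection `X ⊕ C → X` to all of `E`. -/
lemma ext2 (hE : Module.Injective R E) (X C : Submodule R E) (hd : X ⊓ C = ⊥) :
    ∃ H : E →ₗ[R] E, (∀ x ∈ X, H x = x) ∧ (∀ c ∈ C, H c = 0) := by
  set f : (↥X × ↥C) →ₗ[R] E := (X.subtype).coprod (C.subtype) with hf_def
  have hker : ∀ p : ↥X × ↥C, f p = 0 → p = 0 := by
    rintro ⟨a, b⟩ hp
    have hab : (a : E) + (b : E) = 0 := hp
    have ha : (a : E) ∈ X ⊓ C := by
      refine ⟨a.2, ?_⟩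
      have : (a : E) = -(b : E) := eq_neg_of_add_eq_zero_left hab
      rw [this]; exact Submodule.neg_mem _ b.2
    rw [hd, Submodule.mem_bot] at ha
    have hb : (b : E) = 0 := by
      have := hab; rw [ha, zero_add] at this; exact this
    ext
    · exact ha
    · exact hb
  have hf : Function.Injective f := by
    intro p q hpq
    have h0 : f (p - q) = 0 := by rw [map_sub, hpq, sub_self]
    have := hker _ h0
    exact sub_eq_zero.mp this
  obtain ⟨H, hH⟩ := hE.out f hf (X.subtype.comp (LinearMap.fst R ↥X ↥C))
  refine ⟨H, fun x hx => ?_, fun c hc => ?_⟩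
  · have := hH (⟨x, hx⟩, 0)
    simpa [hf_def] using this
  · have := hH (0, ⟨c, hc⟩)
    simpa [hf_def] using this



/-- Projection package: given a maximal essential extension `X` of `A` inside `W`,
a maximal complement `C` of `X` in `W`, and an idempotent-like map `π` onto `W`,
produce a projection onto `X` vanishing on `C`. -/
lemma proj_pkg (hE : Module.Injective R E)
    (A X C W : Submodule R E)
    (hAX : A ≤ X) (hXW : X ≤ W) (hCW : C ≤ W)
    (hessAX : Ess A X)
    (hXmax : ∀ N', X ≤ N' → N' ≤ W → Ess A N' → N' = X)
    (hdisj : X ⊓ C = ⊥)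
    (hCmax : ∀ C', C ≤ C' → C' ≤ W → X ⊓ C' = ⊥ → C' = C)
    (π : E →ₗ[R] E) (hπW : ∀ x, π x ∈ W) (hπid : ∀ x ∈ W, π x = x) :
    ∃ p : E →ₗ[R] E,
      (∀ x ∈ X, p x = x) ∧ (∀ c ∈ C, p c = 0) ∧ (∀ x, p x ∈ X) ∧
      (∀ x ∈ W, x - p x ∈ C) ∧ (∀ x, π x = 0 → p x = 0) := by
  obtain ⟨H, hHX, hHC⟩ := ext2 hE X C hdisj
  set p : E →ₗ[R] E := π.comp (H.comp π) with hp_def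
  have hp_apply : ∀ x, p x = π (H (π x)) := fun x => rfl
  have hc1 : ∀ x ∈ X, p x = x := by
    intro x hx
    rw [hp_apply, hπid x (hXW hx), hHX x hx, hπid x (hXW hx)]
  have hc2 : ∀ c ∈ C, p c = 0 := by
    intro c hc
    rw [hp_apply, hπid c (hCW hc), hHC c hc, map_zero]
  have hc8 : ∀ x, π x = 0 → p x = 0 := by
    intro x hx
    rw [hp_apply, hx, map_zero, map_zero]
  have hpW : ∀ x, p x ∈ W := fun x => hπW _
  -- key essentiality fact for the range of p
  have hkey : ∀ x, p x ≠ 0 → ∃ r : R, r • p x ∈ X ∧ r • p x ≠ 0 := by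
    intro x hpx
    set w := π x with hw
    have hwW : w ∈ W := hπW x
    have hwC : w ∉ C := by
      intro hwC
      exact hpx (by rw [hp_apply, ← hw, hHC w hwC, map_zero])
    obtain ⟨r, u, huX, hu0, hrc⟩ := compl_step hCW hCmax hwW hwC
    refine ⟨r, ?_, ?_⟩
    · have : r • p x = u := by
        rw [hp_apply, ← hw, ← map_smul, ← map_smul]
        have hd : r • w = u + (r • w - u) := by abel
        rw [hd, map_add, hHX u huX, hHC _ hrc, add_zero, hπid u (hXW huX)]
      rw [this]; exact huX
    · have : r • p x = u := by
        rw [hp_apply, ← hw, ← map_smul, ← map_smul]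
        have hd : r • w = u + (r • w - u) := by abel
        rw [hd, map_add, hHX u huX, hHC _ hrc, add_zero, hπid u (hXW huX)]
      rw [this]; exact hu0
  -- the range of p equals X
  have hrange : LinearMap.range p = X := by
    apply hXmax
    · intro x hx
      exact ⟨x, hc1 x hx⟩
    · rintro y ⟨x, rfl⟩
      exact hpW x
    · refine ess_trans hessAX ?_
      rintro y ⟨x, rfl⟩ hy0
      exact hkey x hy0
  have hc5 : ∀ x, p x ∈ X := by
    intro x
    rw [← hrange]
    exact ⟨x, rfl⟩
  have hc7 : ∀ x ∈ W, x - p x ∈ C := by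
    intro x hx
    have hker : LinearMap.ker p ⊓ W = C := by
      apply hCmax
      · intro c hc
        exact ⟨by simpa [LinearMap.mem_ker] using hc2 c hc, hCW hc⟩
      · exact inf_le_right
      · rw [eq_bot_iff]
        rintro z ⟨hzX, hzk, _⟩
        rw [Submodule.mem_bot]
        have := hc1 z hzX
        rw [LinearMap.mem_ker.mp hzk] at this
        exact this.symm
    rw [← hker]
    refine ⟨LinearMap.mem_ker.mpr ?_, Submodule.sub_mem _ hx (hXW (hc5 x))⟩
    rw [map_sub]
    have hpp : p (p x) = p x := hc1 _ (hc5 x)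
    rw [hpp, sub_self]
  exact ⟨p, hc1, hc2, hc5, hc7, hc8⟩

/-- A square-zero endomorphism maps `M` into itself, since `1 + g` is an automorphism. -/
lemma pre_of_sq_zero {M : Submodule R E} (hinv : ∀ φ : E ≃ₗ[R] E, ∀ x ∈ M, φ x ∈ M)
    (g : E →ₗ[R] E) (hg : ∀ x, g (g x) = 0) : ∀ x ∈ M, g x ∈ M := by
  have h1 : ((LinearMap.id : E →ₗ[R] E) + g).comp ((LinearMap.id : E →ₗ[R] E) - g)
      = LinearMap.id := by
    ext x
    simp [map_sub, hg x]
  have h2 : ((LinearMap.id : E →ₗ[R] E) - g).comp ((LinearMap.id : E →ₗ[R] E) + g)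
      = LinearMap.id := by
    ext x
    simp [map_add, hg x]
  set φ := LinearEquiv.ofLinear _ _ h1 h2 with hφ
  intro x hx
  have hmem := hinv φ x hx
  have hφx : φ x = x + g x := rfl
  rw [hφx] at hmem
  have := M.sub_mem hmem hx
  simpa using this

end Stmt12Aux



open Stmt12Aux in
/-- If a directly-finite module M is automorphism-invariant, then its injective
hull E is directly finite. -/
theorem stmt12 {R E : Type*} [Ring R] [AddCommGroup E] [Module R E]
    (hE : Module.Injective R E) (M : Submodule R E)
    (hess : IsEssential M)
    (hinv : ∀ φ : E ≃ₗ[R] E, ∀ x ∈ M, φ x ∈ M)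
    (hdf : ∀ x y : Module.End R ↥M, x * y = 1 → y * x = 1) :
    ∀ s t : Module.End R E, t * s = 1 → s * t = 1 := by
  classical
  intro s t hts
  have ht : ∀ x, t (s x) = x := by
    intro x
    have h := LinearMap.ext_iff.mp hts x
    simpa [Module.End.mul_apply] using h
  have hsinj : ∀ x, s x = 0 → x = 0 := by
    intro x hx
    rw [← ht x, hx, map_zero]
  set K := LinearMap.ker t with hK_def
  suffices hker : K = ⊥ by
    ext x
    have h0 : t (s (t x) - x) = 0 := by rw [map_sub, ht (t x), sub_self]
    have hmem : s (t x) - x ∈ K := LinearMap.mem_ker.mpr h0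
    rw [hker, Submodule.mem_bot, sub_eq_zero] at hmem
    simpa [Module.End.mul_apply] using hmem
  -- the chain of submodules sⁿ(K)
  set Uev : Submodule R E := ⨆ n : ℕ, K.map ((s ^ (2 * n) : Module.End R E)) with hUev_def
  set Uod : Submodule R E := ⨆ n : ℕ, K.map ((s ^ (2 * n + 1) : Module.End R E)) with hUod_def
  set Q : Module.End R E := 1 - s * t with hQ_def
  have hQs : ∀ x, Q (s x) = 0 := by
    intro x
    simp [hQ_def, LinearMap.sub_apply, Module.End.mul_apply, Module.End.one_apply, ht]
  have hQK : ∀ k ∈ K, Q k = k := by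
    intro k hk
    have htk : t k = 0 := hk
    simp [hQ_def, LinearMap.sub_apply, Module.End.mul_apply, Module.End.one_apply, htk]
  have pow_mul_apply : ∀ (f : Module.End R E) (a b : ℕ) (x : E),
      (f ^ (a + b)) x = (f ^ a) ((f ^ b) x) := by
    intro f a b x
    rw [pow_add]
    rfl
  have hts_pow : ∀ (n : ℕ) (x : E), (t ^ n) ((s ^ n) x) = x := by
    intro n
    induction n with
    | zero => intro x; simp
    | succ n ih =>
      intro x
      have h1 : (s ^ (n + 1)) x = s ((s ^ n) x) := by rw [pow_succ']; rfl
      have h2 : ∀ y, (t ^ (n + 1)) y = (t ^ n) (t y) := by intro y; rw [pow_succ]; rfl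
      rw [h1, h2, ← h1]
      have h3 : t (s ((s ^ n) x)) = (s ^ n) x := ht _
      rw [h1, h3, ih]
  -- coefficient extraction
  have coeff : ∀ (m : ℕ) (y : E), y ∈ K.map ((s ^ m : Module.End R E)) →
      (s ^ m) (Q ((t ^ m) y)) = y ∧ (∀ j : ℕ, j ≠ m → Q ((t ^ j) y) = 0) := by
    intro m y hy
    obtain ⟨k, hk, rfl⟩ := Submodule.mem_map.mp hy
    constructor
    · rw [hts_pow m k, hQK k hk]
    · intro j hj
      rcases lt_or_gt_of_ne hj with hlt | hgt
      · obtain ⟨d, rfl⟩ : ∃ d, m = j + (d + 1) := ⟨m - j - 1, by omega⟩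
        rw [pow_mul_apply s j (d + 1) k, hts_pow j ((s ^ (d + 1)) k)]
        have h4 : (s ^ (d + 1)) k = s ((s ^ d) k) := by rw [pow_succ']; rfl
        rw [h4, hQs]
      · obtain ⟨d, rfl⟩ : ∃ d, j = (d + 1) + m := ⟨j - m - 1, by omega⟩
        rw [pow_mul_apply t (d + 1) m ((s ^ m) k), hts_pow m k]
        have h5 : (t ^ (d + 1)) k = (t ^ d) (t k) := by rw [pow_succ]; rfl
        have h6 : t k = 0 := hk
        rw [h5, h6, map_zero, map_zero]
  -- independence of the even and odd parts
  have hdisjUU : Uev ⊓ Uod = ⊥ := by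
    rw [eq_bot_iff]
    rintro x ⟨hxe, hxo⟩
    rw [Submodule.mem_bot]
    have hev0 : ∀ i : ℕ, Q ((t ^ (2 * i + 1)) x) = 0 := by
      intro i
      have hle : Uev ≤ LinearMap.ker ((Q : E →ₗ[R] E).comp ((t ^ (2 * i + 1) : Module.End R E))) := by
        rw [hUev_def]
        apply iSup_le
        intro n
        rintro y hy
        exact LinearMap.mem_ker.mpr ((coeff (2 * n) y hy).2 (2 * i + 1) (by omega))
      exact LinearMap.mem_ker.mp (hle hxe)
    obtain ⟨f, hf, hsum⟩ := (Submodule.mem_iSup_iff_exists_finsupp _ x).mp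
      (by rw [hUod_def] at hxo; exact hxo)
    have hterm : ∀ i : ℕ, Q ((t ^ (2 * i + 1)) (f i)) = 0 := by
      intro i
      by_cases hi : i ∈ f.support
      · have h2 : Q ((t ^ (2 * i + 1)) x) = ∑ i' ∈ f.support, Q ((t ^ (2 * i + 1)) (f i')) := by
          rw [← hsum, Finsupp.sum, map_sum, map_sum]
        have h3 := hev0 i
        rw [h2, Finset.sum_eq_single i
          (fun b _ hbi => (coeff (2 * b + 1) (f b) (hf b)).2 (2 * i + 1) (by omega))
          (fun hno => absurd hi hno)] at h3
        exact h3
      · rw [Finsupp.notMem_support_iff.mp hi, map_zero, map_zero]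
    have hfi : ∀ i, f i = 0 := by
      intro i
      have h4 := (coeff (2 * i + 1) (f i) (hf i)).1
      rw [hterm i, map_zero] at h4
      exact h4.symm
    rw [← hsum, Finsupp.sum]
    exact Finset.sum_eq_zero fun i _ => by rw [hfi i]
  -- mapping facts
  have hmap_ev : ∀ n : ℕ, Submodule.map (s : E →ₗ[R] E) (K.map (s ^ (2 * n)))
      = K.map (s ^ (2 * n + 1)) := by
    intro n
    rw [← Submodule.map_comp, ← Module.End.mul_eq_comp, ← pow_succ']
  have hmap_od : ∀ n : ℕ, Submodule.map (s : E →ₗ[R] E) (K.map (s ^ (2 * n + 1)))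
      = K.map (s ^ (2 * (n + 1))) := by
    intro n
    have h2 : 2 * (n + 1) = 2 * n + 1 + 1 := by omega
    rw [h2, ← Submodule.map_comp, ← Module.End.mul_eq_comp, ← pow_succ']
  have hsUev : ∀ u ∈ Uev, s u ∈ Uod := by
    intro u hu
    have hm : Submodule.map (s : E →ₗ[R] E) Uev ≤ Uod := by
      rw [hUev_def, Submodule.map_iSup]
      apply iSup_le
      intro n
      rw [hmap_ev n, hUod_def]
      exact le_iSup (fun n => K.map ((s ^ (2 * n + 1) : Module.End R E))) n
    exact hm (Submodule.mem_map_of_mem hu)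
  have hsUod : ∀ u ∈ Uod, s u ∈ Uev := by
    intro u hu
    have hm : Submodule.map (s : E →ₗ[R] E) Uod ≤ Uev := by
      rw [hUod_def, Submodule.map_iSup]
      apply iSup_le
      intro n
      rw [hmap_od n, hUev_def]
      exact le_iSup (fun n => K.map ((s ^ (2 * n) : Module.End R E))) (n + 1)
    exact hm (Submodule.mem_map_of_mem hu)
  have hodlift : ∀ w ∈ Uod, ∃ u ∈ Uev, s u = w := by
    intro w hw
    have hm : Uod ≤ Submodule.map (s : E →ₗ[R] E) Uev := by
      rw [hUod_def]
      apply iSup_le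
      intro n
      rw [← hmap_ev n]
      apply Submodule.map_mono
      rw [hUev_def]
      exact le_iSup (fun n => K.map ((s ^ (2 * n) : Module.End R E))) n
    obtain ⟨u, hu, huw⟩ := Submodule.mem_map.mp (hm hw)
    exact ⟨u, hu, huw⟩
  have hKUev : K ≤ Uev := by
    intro k hk
    have hk0 : k ∈ K.map ((s ^ (2 * 0) : Module.End R E)) := by
      refine ⟨k, hk, ?_⟩
      norm_num
    rw [hUev_def]
    exact le_iSup (fun n => K.map ((s ^ (2 * n) : Module.End R E))) 0 hk0
  -- essential closures and complements
  obtain ⟨U0, hUevU0, _, hessev, hU0max⟩ := exists_ec Uev ⊤ le_top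
  have hU0od : U0 ⊓ Uod = ⊥ := by
    rw [eq_bot_iff]
    rintro x ⟨hx0, hxod⟩
    rw [Submodule.mem_bot]
    by_contra hx
    obtain ⟨r, hr, hr0⟩ := hessev x hx0 hx
    have hmem : r • x ∈ Uev ⊓ Uod := ⟨hr, Submodule.smul_mem _ _ hxod⟩
    rw [hdisjUU, Submodule.mem_bot] at hmem
    exact hr0 hmem
  obtain ⟨C, hUodC, _, hU0C, hCmax⟩ := exists_compl U0 Uod ⊤ le_top hU0od
  obtain ⟨P0, hP0X, hP0C, hP0mem, hP0sub, _⟩ :=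
    proj_pkg hE Uev U0 C ⊤ hUevU0 le_top le_top hessev hU0max hU0C hCmax
      LinearMap.id (fun _ => trivial) (fun _ _ => rfl)
  obtain ⟨U1, hUodU1, hU1C, hessod, hU1max⟩ := exists_ec Uod C hUodC
  obtain ⟨D, _, hDC, hU1D, hDmax⟩ := exists_compl U1 ⊥ C bot_le (by simp)
  set π₁ : E →ₗ[R] E := LinearMap.id - P0 with hπ₁_def
  have hπ₁_apply : ∀ x, π₁ x = x - P0 x := fun x => rfl
  have hπ₁W : ∀ x, π₁ x ∈ C := by
    intro x
    rw [hπ₁_apply]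
    exact hP0sub x trivial
  have hπ₁id : ∀ x ∈ C, π₁ x = x := by
    intro x hx
    rw [hπ₁_apply, hP0C x hx, sub_zero]
  obtain ⟨P1, hP1X, hP1D, hP1mem, hP1sub, hP1z⟩ :=
    proj_pkg hE Uod U1 D C hUodU1 hU1C hDC hessod hU1max hU1D hDmax π₁ hπ₁W hπ₁id
  -- projection algebra
  have hP0idem : ∀ x, P0 (P0 x) = P0 x := fun x => hP0X _ (hP0mem x)
  have hP1P0 : ∀ x, P1 (P0 x) = 0 := by
    intro x
    apply hP1z
    rw [hπ₁_apply, hP0idem, sub_self]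
  have hP0P1 : ∀ x, P0 (P1 x) = 0 := fun x => hP0C _ (hU1C (hP1mem x))
  have hP1idem : ∀ x, P1 (P1 x) = P1 x := fun x => hP1X _ (hP1mem x)
  set PV : E →ₗ[R] E := LinearMap.id - P0 - P1 with hPV_def
  have hPV_apply : ∀ x, PV x = x - P0 x - P1 x := fun x => rfl
  have hPVD : ∀ x, PV x ∈ D := by
    intro x
    have hz : x - P0 x ∈ C := hP0sub x trivial
    have h5 : PV x = (x - P0 x) - P1 (x - P0 x) := by
      rw [hPV_apply, map_sub, hP1P0, sub_zero]
    rw [h5]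
    exact hP1sub _ hz
  have hPVid : ∀ d ∈ D, PV d = d := by
    intro d hd
    rw [hPV_apply, hP0C d (hDC hd), hP1D d hd, sub_zero, sub_zero]
  set PU : E →ₗ[R] E := P0 + P1 with hPU_def
  have hPU_apply : ∀ x, PU x = P0 x + P1 x := fun x => rfl
  have hPUidem : ∀ x, PU (PU x) = PU x := by
    intro x
    rw [hPU_apply, hPU_apply, map_add, map_add, hP0idem, hP0P1, hP1P0, hP1idem]
    abel
  have hPUU0 : ∀ a ∈ U0, PU a = a := by
    intro a ha
    have hP1a : P1 a = 0 := by
      apply hP1z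
      rw [hπ₁_apply, hP0X a ha, sub_self]
    rw [hPU_apply, hP0X a ha, hP1a, add_zero]
  have hPUU1 : ∀ b ∈ U1, PU b = b := by
    intro b hb
    rw [hPU_apply, hP0C b (hU1C hb), hP1X b hb, zero_add]
  have hPUU : ∀ u ∈ Uev ⊔ Uod, PU u = u := by
    intro u hu
    obtain ⟨a, ha, b, hb, rfl⟩ := Submodule.mem_sup.mp hu
    rw [map_add, hPUU0 a (hUevU0 ha), hPUU1 b (hUodU1 hb)]
  have hPUPV : ∀ x, PU (PV x) = 0 := by
    intro x
    have hd := hPVD x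
    rw [hPU_apply, hP0C _ (hDC hd), hP1D _ hd, add_zero]
  have hPVPU : ∀ x, PV (PU x) = 0 := by
    intro x
    rw [hPV_apply, hPU_apply, map_add, map_add, hP0idem, hP0P1, hP1P0, hP1idem]
    abel
  have hPUD : ∀ d ∈ D, PU d = 0 := by
    intro d hd
    rw [hPU_apply, hP0C d (hDC hd), hP1D d hd, add_zero]
  -- partner transfer maps
  obtain ⟨G1, hG1⟩ := ext1 hE Uev ((s : E →ₗ[R] E).comp Uev.subtype)
  have hG1' : ∀ u (hu : u ∈ Uev), G1 u = s u := fun u hu => hG1 ⟨u, hu⟩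
  set Sh : E →ₗ[R] E := P1.comp (G1.comp P0) with hSh_def
  have hSh_apply : ∀ x, Sh x = P1 (G1 (P0 x)) := fun x => rfl
  have hSh_sq : ∀ x, Sh (Sh x) = 0 := by
    intro x
    rw [hSh_apply, hSh_apply, hP0P1, map_zero, map_zero]
  have hSh_ev : ∀ u ∈ Uev, Sh u = s u := by
    intro u hu
    rw [hSh_apply, hP0X u (hUevU0 hu), hG1' u hu, hP1X _ (hUodU1 (hsUev u hu))]
  have hSh_injU0 : ∀ x ∈ U0, Sh x = 0 → x = 0 := by
    intro x hx hx0
    by_contra hxne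
    obtain ⟨r, hr, hr0⟩ := hessev x hx hxne
    have h7 : Sh (r • x) = 0 := by rw [map_smul, hx0, smul_zero]
    rw [hSh_ev _ hr] at h7
    exact hr0 (hsinj _ h7)
  set f : ↥U0 →ₗ[R] E := Sh.comp U0.subtype with hf_def
  have hf_apply : ∀ u : ↥U0, f u = Sh (u : E) := fun u => rfl
  have hfinj : Function.Injective f := by
    intro a b hab
    have h8 : Sh ((a : E) - (b : E)) = 0 := by
      rw [map_sub, ← hf_apply, ← hf_apply, hab, sub_self]
    have h9 := hSh_injU0 _ (Submodule.sub_mem _ a.2 b.2) h8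
    exact Subtype.ext (sub_eq_zero.mp h9)
  set e2 := LinearEquiv.ofInjective f hfinj with he2_def
  obtain ⟨G2, hG2⟩ := ext1 hE (LinearMap.range f) (U0.subtype.comp e2.symm.toLinearMap)
  have hG2f : ∀ u : ↥U0, G2 (f u) = (u : E) := by
    intro u
    have hmem : f u ∈ LinearMap.range f := LinearMap.mem_range_self f u
    have h := hG2 ⟨f u, hmem⟩
    have he : e2 u = ⟨f u, hmem⟩ := Subtype.ext (by rw [LinearEquiv.ofInjective_apply])
    rw [← he] at h
    simp [LinearEquiv.symm_apply_apply] at h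
    rwa [he] at h
  have hShf : ∀ x, Sh x = f ⟨P0 x, hP0mem x⟩ := by
    intro x
    rw [hf_apply]
    show Sh x = Sh (P0 x)
    rw [hSh_apply, hSh_apply, hP0idem]
  set Sh' : E →ₗ[R] E := P0.comp (G2.comp P1) with hSh'_def
  have hSh'_apply : ∀ x, Sh' x = P0 (G2 (P1 x)) := fun x => rfl
  have hSh'_sq : ∀ x, Sh' (Sh' x) = 0 := by
    intro x
    rw [hSh'_apply, hSh'_apply, hP1P0, map_zero, map_zero]
  have hS'S : ∀ x, Sh' (Sh x) = P0 x := by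
    intro x
    have h1 : P1 (Sh x) = Sh x := by rw [hSh_apply]; exact hP1idem _
    rw [hSh'_apply, h1, hShf x, hG2f]
    exact hP0idem x
  have hSh_mem_range : ∀ x, Sh x ∈ LinearMap.range f := by
    intro x
    exact ⟨⟨P0 x, hP0mem x⟩, (hShf x).symm⟩
  have hfix : ∀ z ∈ LinearMap.range f, Sh (G2 z) = z := by
    rintro z ⟨u, rfl⟩
    rw [hG2f]
    rfl
  have hUod_rf : ∀ w ∈ Uod, w ∈ LinearMap.range f := by
    intro w hw
    obtain ⟨u, hu, rfl⟩ := hodlift w hw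
    exact ⟨⟨u, hUevU0 hu⟩, by rw [hf_apply]; exact hSh_ev u hu⟩
  have hSh_memU1 : ∀ x, Sh x ∈ U1 := by
    intro x
    rw [hSh_apply]
    exact hP1mem _
  have hontoU1 : ∀ w ∈ U1, w ∈ LinearMap.range f := by
    intro w hw
    set d := w - Sh (G2 w) with hd_def
    have hdU1 : d ∈ U1 := Submodule.sub_mem _ hw (hSh_memU1 _)
    have hd0 : Sh (G2 d) = 0 := by
      rw [hd_def, map_sub, map_sub, hfix _ (hSh_mem_range (G2 w)), sub_self]
    by_cases hdz : d = 0
    · rw [hd_def] at hdz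
      have hw' : w = Sh (G2 w) := by
        have := sub_eq_zero.mp hdz
        exact this
      rw [hw']
      exact hSh_mem_range (G2 w)
    · exfalso
      obtain ⟨r, hr, hr0⟩ := hessod d hdU1 hdz
      have h1 : Sh (G2 (r • d)) = r • d := hfix _ (hUod_rf _ hr)
      rw [map_smul, map_smul, hd0, smul_zero] at h1
      exact hr0 h1.symm
  have hSS' : ∀ x, Sh (Sh' x) = P1 x := by
    intro x
    obtain ⟨u, hu⟩ := hontoU1 (P1 x) (hP1mem x)
    rw [hSh'_apply, ← hu, hG2f, hP0X _ u.2]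
    rfl

  -- membership-preservation catalogue
  have pre01 : ∀ (g : E →ₗ[R] E), ∀ x ∈ M, P0 (g (P1 x)) ∈ M := by
    intro g
    exact pre_of_sq_zero hinv (P0.comp (g.comp P1))
      (fun x => by
        show P0 (g (P1 (P0 (g (P1 x))))) = 0
        rw [hP1P0, map_zero, map_zero])
  have pre10 : ∀ (g : E →ₗ[R] E), ∀ x ∈ M, P1 (g (P0 x)) ∈ M := by
    intro g
    exact pre_of_sq_zero hinv (P1.comp (g.comp P0))
      (fun x => by
        show P1 (g (P0 (P1 (g (P0 x))))) = 0
        rw [hP0P1, map_zero, map_zero])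
  have preSh : ∀ x ∈ M, Sh x ∈ M := pre_of_sq_zero hinv Sh hSh_sq
  have preSh' : ∀ x ∈ M, Sh' x ∈ M := pre_of_sq_zero hinv Sh' hSh'_sq
  have pre00 : ∀ (g : E →ₗ[R] E), ∀ x ∈ M, P0 (g (P0 x)) ∈ M := by
    intro g
    have k1 : ∀ x ∈ M, ((P0.comp (g.comp P0)).comp Sh') x ∈ M := by
      apply pre_of_sq_zero hinv
      intro x
      show P0 (g (P0 (Sh' (P0 (g (P0 (Sh' x))))))) = 0
      rw [show ∀ z, Sh' (P0 z) = 0 from fun z => by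
        rw [hSh'_apply, hP1P0, map_zero, map_zero]]
      rw [map_zero, map_zero, map_zero]
    intro x hx
    have h2 : ((P0.comp (g.comp P0)).comp Sh') (Sh x) = P0 (g (P0 x)) := by
      show P0 (g (P0 (Sh' (Sh x)))) = P0 (g (P0 x))
      rw [hS'S, hP0idem]
    exact h2 ▸ k1 (Sh x) (preSh x hx)
  have pre11 : ∀ (g : E →ₗ[R] E), ∀ x ∈ M, P1 (g (P1 x)) ∈ M := by
    intro g
    have k1 : ∀ x ∈ M, (Sh'.comp (P1.comp (g.comp P1))) x ∈ M := by
      apply pre_of_sq_zero hinv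
      intro x
      show Sh' (P1 (g (P1 (Sh' (P1 (g (P1 x))))))) = 0
      rw [show ∀ z, P1 (Sh' z) = 0 from fun z => by
        rw [hSh'_apply, hP1P0]]
      rw [map_zero, map_zero, map_zero]
    intro x hx
    have h2 : Sh ((Sh'.comp (P1.comp (g.comp P1))) x) = P1 (g (P1 x)) := by
      show Sh (Sh' (P1 (g (P1 x)))) = P1 (g (P1 x))
      rw [hSS', hP1idem]
    exact h2 ▸ preSh _ (k1 x hx)
  have preP0 : ∀ x ∈ M, P0 x ∈ M := by
    intro x hx
    have h := pre00 LinearMap.id x hx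
    simpa [hP0idem] using h
  have preP1 : ∀ x ∈ M, P1 x ∈ M := by
    intro x hx
    have h := pre11 LinearMap.id x hx
    simpa [hP1idem] using h
  have prePV : ∀ x ∈ M, PV x ∈ M := by
    intro x hx
    rw [hPV_apply]
    exact M.sub_mem (M.sub_mem hx (preP0 x hx)) (preP1 x hx)
  have precorner : ∀ (g : E →ₗ[R] E), ∀ x ∈ M, PU (g (PU x)) ∈ M := by
    intro g x hx
    have hexp : PU (g (PU x)) =
        P0 (g (P0 x)) + P0 (g (P1 x)) + (P1 (g (P0 x)) + P1 (g (P1 x))) := by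
      rw [hPU_apply, hPU_apply, map_add, map_add, map_add]
    rw [hexp]
    exact M.add_mem (M.add_mem (pre00 g x hx) (pre01 g x hx))
      (M.add_mem (pre10 g x hx) (pre11 g x hx))
  -- the corner versions of s and t
  set sh : E →ₗ[R] E := PU.comp ((s : E →ₗ[R] E).comp PU) with hsh_def
  set th : E →ₗ[R] E := PU.comp ((t : E →ₗ[R] E).comp PU) with hth_def
  have hsh_apply : ∀ x, sh x = PU (s (PU x)) := fun x => rfl
  have hth_apply : ∀ x, th x = PU (t (PU x)) := fun x => rfl
  have presh : ∀ x ∈ M, sh x ∈ M := fun x hx => precorner (s : E →ₗ[R] E) x hx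
  have preth : ∀ x ∈ M, th x ∈ M := fun x hx => precorner (t : E →ₗ[R] E) x hx
  set jh : E →ₗ[R] E := th.comp sh - PU with hjh_def
  have hjh_apply : ∀ x, jh x = th (sh x) - PU x := fun x => rfl
  have hjU : ∀ u ∈ Uev ⊔ Uod, jh u = 0 := by
    intro u hu
    have hsu : s u ∈ Uev ⊔ Uod := by
      obtain ⟨a, ha, b, hb, rfl⟩ := Submodule.mem_sup.mp hu
      rw [map_add]
      exact Submodule.add_mem _ (Submodule.mem_sup_right (hsUev a ha))
        (Submodule.mem_sup_left (hsUod b hb))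
    rw [hjh_apply, hsh_apply, hth_apply, hPUU u hu, hPUU _ hsu, hPUU _ hsu, ht, hPUU u hu,
      sub_self]
  have hjD : ∀ d ∈ D, jh d = 0 := by
    intro d hd
    simp [hjh_apply, hsh_apply, hth_apply, hPUD d hd]
  have hjUD : ∀ w ∈ (Uev ⊔ Uod) ⊔ D, jh w = 0 := by
    intro w hw
    obtain ⟨a, ha, b, hb, rfl⟩ := Submodule.mem_sup.mp hw
    rw [map_add, hjU a ha, hjD b hb, add_zero]
  -- total essentiality
  have hU0U1 : U0 ⊓ U1 = ⊥ := by
    rw [eq_bot_iff]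
    rintro x ⟨hx0, hx1⟩
    have hmem : x ∈ U0 ⊓ C := ⟨hx0, hU1C hx1⟩
    rw [hU0C] at hmem
    exact hmem
  have essUU : Ess (Uev ⊔ Uod) (U0 ⊔ U1) := ess_sup hessev hessod hUevU0 hUodU1 hU0U1
  have hUUD : (U0 ⊔ U1) ⊓ D = ⊥ := by
    rw [eq_bot_iff]
    rintro x ⟨hx01, hxD⟩
    obtain ⟨a, ha, b, hb, rfl⟩ := Submodule.mem_sup.mp hx01
    have haC : a ∈ C := by
      have h10 : a = (a + b) - b := by abel
      rw [h10]
      exact Submodule.sub_mem _ (hDC hxD) (hU1C hb)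
    have ha0 : a = 0 := by
      have hmem : a ∈ U0 ⊓ C := ⟨ha, haC⟩
      rw [hU0C] at hmem
      exact hmem
    subst ha0
    rw [zero_add] at hxD ⊢
    have hmem : b ∈ U1 ⊓ D := ⟨hb, hxD⟩
    rw [hU1D] at hmem
    exact hmem
  have htop : (U0 ⊔ U1) ⊔ D = ⊤ := by
    rw [eq_top_iff]
    intro x _
    have hx : x = P0 x + P1 x + PV x := by
      rw [hPV_apply]
      abel
    rw [hx]
    exact Submodule.add_mem _
      (Submodule.mem_sup_left (Submodule.mem_sup.mpr
        ⟨P0 x, hP0mem x, P1 x, hP1mem x, rfl⟩))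
      (Submodule.mem_sup_right (hPVD x))
  have essTot : Ess ((Uev ⊔ Uod) ⊔ D) ⊤ := by
    have h := ess_sup essUU (ess_refl D) (sup_le_sup hUevU0 hUodU1) le_rfl hUUD
    rw [htop] at h
    exact h
  -- the unit 1 + jh
  set η : E →ₗ[R] E := LinearMap.id + jh with hη_def
  have hη_apply : ∀ x, η x = x + jh x := fun x => rfl
  have hηUD : ∀ w ∈ (Uev ⊔ Uod) ⊔ D, η w = w := by
    intro w hw
    rw [hη_apply, hjUD w hw, add_zero]
  have hηinj0 : ∀ x, η x = 0 → x = 0 := by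
    intro x hx
    by_contra hx0
    obtain ⟨r, hr, hr0⟩ := essTot x trivial hx0
    have h1 : η (r • x) = r • x := hηUD _ hr
    rw [map_smul, hx, smul_zero] at h1
    exact hr0 h1.symm
  have hηinj : Function.Injective η := by
    intro a b hab
    have h1 : η (a - b) = 0 := by rw [map_sub, hab, sub_self]
    have := hηinj0 _ h1
    exact sub_eq_zero.mp this
  set e3 := LinearEquiv.ofInjective η hηinj with he3_def
  obtain ⟨G3, hG3⟩ := ext1 hE (LinearMap.range η) e3.symm.toLinearMap
  have hG3η : ∀ x, G3 (η x) = x := by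
    intro x
    have hmem : η x ∈ LinearMap.range η := LinearMap.mem_range_self η x
    have h := hG3 ⟨η x, hmem⟩
    have he : e3 x = ⟨η x, hmem⟩ := Subtype.ext (by rw [LinearEquiv.ofInjective_apply])
    rw [← he] at h
    simp [LinearEquiv.symm_apply_apply] at h
    rwa [he] at h
  have hηG3 : ∀ x, η (G3 x) = x := by
    intro x
    have hfix3 : ∀ z ∈ LinearMap.range η, η (G3 z) = z := by
      rintro z ⟨w, rfl⟩
      rw [hG3η]
    set d := x - η (G3 x) with hd_def
    have hd0 : η (G3 d) = 0 := by
      rw [hd_def, map_sub, map_sub, hfix3 _ (LinearMap.mem_range_self η (G3 x)), sub_self]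
    by_cases hdz : d = 0
    · rw [hd_def] at hdz
      have := sub_eq_zero.mp hdz
      exact this.symm
    · exfalso
      obtain ⟨r, hr, hr0⟩ := essTot d trivial hdz
      have h1 : η (G3 (r • d)) = r • d := hfix3 _ ⟨r • d, hηUD _ hr⟩
      rw [map_smul, map_smul, hd0, smul_zero] at h1
      exact hr0 h1.symm
  set ηeq := LinearEquiv.ofLinear η G3 (LinearMap.ext hηG3) (LinearMap.ext hG3η) with hηeq_def
  have preG3 : ∀ x ∈ M, G3 x ∈ M := by
    intro x hx
    have h := hinv ηeq.symm x hx
    simpa [hηeq_def, LinearEquiv.ofLinear_symm_apply] using h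
  -- the final pair
  set xh : E →ₗ[R] E := G3.comp th with hxh_def
  have hxh_apply : ∀ x, xh x = G3 (th x) := fun x => rfl
  have prexh : ∀ x ∈ M, xh x ∈ M := fun x hx => preG3 _ (preth x hx)
  have hxs : ∀ z, xh (sh z) = PU z := by
    intro z
    have h1 : th (sh z) = η (PU z) := by
      have hsz : sh (PU z) = sh z := by
        rw [hsh_apply, hsh_apply, hPUidem]
      rw [hη_apply, hjh_apply]
      show th (sh z) = PU z + (th (sh (PU z)) - PU (PU z))
      rw [hsz, hPUidem]
      abel
    rw [hxh_apply, h1, hG3η]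
  set x' : E →ₗ[R] E := xh + PV with hx'_def
  set y' : E →ₗ[R] E := sh + PV with hy'_def
  have hx'_apply : ∀ z, x' z = xh z + PV z := fun z => rfl
  have hy'_apply : ∀ z, y' z = sh z + PV z := fun z => rfl
  have prex' : ∀ x ∈ M, x' x ∈ M := by
    intro x hx
    rw [hx'_apply]
    exact M.add_mem (prexh x hx) (prePV x hx)
  have prey' : ∀ x ∈ M, y' x ∈ M := by
    intro x hx
    rw [hy'_apply]
    exact M.add_mem (presh x hx) (prePV x hx)
  have hxy : ∀ z, x' (y' z) = z := by
    intro z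
    rw [hy'_apply, hx'_apply, map_add, map_add]
    have h1 : xh (sh z) = PU z := hxs z
    have h2 : xh (PV z) = 0 := by
      rw [hxh_apply, hth_apply, hPUPV, map_zero, map_zero, map_zero]
    have h3 : PV (sh z) = 0 := by
      rw [hsh_apply]
      exact hPVPU _
    have h4 : PV (PV z) = PV z := hPVid _ (hPVD z)
    rw [h1, h2, h3, h4]
    rw [hPU_apply, hPV_apply]
    abel
  -- descend to End(M) and apply direct finiteness
  set Y : Module.End R ↥M := y'.restrict prey' with hY_def
  set X' : Module.End R ↥M := x'.restrict prex' with hX'_def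
  have hXY : X' * Y = 1 := by
    apply LinearMap.ext
    intro m
    apply Subtype.ext
    show x' (y' (m : E)) = (m : E)
    exact hxy (m : E)
  have hYX := hdf X' Y hXY
  -- conclude
  have hMbot : M ⊓ K = ⊥ := by
    rw [eq_bot_iff]
    rintro m ⟨hmM, hmK⟩
    rw [Submodule.mem_bot]
    have hmU0 : m ∈ U0 := hUevU0 (hKUev hmK)
    have hP0m : P0 m = m := hP0X m hmU0
    have hP1m : P1 m = 0 := by
      apply hP1z
      rw [hπ₁_apply, hP0m, sub_self]
    have hPUm : PU m = m := by rw [hPU_apply, hP0m, hP1m, add_zero]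
    have hPVm : PV m = 0 := by rw [hPV_apply, hP0m, hP1m, sub_zero, sub_self]
    have htm : t m = 0 := hmK
    have hx'm : x' m = 0 := by
      rw [hx'_apply, hxh_apply, hth_apply, hPUm, htm, map_zero, map_zero, hPVm, add_zero]
    have h := LinearMap.ext_iff.mp hYX ⟨m, hmM⟩
    have h' : y' (x' (m : E)) = (m : E) := congrArg Subtype.val h
    rw [hx'm, map_zero] at h'
    exact h'.symm
  by_contra hKne
  exact hess K hKne hMbot
end
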